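/- arXiv:2005.09012 — 4 statements merged into one kernel-verified Lean document; each statement's English description precedes it below -/
import Mathlib

section
/- For every partition λ with |λ| even, there exists a partition μ with c^λ_{μ,μ} > 0. -/
open YoungDiagram

/-- An LR (Littlewood–Richardson) filling witnessing the Littlewood–Richardson
coefficient `c^lam_{μ,ν}`: a ballot (lattice-word) semistandard filling of the skew
shape `lam/μ` with content `ν`.  The entry in row `i`, column `j` is `T i j`;
entries are `≥ 1` on the cells of `lam/μ` and `0` elsewhere. -/
structure LRFilling (μ ν lam : YoungDiagram) : Type where
  sub : μ ≤ lam
  T : ℕ → ℕ → ℕ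
  supp : ∀ i j, T i j ≠ 0 ↔ ((i, j) ∈ lam ∧ (i, j) ∉ μ)
  rows_weak : ∀ i j₁ j₂, j₁ ≤ j₂ → T i j₁ ≠ 0 → T i j₂ ≠ 0 → T i j₁ ≤ T i j₂
  cols_strict : ∀ i₁ i₂ j, i₁ < i₂ → T i₁ j ≠ 0 → T i₂ j ≠ 0 → T i₁ j < T i₂ j
  content : ∀ k : ℕ, Nat.card {p : ℕ × ℕ // T p.1 p.2 = k + 1} = ν.rowLen k
  ballot : ∀ i j k : ℕ,
    Nat.card {p : ℕ × ℕ // (p.1 < i ∨ (p.1 = i ∧ j ≤ p.2)) ∧ T p.1 p.2 = k + 2} ≤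
      Nat.card {p : ℕ × ℕ // (p.1 < i ∨ (p.1 = i ∧ j ≤ p.2)) ∧ T p.1 p.2 = k + 1}

/-- The Littlewood–Richardson coefficient `c^lam_{μ,ν}`. -/
noncomputable def lrCoeff (μ ν lam : YoungDiagram) : ℕ := Nat.card (LRFilling μ ν lam)

/-- The Newell–Littlewood number
`N_{μ,ν,lam} = Σ_{α,β,γ} c^μ_{α,β} c^ν_{α,γ} c^lam_{β,γ}`,
realized as the cardinality of the set of triples of LR fillings over all `α,β,γ`. -/
noncomputable def NL (μ ν lam : YoungDiagram) : ℕ :=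
  Nat.card (Σ α β γ : YoungDiagram,
    (LRFilling α β μ × LRFilling α γ ν × LRFilling β γ lam))



namespace LRSelf

variable (lam : YoungDiagram)

/-- prefix sums of row lengths -/
def P (m : ℕ) : ℕ := ∑ r ∈ Finset.range m, lam.rowLen r

def dd (k : ℕ) : ℕ := P lam (2*k) / 2
def cc (k : ℕ) : ℕ := P lam (2*k) % 2
def mu (k : ℕ) : ℕ := dd lam (k+1) - dd lam k
def LL : ℕ := lam.colLen 0

lemma P_arg {a b : ℕ} (hab : a = b) : P lam a = P lam b := by rw [hab]
lemma row_arg {a b : ℕ} (hab : a = b) : lam.rowLen a = lam.rowLen b := by rw [hab]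

lemma rowLen_zero {r : ℕ} (hr : LL lam ≤ r) : lam.rowLen r = 0 := by
  unfold LL at hr
  by_contra hne
  have h1 : (r, 0) ∈ lam := mem_iff_lt_rowLen.2 (Nat.pos_of_ne_zero hne)
  have h2 := mem_iff_lt_colLen.1 h1
  omega

lemma P_succ (m : ℕ) : P lam (m+1) = P lam m + lam.rowLen m := by
  simp [P, Finset.sum_range_succ]

lemma P_mono {m₁ m₂ : ℕ} (hm : m₁ ≤ m₂) : P lam m₁ ≤ P lam m₂ := by
  unfold P
  exact Finset.sum_le_sum_of_subset (Finset.range_subset_range.2 hm)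

lemma P_stab {m : ℕ} (hm : LL lam ≤ m) : P lam m = lam.card := by
  have h1 : ∀ m', LL lam ≤ m' → P lam m' = P lam (LL lam) := by
    intro m' hm'
    induction m' with
    | zero => simp_all
    | succ n ih =>
      rcases Nat.lt_or_ge n (LL lam) with hn | hn
      · have h2 : LL lam = n + 1 := by omega
        rw [h2]
      · rw [P_succ, rowLen_zero lam hn, ih hn, add_zero]
  rw [h1 m hm]
  have h3 : lam.cells.card = ∑ r ∈ Finset.range (LL lam),
      (lam.cells.filter (fun p => p.1 = r)).card := by
    apply Finset.card_eq_sum_card_fiberwise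
    intro p hp
    rw [Finset.mem_coe, YoungDiagram.mem_cells] at hp
    have h2 := mem_iff_lt_colLen.1 hp
    have h4 : lam.colLen p.2 ≤ lam.colLen 0 := lam.colLen_anti 0 p.2 (Nat.zero_le _)
    simp only [Finset.mem_coe, Finset.mem_range]
    unfold LL
    omega
  have h5 : lam.card = lam.cells.card := rfl
  rw [h5, h3]
  apply Finset.sum_congr rfl
  intro r _
  rw [lam.rowLen_eq_card]
  congr 1

/-- the combined pair sums -/
def D (k : ℕ) : ℕ := lam.rowLen (2*k) + lam.rowLen (2*k+1)

lemma P_pair (k : ℕ) : P lam (2*k+2) = P lam (2*k) + D lam k := by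
  have h1 := P_succ lam (2*k)
  have h2 := P_succ lam (2*k+1)
  have h3 : P lam (2*k+1+1) = P lam (2*k+2) := P_arg lam (by omega)
  unfold D
  omega

lemma dd_cc (k : ℕ) : 2 * dd lam k + cc lam k = P lam (2*k) := by
  unfold dd cc; omega

lemma cc_le (k : ℕ) : cc lam k ≤ 1 := by unfold cc; omega

lemma dd_mono {k₁ k₂ : ℕ} (hk : k₁ ≤ k₂) : dd lam k₁ ≤ dd lam k₂ := by
  have h1 := P_mono lam (show 2*k₁ ≤ 2*k₂ by omega)
  unfold dd; omega

lemma mu_dd (k : ℕ) : dd lam (k+1) = dd lam k + mu lam k := by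
  have h1 := dd_mono lam (show k ≤ k+1 by omega)
  unfold mu; omega

lemma dd_arg {a b : ℕ} (hab : a = b) : dd lam a = dd lam b := by rw [hab]
lemma cc_arg {a b : ℕ} (hab : a = b) : cc lam a = cc lam b := by rw [hab]

/-- the key parity bookkeeping identity -/
lemma mu_key (k : ℕ) : 2 * mu lam k + cc lam (k+1) = D lam k + cc lam k := by
  have h1 := dd_cc lam k
  have h2 := dd_cc lam (k+1)
  have h3 := P_pair lam k
  have h4 := mu_dd lam k
  have h5 : P lam (2*(k+1)) = P lam (2*k+2) := P_arg lam (by omega)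
  omega

lemma rowLen_anti' {r₁ r₂ : ℕ} (hr : r₁ ≤ r₂) : lam.rowLen r₂ ≤ lam.rowLen r₁ :=
  lam.rowLen_anti r₁ r₂ hr

lemma D_expand (k : ℕ) : D lam (k+1) = lam.rowLen (2*k+2) + lam.rowLen (2*k+3) := by
  unfold D
  rw [row_arg lam (show 2*(k+1) = 2*k+2 by omega), row_arg lam (show 2*(k+1)+1 = 2*k+3 by omega)]

lemma D_anti (k : ℕ) : D lam (k+1) ≤ D lam k := by
  rw [D_expand]
  unfold D
  have h1 := rowLen_anti' lam (show 2*k ≤ 2*k+2 by omega)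
  have h2 := rowLen_anti' lam (show 2*k+1 ≤ 2*k+3 by omega)
  omega

lemma D_odd_lt (k : ℕ) (hD : D lam k % 2 = 1) : D lam (k+1) < D lam k := by
  rw [D_expand]
  have h1 := rowLen_anti' lam (show 2*k ≤ 2*k+1 by omega)
  have h2 := rowLen_anti' lam (show 2*k+1 ≤ 2*k+2 by omega)
  have h3 := rowLen_anti' lam (show 2*k+2 ≤ 2*k+3 by omega)
  unfold D at hD ⊢
  omega

lemma mu_anti (k : ℕ) : mu lam (k+1) ≤ mu lam k := by
  have h1 := mu_key lam k
  have h2 := mu_key lam (k+1)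
  have h3 := D_anti lam k
  have c1 := cc_le lam k
  have c2 := cc_le lam (k+1)
  have c3 := cc_le lam (k+2)
  rcases Nat.mod_two_eq_zero_or_one (D lam k) with hD | hD
  · omega
  · have h4 := D_odd_lt lam k hD
    omega

lemma mu_anti' {k₁ k₂ : ℕ} (hk : k₁ ≤ k₂) : mu lam k₂ ≤ mu lam k₁ := by
  induction k₂ with
  | zero => simp_all
  | succ n ih =>
    rcases Nat.lt_or_ge k₁ (n+1) with hn | hn
    · exact le_trans (mu_anti lam n) (ih (by omega))
    · have h2 : k₁ = n+1 := by omega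
      subst h2; rfl

lemma mu_le_row (k : ℕ) : mu lam k ≤ lam.rowLen (2*k) := by
  have h1 := mu_key lam k
  have h2 := rowLen_anti' lam (show 2*k ≤ 2*k+1 by omega)
  have c1 := cc_le lam k
  have c2 := cc_le lam (k+1)
  unfold D at h1
  omega

lemma row_le_mu (k : ℕ) : lam.rowLen (2*k+1) ≤ mu lam k := by
  have h1 := mu_key lam k
  have h2 := rowLen_anti' lam (show 2*k ≤ 2*k+1 by omega)
  have c2 := cc_le lam (k+1)
  unfold D at h1
  omega

/-- run-end key inequality -/
lemma run_end_key (B : ℕ) (hB : cc lam B = 1) (hB1 : cc lam (B+1) = 0) :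
    mu lam (B+1) + 1 ≤ mu lam B := by
  have h1 := mu_key lam B
  have h2 := mu_key lam (B+1)
  rw [D_expand] at h2
  have a1 := rowLen_anti' lam (show 2*B ≤ 2*B+1 by omega)
  have a2 := rowLen_anti' lam (show 2*B+1 ≤ 2*B+2 by omega)
  have a3 := rowLen_anti' lam (show 2*B+2 ≤ 2*B+3 by omega)
  have c3 := cc_le lam (B+2)
  unfold D at h1
  omega

lemma mu_zero_of_large {k : ℕ} (hk : LL lam ≤ 2*k) : mu lam k = 0 := by
  have h1 := mu_key lam k
  have h2 : lam.rowLen (2*k) = 0 := rowLen_zero lam (by omega)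
  have h3 : lam.rowLen (2*k+1) = 0 := rowLen_zero lam (by omega)
  have c1 := cc_le lam (k+1)
  have c0 := cc_le lam k
  unfold D at h1
  omega

section WithEven

variable (h : Even lam.card)
include h

lemma cc_zero_of_large {k : ℕ} (hk : LL lam ≤ 2*k) : cc lam k = 0 := by
  unfold cc
  rw [P_stab lam hk]
  exact Nat.even_iff.1 h

lemma exists_b (k : ℕ) : ∃ j, k ≤ j ∧ cc lam (j+1) = 0 := by
  refine ⟨k + LL lam, by omega, ?_⟩
  exact cc_zero_of_large lam h (by omega)

def bb (k : ℕ) : ℕ := Nat.find (exists_b lam h k)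

lemma bb_ge (k : ℕ) : k ≤ bb lam h k := (Nat.find_spec (exists_b lam h k)).1

lemma bb_cc (k : ℕ) : cc lam (bb lam h k + 1) = 0 := (Nat.find_spec (exists_b lam h k)).2

lemma bb_le (k : ℕ) : bb lam h k ≤ k + LL lam :=
  Nat.find_le ⟨by omega, cc_zero_of_large lam h (by omega)⟩

lemma bb_min {k j : ℕ} (h1 : k ≤ j) (h2 : j < bb lam h k) : cc lam (j+1) = 1 := by
  have h3 := Nat.find_min (exists_b lam h k) h2
  have h4 := cc_le lam (j+1)
  omega

lemma cc_run {k i : ℕ} (hk : cc lam k = 1) (h1 : k ≤ i) (h2 : i ≤ bb lam h k) :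
    cc lam i = 1 := by
  rcases Nat.eq_or_lt_of_le h1 with he | hl
  · exact he ▸ hk
  · have h3 : i - 1 < bb lam h k := by omega
    have h4 : k ≤ i - 1 := by omega
    have h5 := bb_min lam h h4 h3
    have h6 : i - 1 + 1 = i := by omega
    rwa [h6] at h5

lemma bb_succ {k : ℕ} (hk1 : cc lam (k+1) = 1) : bb lam h (k+1) = bb lam h k := by
  apply le_antisymm
  · apply Nat.find_le
    refine ⟨?_, bb_cc lam h k⟩
    have h1 := bb_ge lam h k
    rcases Nat.eq_or_lt_of_le h1 with he | hl
    · exfalso; have h2 := bb_cc lam h k; rw [← he] at h2; omega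
    · omega
  · apply Nat.find_le
    exact ⟨by have := bb_ge lam h (k+1); omega, bb_cc lam h (k+1)⟩

lemma bb_eq_self {k : ℕ} (hk1 : cc lam (k+1) = 0) : bb lam h k = k :=
  le_antisymm (Nat.find_le ⟨le_refl k, hk1⟩) (bb_ge lam h k)

lemma cc_bb {k : ℕ} (hk : cc lam k = 1) : cc lam (bb lam h k) = 1 :=
  cc_run lam h hk (bb_ge lam h k) (le_refl _)

lemma run_end_bb {k : ℕ} (hk : cc lam k = 1) :
    mu lam (bb lam h k + 1) + 1 ≤ mu lam (bb lam h k) :=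
  run_end_key lam _ (cc_bb lam h hk) (bb_cc lam h k)

/-- The chain of partitions: `nu k` is the k-th partition in the chain from `mu` to `lam`. -/
def nu (k r : ℕ) : ℕ :=
  if r < 2*k then lam.rowLen r
  else mu lam (r-k) - (if cc lam k = 1 ∧ r = k + bb lam h k then 1 else 0)

lemma nu_of_lt {k r : ℕ} (hr : r < 2*k) : nu lam h k r = lam.rowLen r := if_pos hr

lemma nu_of_ge {k r : ℕ} (hr : 2*k ≤ r) :
    nu lam h k r = mu lam (r-k) - (if cc lam k = 1 ∧ r = k + bb lam h k then 1 else 0) :=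
  if_neg (by omega)

lemma nu_zero (r : ℕ) : nu lam h 0 r = mu lam r := by
  rw [nu_of_ge lam h (by omega)]
  have h0 : cc lam 0 = 0 := by unfold cc P; simp
  simp [h0]

lemma nu_le_lam (k r : ℕ) : nu lam h k r ≤ lam.rowLen r := by
  rcases Nat.lt_or_ge r (2*k) with hr | hr
  · rw [nu_of_lt lam h hr]
  · rw [nu_of_ge lam h hr]
    have h1 := mu_le_row lam (r-k)
    have h2 := rowLen_anti' lam (show r ≤ 2*(r-k) by omega)
    omega

lemma nu_anti_r (k r : ℕ) : nu lam h k (r+1) ≤ nu lam h k r := by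
  rcases Nat.lt_or_ge (r+1) (2*k) with hr | hr
  · rw [nu_of_lt lam h hr, nu_of_lt lam h (by omega)]
    exact rowLen_anti' lam (by omega)
  rcases Nat.lt_or_ge r (2*k) with hr2 | hr2
  · -- r+1 = 2k
    rw [nu_of_lt lam h hr2]
    have h1 := nu_le_lam lam h k (r+1)
    have h2 := rowLen_anti' lam (show r ≤ r+1 by omega)
    omega
  · rw [nu_of_ge lam h hr, nu_of_ge lam h hr2]
    have hm := mu_anti lam (r-k)
    have he : r+1-k = (r-k)+1 := by omega
    rw [he]
    rcases Nat.eq_zero_or_pos (cc lam k) with hc | hc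
    · simp [hc]
      omega
    · have hc1 : cc lam k = 1 := by have := cc_le lam k; omega
      by_cases hd1 : r = k + bb lam h k
      · have hd2 : ¬ (r+1 = k + bb lam h k) := by omega
        have hre := run_end_bb lam h hc1
        have hbk : r - k = bb lam h k := by omega
        rw [hbk] at hm ⊢
        simp [hc1, hd1, hd2]
        omega
      · by_cases hd2 : r+1 = k + bb lam h k
        · simp [hc1, hd1, hd2]
          omega
        · simp [hc1, hd1, hd2]
          omega

lemma nu_anti_r' (k : ℕ) {r₁ r₂ : ℕ} (hr : r₁ ≤ r₂) : nu lam h k r₂ ≤ nu lam h k r₁ := by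
  induction r₂ with
  | zero => simp_all
  | succ n ih =>
    rcases Nat.lt_or_ge r₁ (n+1) with hn | hn
    · exact le_trans (nu_anti_r lam h k n) (ih (by omega))
    · have h2 : r₁ = n+1 := by omega
      subst h2; rfl

lemma nu_mono_k (k r : ℕ) : nu lam h k r ≤ nu lam h (k+1) r := by
  rcases Nat.lt_or_ge r (2*(k+1)) with hr | hr
  · rw [nu_of_lt lam h hr]
    exact nu_le_lam lam h k r
  · rw [nu_of_ge lam h hr, nu_of_ge lam h (show 2*k ≤ r by omega)]
    have hm := mu_anti' lam (show r-(k+1) ≤ r-k by omega)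
    rcases Nat.eq_zero_or_pos (cc lam (k+1)) with hc | hc
    · have : ¬ (cc lam (k+1) = 1 ∧ r = (k+1) + bb lam h (k+1)) := by omega
      simp only [this, if_false]
      omega
    · have hc1 : cc lam (k+1) = 1 := by have := cc_le lam (k+1); omega
      by_cases hd : r = (k+1) + bb lam h (k+1)
      · -- removal on RHS at B := bb (k+1); r-k = B+1
        set B := bb lam h (k+1) with hB
        have hB1 : cc lam B = 1 := cc_bb lam h hc1
        have hB2 : cc lam (B+1) = 0 := bb_cc lam h (k+1)
        have hre := run_end_key lam B hB1 hB2
        have e1 : r - (k+1) = B := by omega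
        have e2 : r - k = B + 1 := by omega
        rw [e1, e2] at *
        simp only [hc1, hd, and_self, if_true]
        omega
      · simp only [hd, and_false, if_false]
        omega

lemma nu_mono_k' {k₁ k₂ : ℕ} (hk : k₁ ≤ k₂) (r : ℕ) : nu lam h k₁ r ≤ nu lam h k₂ r := by
  induction k₂ with
  | zero => simp_all
  | succ n ih =>
    rcases Nat.lt_or_ge k₁ (n+1) with hn | hn
    · exact le_trans (ih (by omega)) (nu_mono_k lam h n r)
    · have h2 : k₁ = n+1 := by omega
      subst h2; rfl

lemma nu_strip (k r : ℕ) : nu lam h (k+1) (r+1) ≤ nu lam h k r := by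
  rcases Nat.lt_or_ge r (2*k) with hr | hr
  · rw [nu_of_lt lam h hr]
    exact le_trans (nu_le_lam lam h (k+1) (r+1)) (rowLen_anti' lam (by omega))
  rcases Nat.eq_or_lt_of_le hr with he | hl
  · -- r = 2k
    have e1 : r + 1 < 2*(k+1) := by omega
    rw [nu_of_lt lam h e1, nu_of_ge lam h hr]
    have e2 : r - k = k := by omega
    rw [e2]
    have hrow : lam.rowLen (r+1) = lam.rowLen (2*k+1) := row_arg lam (by omega)
    rw [hrow]
    rcases Nat.eq_zero_or_pos (cc lam k) with hc | hc
    · have : ¬ (cc lam k = 1 ∧ r = k + bb lam h k) := by omega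
      simp only [this, if_false]
      have := row_le_mu lam k
      omega
    · have hc1 : cc lam k = 1 := by have := cc_le lam k; omega
      by_cases hd : r = k + bb lam h k
      · -- bb k = k hence cc (k+1) = 0, D k odd
        have hbk : bb lam h k = k := by omega
        have hk1 : cc lam (k+1) = 0 := by rw [← hbk]; exact bb_cc lam h k
        have h1 := mu_key lam k
        have h2 := rowLen_anti' lam (show 2*k ≤ 2*k+1 by omega)
        simp only [hc1, hd, and_self, if_true]
        unfold D at h1
        omega
      · simp only [hd, and_false, if_false]
        have := row_le_mu lam k
        omega
  · -- r ≥ 2k+1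
    rw [nu_of_ge lam h (show 2*(k+1) ≤ r+1 by omega), nu_of_ge lam h (by omega)]
    have e1 : r + 1 - (k+1) = r - k := by omega
    rw [e1]
    rcases Nat.eq_zero_or_pos (cc lam k) with hc | hc
    · have : ¬ (cc lam k = 1 ∧ r = k + bb lam h k) := by omega
      simp only [this, if_false]
      omega
    · have hc1 : cc lam k = 1 := by have := cc_le lam k; omega
      by_cases hd : r = k + bb lam h k
      · have hbk : k + 1 ≤ bb lam h k := by omega
        have hk1 : cc lam (k+1) = 1 := by
          by_contra hne
          have h0 : cc lam (k+1) = 0 := by have := cc_le lam (k+1); omega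
          have := bb_eq_self lam h h0
          omega
        have hbs := bb_succ lam h hk1
        have hd2 : r + 1 = (k+1) + bb lam h (k+1) := by omega
        have t1 : (if cc lam (k+1) = 1 ∧ r+1 = (k+1) + bb lam h (k+1) then 1 else 0) = 1 :=
          if_pos ⟨hk1, hd2⟩
        have t2 : (if cc lam k = 1 ∧ r = k + bb lam h k then 1 else 0) = 1 := if_pos ⟨hc1, hd⟩
        rw [t1, t2]
      · simp only [hd, and_false, if_false]
        omega

lemma nu_zero_of_large {k r : ℕ} (hr : LL lam ≤ r) : nu lam h k r = 0 := by
  have h1 := nu_le_lam lam h k r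
  have h2 := rowLen_zero lam hr
  omega

/-- partial sums of the chain -/
def Phi (k i : ℕ) : ℕ := ∑ r ∈ Finset.range i, nu lam h k r

def rho (k i : ℕ) : ℕ := if cc lam k = 1 ∧ k + bb lam h k < i then 1 else 0

lemma Phi_succ (k i : ℕ) : Phi lam h k (i+1) = Phi lam h k i + nu lam h k i := by
  simp [Phi, Finset.sum_range_succ]

lemma Phi_low {k i : ℕ} (hi : i ≤ 2*k) : Phi lam h k i = P lam i := by
  unfold Phi P
  apply Finset.sum_congr rfl
  intro r hr
  rw [Finset.mem_range] at hr
  exact nu_of_lt lam h (by omega)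

lemma Phi_mono_k (k i : ℕ) : Phi lam h k i ≤ Phi lam h (k+1) i :=
  Finset.sum_le_sum (fun r _ => nu_mono_k lam h k r)

lemma Phi_high {k i : ℕ} (hi : 2*k ≤ i) :
    Phi lam h k i + dd lam k + rho lam h k i = P lam (2*k) + dd lam (i-k) := by
  induction i with
  | zero =>
    have hk : k = 0 := by omega
    subst hk
    simp [Phi, rho, dd, P]
  | succ i ih =>
    rcases Nat.lt_or_ge i (2*k) with hi2 | hi2
    · -- i+1 = 2k
      have he : i + 1 = 2*k := by omega
      rw [Phi_low lam h (by omega)]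
      have hrho : rho lam h k (i+1) = 0 := by
        unfold rho
        have := bb_ge lam h k
        have : ¬ (cc lam k = 1 ∧ k + bb lam h k < i+1) := by omega
        rw [if_neg this]
      rw [hrho, he]
      have : 2*k - k = k := by omega
      rw [this]
      have := dd_cc lam k
      omega
    · have ih2 := ih hi2
      rw [Phi_succ]
      rw [nu_of_ge lam h hi2]
      have e1 : i + 1 - k = (i - k) + 1 := by omega
      have e2 := mu_dd lam (i - k)
      rw [e1]
      -- relate rho (i+1) and rho i and the removal ite
      rcases Nat.eq_zero_or_pos (cc lam k) with hc | hc
      · have t1 : (if cc lam k = 1 ∧ i = k + bb lam h k then 1 else 0) = 0 := by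
          have : ¬ (cc lam k = 1 ∧ i = k + bb lam h k) := by omega
          simp [this]
        have t2 : rho lam h k (i+1) = 0 := by
          unfold rho; have : ¬ (cc lam k = 1 ∧ k + bb lam h k < i+1) := by omega
          rw [if_neg this]
        have t3 : rho lam h k i = 0 := by
          unfold rho; have : ¬ (cc lam k = 1 ∧ k + bb lam h k < i) := by omega
          simp [this]
        rw [t1, t2] at *
        rw [t3] at ih2
        omega
      · have hc1 : cc lam k = 1 := by have := cc_le lam k; omega
        have hmubb := run_end_bb lam h hc1
        by_cases hd : i = k + bb lam h k
        · have t1 : (if cc lam k = 1 ∧ i = k + bb lam h k then 1 else 0) = 1 := if_pos ⟨hc1, hd⟩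
          have t2 : rho lam h k (i+1) = 1 := by
            unfold rho; exact if_pos ⟨hc1, by omega⟩
          have t3 : rho lam h k i = 0 := by
            unfold rho; have : ¬ (cc lam k = 1 ∧ k + bb lam h k < i) := by omega
            simp [this]
          have hbmu : 1 ≤ mu lam (i - k) := by
            have : i - k = bb lam h k := by omega
            rw [this]; omega
          rw [t1, t2] at *
          rw [t3] at ih2
          omega
        · have t1 : (if cc lam k = 1 ∧ i = k + bb lam h k then 1 else 0) = 0 := by
            have : ¬ (cc lam k = 1 ∧ i = k + bb lam h k) := by tauto
            simp [this]
          have t2 : rho lam h k (i+1) = rho lam h k i := by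
            unfold rho
            by_cases hlt : k + bb lam h k < i
            · rw [if_pos ⟨hc1, by omega⟩, if_pos ⟨hc1, hlt⟩]
            · have hn1 : ¬ (cc lam k = 1 ∧ k + bb lam h k < i+1) := by omega
              have hn2 : ¬ (cc lam k = 1 ∧ k + bb lam h k < i) := by omega
              rw [if_neg hn1, if_neg hn2]
          rw [t1, t2] at *
          omega

lemma dd_stab {m : ℕ} (hm : LL lam ≤ 2*m) : dd lam m = lam.card / 2 := by
  unfold dd
  rw [P_stab lam (by omega)]

lemma Phi_stab {k i j : ℕ} (hi : LL lam ≤ i) (hj : i ≤ j) : Phi lam h k j = Phi lam h k i := by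
  induction j with
  | zero => have hi0 : i = 0 := by omega
            subst hi0; rfl
  | succ n ih =>
    rcases Nat.lt_or_ge i (n+1) with hn | hn
    · rw [Phi_succ, ih (by omega), nu_zero_of_large lam h (show LL lam ≤ n by omega), add_zero]
    · have hi0 : i = n+1 := by omega
      subst hi0; rfl

lemma rho_total {k R : ℕ} (hR : 2*k + LL lam + 1 ≤ R) : rho lam h k R = cc lam k := by
  unfold rho
  rcases Nat.eq_zero_or_pos (cc lam k) with hc | hc
  · have : ¬ (cc lam k = 1 ∧ k + bb lam h k < R) := by omega
    simp [this, hc]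
  · have hc1 : cc lam k = 1 := by have := cc_le lam k; omega
    have := bb_le lam h k
    rw [if_pos ⟨hc1, by omega⟩, hc1]

lemma Phi_total {k R : ℕ} (hR : 2*k + LL lam + 1 ≤ R) :
    Phi lam h k R = dd lam k + lam.card / 2 := by
  have h1 := Phi_high lam h (show 2*k ≤ R by omega)
  rw [rho_total lam h hR] at h1
  have h2 : dd lam (R - k) = lam.card / 2 := dd_stab lam h (by omega)
  rw [h2] at h1
  have h3 := dd_cc lam k
  omega

/-- The central ballot inequality on partial sums. -/
lemma Phi_ballot (k i : ℕ) :
    Phi lam h (k+2) (i+1) + Phi lam h k i ≤ Phi lam h (k+1) (i+1) + Phi lam h (k+1) i := by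
  rcases Nat.lt_or_ge i (2*k+2) with hi | hi
  · -- Case A : i ≤ 2k+1
    have e1 : Phi lam h (k+2) (i+1) = P lam (i+1) := Phi_low lam h (by omega)
    have e2 : Phi lam h (k+1) (i+1) = P lam (i+1) := Phi_low lam h (by omega)
    have e3 := Phi_mono_k lam h k i
    omega
  rcases Nat.eq_or_lt_of_le hi with he | hl
  · -- Case B : i = 2k+2
    subst he
    have e1 : Phi lam h (k+2) (2*k+2+1) = P lam (2*k+2+1) := Phi_low lam h (by omega)
    have e2 : Phi lam h (k+1) (2*k+2) = P lam (2*k+2) := by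
      have := Phi_low lam h (show 2*k+2 ≤ 2*(k+1) by omega)
      exact this
    have e3 := Phi_high lam h (show 2*(k+1) ≤ 2*k+2+1 by omega)
    have e4 := Phi_high lam h (show 2*k ≤ 2*k+2 by omega)
    rw [show 2*k+2+1-(k+1) = k+2 by omega] at e3
    rw [show 2*k+2-k = k+2 by omega] at e4
    rw [show P lam (2*(k+1)) = P lam (2*k+2) from P_arg lam (by omega)] at e3
    have hP3 : P lam (2*k+2+1) = P lam (2*k+2) + lam.rowLen (2*k+2) := P_succ lam (2*k+2)
    have hPp := P_pair lam k
    have hDdef : D lam k = lam.rowLen (2*k) + lam.rowLen (2*k+1) := rfl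
    have hDdef2 : D lam (k+1) = lam.rowLen (2*k+2) + lam.rowLen (2*k+3) := D_expand lam k
    have hccn : cc lam (k+1+1) = cc lam (k+2) := cc_arg lam (by omega)
    have ha3 := rowLen_anti' lam (show 2*k+2 ≤ 2*k+3 by omega)
    have hdd1 := mu_dd lam k
    have hkey := mu_key lam k
    have hkey2 := mu_key lam (k+1)
    have ha1 := rowLen_anti' lam (show 2*k ≤ 2*k+1 by omega)
    have ha2 := rowLen_anti' lam (show 2*k+1 ≤ 2*k+2 by omega)
    have hc0 := cc_le lam k
    have hc1 := cc_le lam (k+1)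
    have hc2 := cc_le lam (k+2)
    -- rho values
    by_cases hy : cc lam (k+1) = 1
    · by_cases hz : cc lam (k+2) = 1
      · -- rho1'' = 0  since bb(k+1) ≥ k+2
        have hb1 : bb lam h (k+1) = bb lam h (k+2) := (bb_succ lam h hz).symm
        have hbge := bb_ge lam h (k+2)
        have t3 : rho lam h (k+1) (2*k+2+1) = 0 := by
          unfold rho
          have : ¬ (cc lam (k+1) = 1 ∧ (k+1) + bb lam h (k+1) < 2*k+2+1) := by omega
          rw [if_neg this]
        rw [t3] at e3
        have t4 : rho lam h k (2*k+2) ≤ 1 := by unfold rho; split <;> omega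
        omega
      · have hz0 : cc lam (k+2) = 0 := by omega
        -- bb(k+1) = k+1 so rho1'' = 1
        have hb1 : bb lam h (k+1) = k+1 := bb_eq_self lam h hz0
        have t3 : rho lam h (k+1) (2*k+2+1) = 1 := by
          unfold rho
          exact if_pos ⟨hy, by omega⟩
        rw [t3] at e3
        by_cases hx : cc lam k = 1
        · -- bbk = bb(k+1) = k+1, rho0 = 1
          have hb0 : bb lam h k = k+1 := by rw [← hb1]; exact (bb_succ lam h hy).symm
          have t4 : rho lam h k (2*k+2) = 1 := by
            unfold rho
            exact if_pos ⟨hx, by omega⟩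
          rw [t4] at e4
          omega
        · have hx0 : cc lam k = 0 := by omega
          have t4 : rho lam h k (2*k+2) = 0 := by
            unfold rho
            have : ¬ (cc lam k = 1 ∧ k + bb lam h k < 2*k+2) := by omega
            simp [this]
          rw [t4] at e4
          omega
    · have hy0 : cc lam (k+1) = 0 := by omega
      have t3 : rho lam h (k+1) (2*k+2+1) = 0 := by
        unfold rho
        have : ¬ (cc lam (k+1) = 1 ∧ (k+1) + bb lam h (k+1) < 2*k+2+1) := by omega
        rw [if_neg this]
      rw [t3] at e3
      have t4 : rho lam h k (2*k+2) ≤ 1 := by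
        unfold rho; split <;> omega
      by_cases hx : cc lam k = 1
      · have hb0 : bb lam h k = k := bb_eq_self lam h hy0
        have t5 : rho lam h k (2*k+2) = 1 := by
          unfold rho; exact if_pos ⟨hx, by omega⟩
        omega
      · have hx0 : cc lam k = 0 := by omega
        omega
  · -- Case C : i ≥ 2k+3, all four sums in the high regime
    have e2 := Phi_high lam h (show 2*(k+2) ≤ i+1 by omega)
    have e1' := Phi_high lam h (show 2*(k+1) ≤ i+1 by omega)
    have e1 := Phi_high lam h (show 2*(k+1) ≤ i by omega)
    have e0 := Phi_high lam h (show 2*k ≤ i by omega)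
    rw [show i+1-(k+2) = i-k-1 by omega] at e2
    rw [show i+1-(k+1) = i-k by omega] at e1'
    rw [show i-(k+1) = i-k-1 by omega] at e1
    rw [show P lam (2*(k+2)) = P lam (2*k+4) from P_arg lam (by omega)] at e2
    rw [show P lam (2*(k+1)) = P lam (2*k+2) from P_arg lam (by omega)] at e1' e1
    have hPp := P_pair lam k
    have hPp2 : P lam (2*k+4) = P lam (2*k+2) + D lam (k+1) := by
      have := P_pair lam (k+1)
      rw [P_arg lam (show 2*(k+1)+2 = 2*k+4 by omega), P_arg lam (show 2*(k+1) = 2*k+2 by omega)] at this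
      exact this
    have hdd1 := mu_dd lam k
    have hdd2 := mu_dd lam (k+1)
    have hkey := mu_key lam k
    have hkey2 := mu_key lam (k+1)
    have hmua := mu_anti lam k
    have hDa := D_anti lam k
    have hc0 := cc_le lam k
    have hc1 := cc_le lam (k+1)
    have hc2 := cc_le lam (k+2)
    have hddn : dd lam (k+1+1) = dd lam (k+2) := dd_arg lam (by omega)
    have hccn : cc lam (k+1+1) = cc lam (k+2) := cc_arg lam (by omega)
    have hDdef : D lam k = lam.rowLen (2*k) + lam.rowLen (2*k+1) := rfl
    have hDdef2 : D lam (k+1) = lam.rowLen (2*k+2) + lam.rowLen (2*k+3) := D_expand lam k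
    have ha1 := rowLen_anti' lam (show 2*k ≤ 2*k+1 by omega)
    have ha2 := rowLen_anti' lam (show 2*k+1 ≤ 2*k+2 by omega)
    have ha3 := rowLen_anti' lam (show 2*k+2 ≤ 2*k+3 by omega)
    -- now case on the carries and thresholds
    by_cases hy : cc lam (k+1) = 1
    · by_cases hx : cc lam k = 1
      · have hb01 : bb lam h k = bb lam h (k+1) := (bb_succ lam h hy).symm
        have t0 : rho lam h k i = rho lam h (k+1) (i+1) := by
          unfold rho
          by_cases ht : k + bb lam h k < i
          · rw [if_pos ⟨hx, ht⟩, if_pos ⟨hy, by omega⟩]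
          · rw [if_neg (by omega), if_neg (by omega)]
        by_cases hz : cc lam (k+2) = 1
        · have hz' : cc lam (k+1+1) = 1 := by omega
          have hb12 : bb lam h (k+1) = bb lam h (k+2) := by
            have h12 := (bb_succ lam h (k := k+1) hz').symm
            have e12 : bb lam h (k+1+1) = bb lam h (k+2) := by
              congr 1
            rw [← e12]; exact h12
          have t1 : rho lam h (k+1) i = rho lam h (k+2) (i+1) := by
            unfold rho
            by_cases ht : (k+1) + bb lam h (k+1) < i
            · rw [if_pos ⟨hy, ht⟩, if_pos ⟨hz, by omega⟩]
            · rw [if_neg (by omega), if_neg (by omega)]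
          omega
        · have hz0 : cc lam (k+2) = 0 := by omega
          have t1 : rho lam h (k+1) i ≤ 1 := by unfold rho; split <;> omega
          have t2 : rho lam h (k+2) (i+1) = 0 := by
            unfold rho
            have : ¬ (cc lam (k+2) = 1 ∧ (k+2) + bb lam h (k+2) < i+1) := by omega
            rw [if_neg this]
          omega
      · have hx0 : cc lam k = 0 := by omega
        have t0 : rho lam h k i = 0 := by
          unfold rho
          have : ¬ (cc lam k = 1 ∧ k + bb lam h k < i) := by omega
          simp [this]
        by_cases hz : cc lam (k+2) = 1
        · have hz' : cc lam (k+1+1) = 1 := by omega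
          have hb12 : bb lam h (k+1) = bb lam h (k+2) := by
            have h12 := (bb_succ lam h (k := k+1) hz').symm
            have e12 : bb lam h (k+1+1) = bb lam h (k+2) := by
              congr 1
            rw [← e12]; exact h12
          have t1 : rho lam h (k+1) i = rho lam h (k+2) (i+1) := by
            unfold rho
            by_cases ht : (k+1) + bb lam h (k+1) < i
            · rw [if_pos ⟨hy, ht⟩, if_pos ⟨hz, by omega⟩]
            · rw [if_neg (by omega), if_neg (by omega)]
          have t2 : rho lam h (k+1) (i+1) ≤ 1 := by unfold rho; split <;> omega
          omega
        · have hz0 : cc lam (k+2) = 0 := by omega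
          have t2 : rho lam h (k+2) (i+1) = 0 := by
            unfold rho
            have : ¬ (cc lam (k+2) = 1 ∧ (k+2) + bb lam h (k+2) < i+1) := by omega
            rw [if_neg this]
          have t3 : rho lam h (k+1) i ≤ rho lam h (k+1) (i+1) := by
            unfold rho
            by_cases ht : (k+1) + bb lam h (k+1) < i
            · rw [if_pos ⟨hy, ht⟩, if_pos ⟨hy, by omega⟩]
            · rw [if_neg (by omega)]; omega
          have t4 : rho lam h (k+1) (i+1) ≤ 1 := by unfold rho; split <;> omega
          omega
    · have hy0 : cc lam (k+1) = 0 := by omega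
      have t1 : rho lam h (k+1) i = 0 := by
        unfold rho
        have : ¬ (cc lam (k+1) = 1 ∧ (k+1) + bb lam h (k+1) < i) := by omega
        simp [this]
      have t1' : rho lam h (k+1) (i+1) = 0 := by
        unfold rho
        have : ¬ (cc lam (k+1) = 1 ∧ (k+1) + bb lam h (k+1) < i+1) := by omega
        rw [if_neg this]
      by_cases hx : cc lam k = 1
      · have hb0 : bb lam h k = k := bb_eq_self lam h hy0
        have t0 : rho lam h k i = 1 := by
          unfold rho
          exact if_pos ⟨hx, by omega⟩
        by_cases hz : cc lam (k+2) = 1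
        · -- x=1,y=0,z=1 : need slack 2 from both D odd
          have hDo := D_odd_lt lam k (by omega)
          have t2 : rho lam h (k+2) (i+1) ≤ 1 := by unfold rho; split <;> omega
          omega
        · have hz0 : cc lam (k+2) = 0 := by omega
          have t2 : rho lam h (k+2) (i+1) = 0 := by
            unfold rho
            have : ¬ (cc lam (k+2) = 1 ∧ (k+2) + bb lam h (k+2) < i+1) := by omega
            rw [if_neg this]
          omega
      · have hx0 : cc lam k = 0 := by omega
        have t0 : rho lam h k i = 0 := by
          unfold rho
          have : ¬ (cc lam k = 1 ∧ k + bb lam h k < i) := by omega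
          simp [this]
        by_cases hz : cc lam (k+2) = 1
        · -- x=0,y=0,z=1 : strict drop since Dk even, D(k+1) odd
          have hDo : D lam (k+1) % 2 = 1 := by omega
          have t2 : rho lam h (k+2) (i+1) ≤ 1 := by unfold rho; split <;> omega
          omega
        · have hz0 : cc lam (k+2) = 0 := by omega
          have t2 : rho lam h (k+2) (i+1) = 0 := by
            unfold rho
            have : ¬ (cc lam (k+2) = 1 ∧ (k+2) + bb lam h (k+2) < i+1) := by omega
            rw [if_neg this]
          omega

/-- The tableau: entry at row r, column j. -/
def T (r j : ℕ) : ℕ :=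
  if j < lam.rowLen r then ((Finset.range (r+1)).filter (fun k => nu lam h k r ≤ j)).card else 0

lemma nu_top (r : ℕ) : nu lam h (r+1) r = lam.rowLen r := nu_of_lt lam h (by omega)

lemma T_count {r j k : ℕ} (h1 : nu lam h k r ≤ j) (h2 : j < nu lam h (k+1) r) :
    T lam h r j = k + 1 := by
  have hj : j < lam.rowLen r := lt_of_lt_of_le h2 (nu_le_lam lam h (k+1) r)
  have hkr : k ≤ r := by
    by_contra hc
    push_neg at hc
    have e1 : nu lam h k r = lam.rowLen r := nu_of_lt lam h (by omega)
    have e2 : nu lam h (k+1) r = lam.rowLen r := nu_of_lt lam h (by omega)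
    omega
  unfold T
  rw [if_pos hj]
  have hset : (Finset.range (r+1)).filter (fun k' => nu lam h k' r ≤ j) = Finset.range (k+1) := by
    ext m
    simp only [Finset.mem_filter, Finset.mem_range]
    constructor
    · rintro ⟨hm, hnu⟩
      by_contra hmk
      push_neg at hmk
      have : nu lam h (k+1) r ≤ nu lam h m r := nu_mono_k' lam h (by omega) r
      omega
    · intro hm
      refine ⟨by omega, ?_⟩
      exact le_trans (nu_mono_k' lam h (show m ≤ k by omega) r) h1
  rw [hset, Finset.card_range]

lemma T_exists {r j : ℕ} (hj : j < lam.rowLen r) (h0 : nu lam h 0 r ≤ j) :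
    ∃ k, nu lam h k r ≤ j ∧ j < nu lam h (k+1) r := by
  have hex : ∃ m, j < nu lam h m r := ⟨r+1, by rw [nu_top]; exact hj⟩
  classical
  let m₀ := Nat.find hex
  have hm₀ : j < nu lam h m₀ r := Nat.find_spec hex
  have hm₀pos : m₀ ≠ 0 := by
    intro hz
    rw [hz] at hm₀
    omega
  refine ⟨m₀ - 1, ?_, ?_⟩
  · have := Nat.find_min hex (show m₀ - 1 < m₀ by omega)
    omega
  · have e : m₀ - 1 + 1 = m₀ := by omega
    rw [e]
    exact hm₀

lemma T_ne_iff {r j : ℕ} : T lam h r j ≠ 0 ↔ (mu lam r ≤ j ∧ j < lam.rowLen r) := by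
  constructor
  · intro hT
    unfold T at hT
    by_cases hj : j < lam.rowLen r
    · rw [if_pos hj] at hT
      have hne : ((Finset.range (r+1)).filter (fun k => nu lam h k r ≤ j)).Nonempty := by
        rw [Finset.nonempty_iff_ne_empty]
        intro he
        rw [he] at hT
        simp at hT
      obtain ⟨m, hm⟩ := hne
      rw [Finset.mem_filter] at hm
      have := le_trans (nu_mono_k' lam h (Nat.zero_le m) r) hm.2
      rw [nu_zero lam h r] at this
      exact ⟨this, hj⟩
    · rw [if_neg hj] at hT
      omega
  · rintro ⟨h1, h2⟩
    have h0 : nu lam h 0 r ≤ j := by rw [nu_zero lam h r]; exact h1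
    obtain ⟨k, hk1, hk2⟩ := T_exists lam h h2 h0
    rw [T_count lam h hk1 hk2]
    omega

lemma T_val_bounds {r j k : ℕ} (hT : T lam h r j = k + 1) :
    nu lam h k r ≤ j ∧ j < nu lam h (k+1) r := by
  have hne : T lam h r j ≠ 0 := by omega
  rw [T_ne_iff lam h] at hne
  have h0 : nu lam h 0 r ≤ j := by rw [nu_zero lam h r]; exact hne.1
  obtain ⟨k', hk1, hk2⟩ := T_exists lam h hne.2 h0
  have := T_count lam h hk1 hk2
  have hkk : k' = k := by omega
  subst hkk
  exact ⟨hk1, hk2⟩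

/-- the base diagram μ -/
def muD : YoungDiagram where
  cells := lam.cells.filter (fun p => p.2 < mu lam p.1)
  isLowerSet := by
    intro p q hpq hq
    simp only [Finset.coe_filter, Set.mem_setOf_eq, YoungDiagram.mem_cells] at hq ⊢
    exact ⟨lam.isLowerSet hpq hq.1,
      lt_of_le_of_lt hpq.2 (lt_of_lt_of_le hq.2 (mu_anti' lam hpq.1))⟩

lemma muD_mem {r j : ℕ} : (r, j) ∈ muD lam ↔ j < mu lam r := by
  show (r, j) ∈ (muD lam).cells ↔ _
  unfold muD
  simp only [Finset.mem_filter, YoungDiagram.mem_cells]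
  constructor
  · rintro ⟨_, h2⟩; exact h2
  · intro hj
    refine ⟨?_, hj⟩
    rw [YoungDiagram.mem_iff_lt_rowLen]
    have := nu_le_lam lam h 0 r
    rw [nu_zero lam h r] at this
    omega

lemma muD_rowLen (r : ℕ) : (muD lam).rowLen r = mu lam r := by
  have h1 : ¬ ((r, mu lam r) ∈ muD lam) := by
    rw [muD_mem lam h]; omega
  rw [YoungDiagram.mem_iff_lt_rowLen] at h1
  rcases Nat.eq_zero_or_pos (mu lam r) with hz | hp
  · omega
  · have h2 : (r, mu lam r - 1) ∈ muD lam := by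
      rw [muD_mem lam h]; omega
    rw [YoungDiagram.mem_iff_lt_rowLen] at h2
    omega

omit h in
lemma muD_le : muD lam ≤ lam := by
  rw [← YoungDiagram.cells_subset_iff]
  exact Finset.filter_subset _ _

/-- embedding of a row -/
def emb (r : ℕ) : ℕ ↪ ℕ × ℕ := ⟨fun j => (r, j), fun a b hab => by simpa using hab⟩

omit h in
lemma natCard_eq_filter (Q : ℕ × ℕ → Prop) [DecidablePred Q]
    (hQ : ∀ p, Q p → p ∈ lam.cells) :
    Nat.card {p : ℕ × ℕ // Q p} = (lam.cells.filter Q).card := by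
  have hset : {p : ℕ × ℕ | Q p} = ↑(lam.cells.filter Q) := by
    ext p
    simp only [Set.mem_setOf_eq, Finset.coe_filter, Set.mem_setOf_eq]
    exact ⟨fun hq => ⟨hQ p hq, hq⟩, fun hq => hq.2⟩
  have h1 : Nat.card {p : ℕ × ℕ // Q p} = Set.ncard {p : ℕ × ℕ | Q p} :=
    Nat.card_coe_set_eq _
  rw [h1, hset, Set.ncard_coe_finset]

omit h in
lemma mem_row_bound {p : ℕ × ℕ} (hp : p ∈ lam.cells) : p.1 < LL lam := by
  rw [YoungDiagram.mem_cells] at hp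
  have h2 : (p.1, p.2) ∈ lam := hp
  have h3 := YoungDiagram.mem_iff_lt_colLen.1 h2
  have h4 : lam.colLen p.2 ≤ lam.colLen 0 := lam.colLen_anti 0 p.2 (Nat.zero_le _)
  unfold LL
  omega

lemma mem_of_bounds {r b k : ℕ} (h1 : nu lam h k r ≤ b) (h2 : b < nu lam h (k+1) r) :
    (r, b) ∈ lam := by
  rw [YoungDiagram.mem_iff_lt_rowLen]
  exact lt_of_lt_of_le h2 (nu_le_lam lam h (k+1) r)

/-- the fiber of entry-(k+1) cells in row r -/
lemma fiber_eq (k r : ℕ) (Q : ℕ × ℕ → Prop) [DecidablePred Q]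
    (hQ : ∀ b, (Q (r, b) ↔ T lam h r b = k + 1)) :
    (lam.cells.filter Q).filter (fun p => p.1 = r)
      = (Finset.Ico (nu lam h k r) (nu lam h (k+1) r)).map (emb r) := by
  ext p
  rcases p with ⟨a, b⟩
  simp only [Finset.mem_filter, Finset.mem_map, Finset.mem_Ico, YoungDiagram.mem_cells, emb,
    Function.Embedding.coeFn_mk]
  constructor
  · rintro ⟨⟨hmem, hq⟩, ha⟩
    subst ha
    rw [hQ b] at hq
    have hb := T_val_bounds lam h hq
    exact ⟨b, ⟨hb.1, hb.2⟩, rfl⟩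
  · rintro ⟨j, ⟨hj1, hj2⟩, hje⟩
    have ha : r = a := congrArg Prod.fst hje
    have hb : j = b := congrArg Prod.snd hje
    subst ha; subst hb
    exact ⟨⟨mem_of_bounds lam h hj1 hj2, (hQ j).2 (T_count lam h hj1 hj2)⟩, rfl⟩

lemma sum_nu_sub (i k : ℕ) :
    (∑ r ∈ Finset.range i, (nu lam h (k+1) r - nu lam h k r)) + Phi lam h k i
      = Phi lam h (k+1) i := by
  unfold Phi
  rw [← Finset.sum_add_distrib]
  apply Finset.sum_congr rfl
  intro r _
  have := nu_mono_k lam h k r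
  omega

lemma content_card (k : ℕ) :
    (lam.cells.filter (fun p => T lam h p.1 p.2 = k + 1)).card = mu lam k := by
  set Q : ℕ × ℕ → Prop := fun p => T lam h p.1 p.2 = k + 1 with hQdef
  have hcard : (lam.cells.filter Q).card
      = ∑ r ∈ Finset.range (LL lam), ((lam.cells.filter Q).filter (fun p => p.1 = r)).card := by
    apply Finset.card_eq_sum_card_fiberwise
    intro p hp
    rw [Finset.mem_coe, Finset.mem_filter] at hp
    rw [Finset.mem_coe, Finset.mem_range]
    exact mem_row_bound lam hp.1
  rw [hcard]
  have hfib : ∀ r ∈ Finset.range (LL lam),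
      ((lam.cells.filter Q).filter (fun p => p.1 = r)).card
        = nu lam h (k+1) r - nu lam h k r := by
    intro r _
    rw [fiber_eq lam h k r Q (fun b => Iff.rfl), Finset.card_map, Nat.card_Ico]
  rw [Finset.sum_congr rfl hfib]
  have hsum := sum_nu_sub lam h (LL lam) k
  set R : ℕ := 2*k + LL lam + 3 with hR
  have hs1 : Phi lam h k R = Phi lam h k (LL lam) := Phi_stab lam h (le_refl _) (by omega)
  have hs2 : Phi lam h (k+1) R = Phi lam h (k+1) (LL lam) := Phi_stab lam h (le_refl _) (by omega)
  have ht1 : Phi lam h k R = dd lam k + lam.card / 2 := Phi_total lam h (by omega)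
  have ht2 : Phi lam h (k+1) R = dd lam (k+1) + lam.card / 2 := Phi_total lam h (by omega)
  have hmd := mu_dd lam k
  omega

lemma ballot_upper (i j k : ℕ) :
    (lam.cells.filter (fun p => (p.1 < i ∨ (p.1 = i ∧ j ≤ p.2)) ∧ T lam h p.1 p.2 = k + 2)).card
      + Phi lam h (k+1) (i+1) ≤ Phi lam h (k+2) (i+1) := by
  have hcard : (lam.cells.filter
        (fun p => (p.1 < i ∨ (p.1 = i ∧ j ≤ p.2)) ∧ T lam h p.1 p.2 = k + 2)).card
      = ∑ r ∈ Finset.range (i+1), ((lam.cells.filter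
        (fun p => (p.1 < i ∨ (p.1 = i ∧ j ≤ p.2)) ∧ T lam h p.1 p.2 = k + 2)).filter
          (fun p => p.1 = r)).card := by
    apply Finset.card_eq_sum_card_fiberwise
    intro p hp
    rw [Finset.mem_coe, Finset.mem_filter] at hp
    rw [Finset.mem_coe, Finset.mem_range]
    rcases hp.2.1 with h1 | h1 <;> omega
  rw [hcard]
  have hfib : ∀ r ∈ Finset.range (i+1),
      ((lam.cells.filter
        (fun p => (p.1 < i ∨ (p.1 = i ∧ j ≤ p.2)) ∧ T lam h p.1 p.2 = k + 2)).filter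
          (fun p => p.1 = r)).card
        ≤ nu lam h (k+2) r - nu lam h (k+1) r := by
    intro r _
    have hsub : (lam.cells.filter
        (fun p => (p.1 < i ∨ (p.1 = i ∧ j ≤ p.2)) ∧ T lam h p.1 p.2 = k + 2)).filter
          (fun p => p.1 = r)
        ⊆ (Finset.Ico (nu lam h (k+1) r) (nu lam h (k+1+1) r)).map (emb r) := by
      intro p hp
      rcases p with ⟨a, b⟩
      simp only [Finset.mem_filter] at hp
      obtain ⟨⟨hmem, hQ2⟩, ha⟩ := hp
      subst ha
      have hq : T lam h a b = (k+1) + 1 := by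
        have h22 := hQ2.2
        omega
      have hb := T_val_bounds lam h hq
      rw [Finset.mem_map]
      exact ⟨b, by rw [Finset.mem_Ico]; exact ⟨hb.1, hb.2⟩, rfl⟩
    have hcle := Finset.card_le_card hsub
    rw [Finset.card_map, Nat.card_Ico] at hcle
    have harg : nu lam h (k+1+1) r = nu lam h (k+2) r := by
      congr 1
    omega
  have hs := Finset.sum_le_sum hfib
  have hsum := sum_nu_sub lam h (i+1) (k+1)
  simp only [show k+1+1 = k+2 from rfl] at hsum
  omega

lemma ballot_lower (i j k : ℕ) :
    Phi lam h (k+1) i ≤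
      (lam.cells.filter (fun p => (p.1 < i ∨ (p.1 = i ∧ j ≤ p.2)) ∧ T lam h p.1 p.2 = k + 1)).card
      + Phi lam h k i := by
  have hsub : (Finset.range i).biUnion
      (fun r => (Finset.Ico (nu lam h k r) (nu lam h (k+1) r)).map (emb r))
      ⊆ lam.cells.filter (fun p => (p.1 < i ∨ (p.1 = i ∧ j ≤ p.2)) ∧ T lam h p.1 p.2 = k + 1) := by
    intro p hp
    rcases p with ⟨a, b⟩
    rw [Finset.mem_biUnion] at hp
    obtain ⟨r, hr, hmem⟩ := hp
    rw [Finset.mem_range] at hr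
    rw [Finset.mem_map] at hmem
    obtain ⟨x, hx, hxe⟩ := hmem
    have ha : r = a := congrArg Prod.fst hxe
    have hb : x = b := congrArg Prod.snd hxe
    subst ha; subst hb
    rw [Finset.mem_Ico] at hx
    rw [Finset.mem_filter]
    refine ⟨(YoungDiagram.mem_cells _).2 (mem_of_bounds lam h hx.1 hx.2), ?_, ?_⟩
    · left; exact hr
    · exact T_count lam h hx.1 hx.2
  have hcardU : ((Finset.range i).biUnion
      (fun r => (Finset.Ico (nu lam h k r) (nu lam h (k+1) r)).map (emb r))).card
      = ∑ r ∈ Finset.range i, (nu lam h (k+1) r - nu lam h k r) := by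
    rw [Finset.card_biUnion]
    · apply Finset.sum_congr rfl
      intro r _
      rw [Finset.card_map, Nat.card_Ico]
    · intro r1 _ r2 _ hne
      rw [Function.onFun, Finset.disjoint_left]
      intro p hp1 hp2
      rw [Finset.mem_map] at hp1 hp2
      obtain ⟨x1, _, he1⟩ := hp1
      obtain ⟨x2, _, he2⟩ := hp2
      have e1 : r1 = p.1 := congrArg Prod.fst he1
      have e2 : r2 = p.1 := congrArg Prod.fst he2
      omega
  have hle := Finset.card_le_card hsub
  have hsum := sum_nu_sub lam h i k
  omega

lemma T_supp (r j : ℕ) :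
    T lam h r j ≠ 0 ↔ ((r, j) ∈ lam ∧ (r, j) ∉ muD lam) := by
  rw [T_ne_iff lam h, YoungDiagram.mem_iff_lt_rowLen, muD_mem lam h]
  omega

lemma T_rows_weak (r j₁ j₂ : ℕ) (hj : j₁ ≤ j₂) (h1 : T lam h r j₁ ≠ 0) (h2 : T lam h r j₂ ≠ 0) :
    T lam h r j₁ ≤ T lam h r j₂ := by
  rw [T_ne_iff lam h] at h1 h2
  unfold T
  rw [if_pos h1.2, if_pos h2.2]
  apply Finset.card_le_card
  intro x hx
  rw [Finset.mem_filter] at hx ⊢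
  exact ⟨hx.1, by omega⟩

lemma T_cols_strict (r₁ r₂ j : ℕ) (hr : r₁ < r₂) (h1 : T lam h r₁ j ≠ 0)
    (h2 : T lam h r₂ j ≠ 0) : T lam h r₁ j < T lam h r₂ j := by
  obtain ⟨a, ha⟩ := Nat.exists_eq_succ_of_ne_zero h1
  obtain ⟨b, hb⟩ := Nat.exists_eq_succ_of_ne_zero h2
  rw [ha, hb]
  by_contra hc
  push_neg at hc
  have hba : b ≤ a := by omega
  have ha' := T_val_bounds lam h ha
  have hb' := T_val_bounds lam h hb
  have c1 : nu lam h (b+1) r₂ ≤ nu lam h (b+1) (r₁+1) := nu_anti_r' lam h (b+1) (by omega)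
  have c2 : nu lam h (b+1) (r₁+1) ≤ nu lam h (a+1) (r₁+1) := nu_mono_k' lam h (by omega) _
  have c3 : nu lam h (a+1) (r₁+1) ≤ nu lam h a r₁ := nu_strip lam h a r₁
  omega

/-- The complete LR filling witnessing `c^lam_{μ,μ} > 0`. -/
def theFilling : LRFilling (muD lam) (muD lam) lam where
  sub := muD_le lam
  T := T lam h
  supp := T_supp lam h
  rows_weak := T_rows_weak lam h
  cols_strict := fun i₁ i₂ jj hi => T_cols_strict lam h i₁ i₂ jj hi
  content := by
    intro k
    rw [natCard_eq_filter lam (fun p => T lam h p.1 p.2 = k + 1)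
      (fun p hp => by
        have : T lam h p.1 p.2 ≠ 0 := by omega
        rw [T_supp lam h] at this
        exact (YoungDiagram.mem_cells _).2 this.1)]
    rw [content_card lam h k, muD_rowLen lam h k]
  ballot := by
    intro i j k
    rw [natCard_eq_filter lam _
      (fun p hp => by
        have : T lam h p.1 p.2 ≠ 0 := by omega
        rw [T_supp lam h] at this
        exact (YoungDiagram.mem_cells _).2 this.1)]
    rw [natCard_eq_filter lam _
      (fun p hp => by
        have : T lam h p.1 p.2 ≠ 0 := by omega
        rw [T_supp lam h] at this
        exact (YoungDiagram.mem_cells _).2 this.1)]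
    have hu := ballot_upper lam h i j k
    have hl := ballot_lower lam h i j k
    have hb := Phi_ballot lam h k i
    omega

end WithEven

/-- Any LR filling type is finite. -/
lemma finiteLR (μ ν lam : YoungDiagram) : Finite (LRFilling μ ν lam) := by
  classical
  set B := ν.colLen 0 with hB
  have hbound : ∀ (F : LRFilling μ ν lam) (p : ℕ × ℕ), F.T p.1 p.2 ≤ B := by
    intro F p
    rcases Nat.eq_zero_or_pos (F.T p.1 p.2) with hz | hp
    · omega
    obtain ⟨m, hm⟩ := Nat.exists_eq_succ_of_ne_zero (show F.T p.1 p.2 ≠ 0 by omega)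
    have hfin : {q : ℕ × ℕ | F.T q.1 q.2 = m + 1}.Finite := by
      apply Set.Finite.subset lam.cells.finite_toSet
      intro q hq
      rw [Set.mem_setOf_eq] at hq
      have hne : F.T q.1 q.2 ≠ 0 := by omega
      have hmem := (F.supp q.1 q.2).1 hne
      exact Finset.mem_coe.2 ((YoungDiagram.mem_cells _).2 hmem.1)
    haveI : Finite {q : ℕ × ℕ // F.T q.1 q.2 = m + 1} := hfin.to_subtype
    have hne : Nonempty {q : ℕ × ℕ // F.T q.1 q.2 = m + 1} := ⟨⟨p, hm⟩⟩
    have hpos : 0 < Nat.card {q : ℕ × ℕ // F.T q.1 q.2 = m + 1} := Nat.card_pos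
    rw [F.content m] at hpos
    have hmemν : (m, 0) ∈ ν := YoungDiagram.mem_iff_lt_rowLen.2 (by omega)
    have := YoungDiagram.mem_iff_lt_colLen.1 hmemν
    omega
  let f : LRFilling μ ν lam → (lam.cells → Fin (B+1)) := fun F c =>
    ⟨F.T c.1.1 c.1.2, by have := hbound F c.1; omega⟩
  have hinj : Function.Injective f := by
    intro F G hfg
    have hT : F.T = G.T := by
      funext i j
      by_cases hmem : (i, j) ∈ lam
      · have hc := congrFun hfg ⟨(i, j), (YoungDiagram.mem_cells _).2 hmem⟩
        have : F.T i j = G.T i j := by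
          have := congrArg Fin.val hc
          simpa [f] using this
        exact this
      · have h1 : F.T i j = 0 := by
          by_contra hne; exact hmem ((F.supp i j).1 hne).1
        have h2 : G.T i j = 0 := by
          by_contra hne; exact hmem ((G.supp i j).1 hne).1
        rw [h1, h2]
    cases F; cases G; cases hT; rfl
  exact Finite.of_injective f hinj

end LRSelf

/-- For every partition `lam` of even size there is a partition `μ` with
`c^lam_{μ,μ} > 0`. -/
theorem exists_lr_self_of_even (lam : YoungDiagram) (h : Even lam.card) :
    ∃ μ : YoungDiagram, 0 < lrCoeff μ μ lam := by
  refine ⟨LRSelf.muD lam, ?_⟩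
  unfold lrCoeff
  rw [Nat.card_pos_iff]
  exact ⟨⟨LRSelf.theFilling lam h⟩, LRSelf.finiteLR _ _ _⟩
end

section
/- For every partition λ, N_{λ,λ,λ} > 0 if and only if |λ| is even. -/
open YoungDiagram

open Finset in
section

namespace NLaux

variable (L : YoungDiagram)

/-- column heights -/
def hh (j : ℕ) : ℕ := L.colLen j

/-- width -/
def W : ℕ := L.rowLen 0

/-- number of odd columns strictly before `j` -/
def oc (j : ℕ) : ℕ := ((Finset.range j).filter (fun x => Odd (L.colLen x))).card

def D : ℕ := oc L (W L)

def t : ℕ := D L / 2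

def isUp (j : ℕ) : Prop := Odd (L.colLen j) ∧ oc L j < t L

instance : DecidablePred (isUp L) := fun _ => instDecidableAnd

lemma hh_anti {j1 j2 : ℕ} (h : j1 ≤ j2) : hh L j2 ≤ hh L j1 := L.colLen_anti _ _ h

lemma odd_lt_W {j : ℕ} (h : Odd (L.colLen j)) : j < W L := by
  have h0 : 0 < L.colLen j := Nat.pos_of_ne_zero (by rintro h'; rw [h'] at h; simp at h)
  have : (0, j) ∈ L := YoungDiagram.mem_iff_lt_colLen.2 h0
  have := YoungDiagram.mem_iff_lt_rowLen.mp this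
  simpa [W] using this

lemma oc_mono : Monotone (oc L) := fun a b hab =>
  Finset.card_le_card (Finset.filter_subset_filter _ (Finset.range_subset_range.2 hab))

lemma oc_succ (j : ℕ) : oc L (j + 1) = oc L j + (if Odd (L.colLen j) then 1 else 0) := by
  unfold oc
  rw [Finset.range_add_one, Finset.filter_insert]
  split <;> simp [Finset.card_insert_of_notMem, Finset.mem_filter]

lemma oc_lt_of_odd {j j' : ℕ} (h : Odd (L.colLen j)) (hlt : j < j') : oc L j < oc L j' := by
  have h1 : oc L j + 1 ≤ oc L (j + 1) := by rw [oc_succ]; simp [h]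
  exact lt_of_lt_of_le (by omega) (le_trans h1 (oc_mono L hlt))

lemma oc_inj_odd {j j' : ℕ} (h : Odd (L.colLen j)) (h' : Odd (L.colLen j'))
    (he : oc L j = oc L j') : j = j' := by
  rcases lt_trichotomy j j' with hl | he' | hl
  · exact absurd he (Nat.ne_of_lt (oc_lt_of_odd L h hl))
  · exact he'
  · exact absurd he.symm (Nat.ne_of_lt (oc_lt_of_odd L h' hl))

lemma oc_lt_D {j : ℕ} (h : Odd (L.colLen j)) : oc L j < D L := by
  have hw := odd_lt_W L h
  have : oc L j < oc L (j + 1) := oc_lt_of_odd L h (Nat.lt_succ_self j)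
  exact lt_of_lt_of_le this (oc_mono L hw)

lemma exists_rank_aux : ∀ N k, k < oc L N → ∃ j, Odd (L.colLen j) ∧ oc L j = k := by
  intro N
  induction N with
  | zero => intro k hk; simp [oc] at hk
  | succ n ih =>
    intro k hk
    rw [oc_succ] at hk
    by_cases hodd : Odd (L.colLen n)
    · simp [hodd] at hk
      rcases Nat.lt_or_ge k (oc L n) with h1 | h1
      · exact ih k h1
      · exact ⟨n, hodd, by omega⟩
    · simp [hodd] at hk
      exact ih k hk

lemma exists_rank {k : ℕ} (hk : k < D L) : ∃ j, Odd (L.colLen j) ∧ oc L j = k :=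
  exists_rank_aux L (W L) k hk

open Classical in
noncomputable def rank (k : ℕ) : ℕ :=
  if hk : ∃ j, Odd (L.colLen j) ∧ oc L j = k then Classical.choose hk else 0

lemma rank_spec {k : ℕ} (hk : k < D L) :
    Odd (L.colLen (rank L k)) ∧ oc L (rank L k) = k := by
  have h := exists_rank L hk
  rw [rank, dif_pos h]
  exact Classical.choose_spec h

/-- partner of an odd column -/
noncomputable def mate (j : ℕ) : ℕ :=
  if oc L j < t L then rank L (t L + oc L j) else rank L (oc L j - t L)


lemma card_eq_sum_colLens : L.card = ∑ j ∈ Finset.range (W L), L.colLen j := by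
  have := Finset.card_eq_sum_card_fiberwise (f := fun p : ℕ × ℕ => p.2)
    (s := L.cells) (t := Finset.range (W L)) ?_
  · rw [YoungDiagram.card, this]
    refine Finset.sum_congr rfl (fun j _ => ?_)
    rw [L.colLen_eq_card]
    rfl
  · intro p hp
    simp only [Finset.mem_coe, Finset.mem_range] at hp ⊢
    have hp' : (0, p.2) ∈ L := L.up_left_mem (Nat.zero_le _) (le_refl _) (by
      rw [YoungDiagram.mem_cells] at hp; exact (show ((p.1, p.2) : ℕ × ℕ) ∈ L by simpa using hp))
    simpa [W] using YoungDiagram.mem_iff_lt_rowLen.mp hp'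

lemma D_even (hL : Even L.card) : D L = t L + t L := by
  have h1 : Even (∑ j ∈ Finset.range (W L), L.colLen j) := by
    rwa [← card_eq_sum_colLens]
  rw [Finset.even_sum_iff_even_card_odd] at h1
  have h2 : Even (D L) := h1
  rcases h2 with ⟨r, hr⟩
  have : t L = r := by unfold t; omega
  omega

lemma mate_spec_up (hL : Even L.card) {j : ℕ} (hj : isUp L j) :
    Odd (L.colLen (mate L j)) ∧ oc L (mate L j) = t L + oc L j := by
  have hd := D_even L hL
  have h2 := hj.2
  have hk : t L + oc L j < D L := by omega
  have hs := rank_spec L hk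
  rw [mate, if_pos h2]
  exact hs

lemma mate_up_down (hL : Even L.card) {j : ℕ} (hj : isUp L j) :
    ¬ isUp L (mate L j) := by
  have h := (mate_spec_up L hL hj).2
  intro hc
  have := hc.2
  omega

lemma mate_up_gt (hL : Even L.card) {j : ℕ} (hj : isUp L j) : j < mate L j := by
  have h := (mate_spec_up L hL hj).2
  have h2 := hj.2
  have ht : 0 < t L := Nat.pos_of_ne_zero (by intro h0; omega)
  by_contra hc
  push_neg at hc
  have := oc_mono L hc
  omega

lemma hh_mate_le (hL : Even L.card) {j : ℕ} (hj : isUp L j) :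
    L.colLen (mate L j) ≤ L.colLen j :=
  L.colLen_anti _ _ (le_of_lt (mate_up_gt L hL hj))

lemma mate_spec_down (hL : Even L.card) {j : ℕ} (hodd : Odd (L.colLen j)) (hd : t L ≤ oc L j) :
    Odd (L.colLen (mate L j)) ∧ oc L (mate L j) = oc L j - t L := by
  have hD := oc_lt_D L hodd
  have hk : oc L j - t L < D L := by omega
  have hs := rank_spec L hk
  rw [mate, if_neg (by omega)]
  exact hs

lemma mate_down_up (hL : Even L.card) {j : ℕ} (hodd : Odd (L.colLen j)) (hd : t L ≤ oc L j) :
    isUp L (mate L j) := by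
  have h := mate_spec_down L hL hodd hd
  have hD := oc_lt_D L hodd
  have hDe := D_even L hL
  exact ⟨h.1, by omega⟩

lemma mate_down_lt (hL : Even L.card) {j : ℕ} (hodd : Odd (L.colLen j)) (hd : t L ≤ oc L j) :
    mate L j < j := by
  have h := (mate_spec_down L hL hodd hd).2
  have hD := oc_lt_D L hodd
  have hDe := D_even L hL
  have ht : 0 < t L := by omega
  by_contra hc
  push_neg at hc
  have := oc_mono L hc
  omega

lemma hh_mate_ge_down (hL : Even L.card) {j : ℕ} (hodd : Odd (L.colLen j)) (hd : t L ≤ oc L j) :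
    L.colLen j ≤ L.colLen (mate L j) :=
  L.colLen_anti _ _ (le_of_lt (mate_down_lt L hL hodd hd))

lemma mate_invol_up (hL : Even L.card) {j : ℕ} (hj : isUp L j) :
    mate L (mate L j) = j := by
  have h1 := mate_spec_up L hL hj
  have h2 := mate_spec_down L hL h1.1 (by omega)
  exact oc_inj_odd L h2.1 hj.1 (by omega)

lemma mate_invol_down (hL : Even L.card) {j : ℕ} (hodd : Odd (L.colLen j)) (hd : t L ≤ oc L j) :
    mate L (mate L j) = j := by
  have h1 := mate_spec_down L hL hodd hd
  have hup := mate_down_up L hL hodd hd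
  have h2 := mate_spec_up L hL hup
  have hD := oc_lt_D L hodd
  have hDe := D_even L hL
  exact oc_inj_odd L h2.1 hodd (by omega)

/-- the half-column heights of `μ` -/
def mucol (j : ℕ) : ℕ := if isUp L j then L.colLen j / 2 + 1 else L.colLen j / 2

lemma mucol_le_hh (j : ℕ) : mucol L j ≤ L.colLen j := by
  unfold mucol
  split
  · next hu =>
    have := Nat.odd_iff.mp hu.1
    omega
  · omega

lemma mucol_anti : Antitone (mucol L) := by
  intro j j' hjj'
  unfold mucol
  have hhle : L.colLen j' ≤ L.colLen j := L.colLen_anti _ _ hjj'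
  split
  · next hu' =>
    have hou' := Nat.odd_iff.mp hu'.1
    split
    · next hu => omega
    · next hu =>
      by_cases hodd : Odd (L.colLen j)
      · exact absurd ⟨hodd, lt_of_le_of_lt (oc_mono L hjj') hu'.2⟩ hu
      · have : L.colLen j % 2 = 0 := Nat.even_iff.mp (Nat.not_odd_iff_even.mp hodd)
        omega
  · next hu' =>
    split <;> omega

/-- the diagram μ -/
def mu : YoungDiagram where
  cells := L.cells.filter (fun p => p.1 < mucol L p.2)
  isLowerSet := by
    intro p q hle hp
    simp only [Finset.coe_filter, Set.mem_setOf_eq, Finset.mem_coe, YoungDiagram.mem_cells] at hp ⊢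
    obtain ⟨h1, h2⟩ := hp
    refine ⟨L.isLowerSet hle h1, ?_⟩
    exact lt_of_le_of_lt (le_trans hle.1 (le_refl _)) (lt_of_lt_of_le h2 (mucol_anti L hle.2))

lemma mem_mu {i j : ℕ} : (i, j) ∈ mu L ↔ i < mucol L j := by
  constructor
  · intro h
    have : (i, j) ∈ (mu L).cells := h
    simp only [mu, Finset.mem_filter] at this
    exact this.2
  · intro h
    show (i, j) ∈ (mu L).cells
    simp only [mu, Finset.mem_filter]
    refine ⟨?_, h⟩
    rw [YoungDiagram.mem_cells, YoungDiagram.mem_iff_lt_colLen]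
    exact lt_of_lt_of_le h (mucol_le_hh L j)

lemma mu_le : mu L ≤ L := by
  rw [← YoungDiagram.cells_subset_iff]
  intro p hp
  simp only [mu, Finset.mem_filter] at hp
  exact hp.1

lemma skew_iff {i j : ℕ} : ((i, j) ∈ L ∧ (i, j) ∉ mu L) ↔ (mucol L j ≤ i ∧ i < L.colLen j) := by
  rw [YoungDiagram.mem_iff_lt_colLen, mem_mu]
  omega

/-- the row where the jump occurs in an up-column -/
noncomputable def jr (j : ℕ) : ℕ := mucol L j + L.colLen (mate L j) / 2

/-- the filling -/
noncomputable def Tf (i j : ℕ) : ℕ :=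
  if (i, j) ∈ L ∧ mucol L j ≤ i then
    i - mucol L j + 1 + (if isUp L j ∧ jr L j ≤ i then 1 else 0)
  else 0

/-- which values appear in column `j` -/
def Hosted (v j : ℕ) : Prop :=
  if isUp L j then (v ≤ mucol L j ∧ v ≠ L.colLen (mate L j) / 2 + 1)
  else v ≤ L.colLen j - mucol L j

noncomputable instance (v j : ℕ) : Decidable (Hosted L v j) := by unfold Hosted; infer_instance

/-- the row where value `v` sits in column `j` -/
noncomputable def rowOf (v j : ℕ) : ℕ :=
  if isUp L j ∧ L.colLen (mate L j) / 2 + 1 < v then mucol L j + v - 2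
  else mucol L j + v - 1

lemma Tf_ne_zero_iff {i j : ℕ} : Tf L i j ≠ 0 ↔ ((i, j) ∈ L ∧ (i, j) ∉ mu L) := by
  rw [skew_iff]
  unfold Tf
  by_cases hc : (i, j) ∈ L ∧ mucol L j ≤ i
  · rw [if_pos hc]
    have h1 := YoungDiagram.mem_iff_lt_colLen.mp hc.1
    have h2 := hc.2
    split_ifs <;> omega
  · rw [if_neg hc]
    rw [YoungDiagram.mem_iff_lt_colLen] at hc
    constructor
    · intro hx; exact absurd rfl hx
    · intro hx; exfalso; exact hc ⟨by omega, by omega⟩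

lemma Tf_eq_iff (hL : Even L.card) {v i j : ℕ} (hv : 0 < v) :
    Tf L i j = v ↔ (Hosted L v j ∧ i = rowOf L v j) := by
  by_cases hu : isUp L j
  · have hoj := Nat.odd_iff.mp hu.1
    have hom := Nat.odd_iff.mp (mate_spec_up L hL hu).1
    have hml := hh_mate_le L hL hu
    have hmu : mucol L j = L.colLen j / 2 + 1 := if_pos hu
    unfold Tf Hosted rowOf jr
    simp only [YoungDiagram.mem_iff_lt_colLen, eq_true hu, true_and, if_true]
    split_ifs with h1 h2 h3 h4 h5 <;>
      first
        | (exfalso; omega)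
        | (constructor <;> intro hcc <;> omega)
  · have hmu : mucol L j = L.colLen j / 2 := if_neg hu
    unfold Tf Hosted rowOf
    simp only [YoungDiagram.mem_iff_lt_colLen, eq_false hu, false_and, if_false]
    have h2 : L.colLen j / 2 * 2 ≤ L.colLen j := by omega
    split_ifs with h1 h3 <;>
      first
        | (exfalso; omega)
        | (constructor <;> intro hcc <;> omega)

lemma lt_W_of_colLen_pos {j : ℕ} (h : 0 < L.colLen j) : j < W L := by
  have : (0, j) ∈ L := YoungDiagram.mem_iff_lt_colLen.2 h
  simpa [W] using YoungDiagram.mem_iff_lt_rowLen.mp this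

lemma hosted_lt_W {v j : ℕ} (hv : 0 < v) (h : Hosted L v j) : j < W L := by
  unfold Hosted at h
  split at h
  · next hu => exact odd_lt_W L hu.1
  · next hu =>
    have h2 := mucol_le_hh L j
    exact lt_W_of_colLen_pos L (by omega)

lemma mu_rowLen_eq (k : ℕ) :
    ((Finset.range (W L)).filter (fun j => k + 1 ≤ mucol L j)).card = (mu L).rowLen k := by
  have hset : ((Finset.range (W L)).filter (fun j => k + 1 ≤ mucol L j))
      = Finset.range ((mu L).rowLen k) := by
    ext j
    simp only [Finset.mem_filter, Finset.mem_range]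
    rw [← YoungDiagram.mem_iff_lt_rowLen, mem_mu]
    constructor
    · intro hx; omega
    · intro hx
      have h2 := mucol_le_hh L j
      exact ⟨lt_W_of_colLen_pos L (by omega), by omega⟩
  rw [hset, Finset.card_range]

lemma content_eq (hL : Even L.card) (k : ℕ) :
    Nat.card {p : ℕ × ℕ // Tf L p.1 p.2 = k + 1} = (mu L).rowLen k := by
  classical
  set v := k + 1 with hv
  have hv0 : 0 < v := Nat.succ_pos k
  have hset : {p : ℕ × ℕ | Tf L p.1 p.2 = v}
      = ↑(((Finset.range (W L)).filter (fun j => Hosted L v j)).image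
          (fun j => (rowOf L v j, j))) := by
    ext ⟨i, j⟩
    simp only [Set.mem_setOf_eq, Finset.coe_image, Set.mem_image, Finset.mem_coe,
      Finset.mem_filter, Finset.mem_range]
    constructor
    · intro hT
      obtain ⟨hH, hi⟩ := (Tf_eq_iff L hL hv0).mp hT
      exact ⟨j, ⟨hosted_lt_W L hv0 hH, hH⟩, by rw [← hi]⟩
    · rintro ⟨j', ⟨_, hH⟩, heq⟩
      have hj : j' = j := congrArg Prod.snd heq
      have hi : rowOf L v j' = i := congrArg Prod.fst heq
      subst hj
      exact (Tf_eq_iff L hL hv0).mpr ⟨hH, hi.symm⟩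
  have h1 : Nat.card {p : ℕ × ℕ // Tf L p.1 p.2 = v}
      = (((Finset.range (W L)).filter (fun j => Hosted L v j)).image
          (fun j => (rowOf L v j, j))).card := by
    show Nat.card ↥{p : ℕ × ℕ | Tf L p.1 p.2 = v} = _
    rw [Nat.card_coe_set_eq, hset, Set.ncard_coe_finset]
  rw [h1]
  rw [Finset.card_image_of_injOn (fun x _ y _ hxy => congrArg Prod.snd hxy)]
  rw [← mu_rowLen_eq L k]
  refine Finset.card_nbij'
    (fun j => if ¬ isUp L j ∧ Odd (L.colLen j) ∧ v = mucol L j + 1 then mate L j else j)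
    (fun j => if isUp L j ∧ v = L.colLen (mate L j) / 2 + 1 then mate L j else j)
    ?_ ?_ ?_ ?_
  · intro j hj
    simp only [Finset.mem_coe, Finset.mem_filter, Finset.mem_range] at hj ⊢
    obtain ⟨hjW, hH⟩ := hj
    by_cases hc : ¬ isUp L j ∧ Odd (L.colLen j) ∧ v = mucol L j + 1
    · rw [if_pos hc]
      obtain ⟨hnu, hodd, hveq⟩ := hc
      have hdown : t L ≤ oc L j := by
        by_contra hcc
        exact hnu ⟨hodd, by omega⟩
      have hup := mate_down_up L hL hodd hdown
      have hge := hh_mate_ge_down L hL hodd hdown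
      have hmm : mucol L (mate L j) = L.colLen (mate L j) / 2 + 1 := if_pos hup
      have hmj : mucol L j = L.colLen j / 2 := if_neg hnu
      have hoj := Nat.odd_iff.mp hodd
      have hom := Nat.odd_iff.mp hup.1
      exact ⟨odd_lt_W L hup.1, by omega⟩
    · rw [if_neg hc]
      unfold Hosted at hH
      refine ⟨hjW, ?_⟩
      split at hH
      · exact hH.1
      · next hnu =>
        by_cases hodd : Odd (L.colLen j)
        · have hmj : mucol L j = L.colLen j / 2 := if_neg hnu
          have hoj := Nat.odd_iff.mp hodd
          have hne : ¬ (v = mucol L j + 1) := fun hveq => hc ⟨hnu, hodd, hveq⟩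
          omega
        · have hmj : mucol L j = L.colLen j / 2 := if_neg hnu
          have hoj := Nat.even_iff.mp (Nat.not_odd_iff_even.mp hodd)
          omega
  · intro j hj
    simp only [Finset.mem_coe, Finset.mem_filter, Finset.mem_range] at hj ⊢
    obtain ⟨hjW, hv'⟩ := hj
    by_cases hc : isUp L j ∧ v = L.colLen (mate L j) / 2 + 1
    · rw [if_pos hc]
      obtain ⟨hup, hveq⟩ := hc
      have hsp := mate_spec_up L hL hup
      have hndown : ¬ isUp L (mate L j) := mate_up_down L hL hup
      have hmm : mucol L (mate L j) = L.colLen (mate L j) / 2 := if_neg hndown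
      have hom := Nat.odd_iff.mp hsp.1
      refine ⟨odd_lt_W L hsp.1, ?_⟩
      unfold Hosted
      rw [if_neg hndown]
      omega
    · rw [if_neg hc]
      refine ⟨hjW, ?_⟩
      unfold Hosted
      by_cases hu : isUp L j
      · rw [if_pos hu]
        exact ⟨hv', fun hveq => hc ⟨hu, hveq⟩⟩
      · rw [if_neg hu]
        have hmj : mucol L j = L.colLen j / 2 := if_neg hu
        omega
  · intro j hj
    simp only [Finset.mem_coe, Finset.mem_filter, Finset.mem_range] at hj
    obtain ⟨hjW, hH⟩ := hj
    dsimp only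
    by_cases hc : ¬ isUp L j ∧ Odd (L.colLen j) ∧ v = mucol L j + 1
    · rw [if_pos hc]
      obtain ⟨hnu, hodd, hveq⟩ := hc
      have hdown : t L ≤ oc L j := by
        by_contra hcc
        exact hnu ⟨hodd, by omega⟩
      have hup := mate_down_up L hL hodd hdown
      have hinv := mate_invol_down L hL hodd hdown
      have hmj : mucol L j = L.colLen j / 2 := if_neg hnu
      rw [if_pos ⟨hup, by rw [hinv]; omega⟩]
      exact hinv
    · have h2 : ¬ (isUp L j ∧ v = L.colLen (mate L j) / 2 + 1) := by
        intro hcc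
        obtain ⟨hup, hveq⟩ := hcc
        unfold Hosted at hH
        rw [if_pos hup] at hH
        exact hH.2 hveq
      rw [if_neg hc, if_neg h2]
  · intro j hj
    simp only [Finset.mem_coe, Finset.mem_filter, Finset.mem_range] at hj
    obtain ⟨hjW, hv'⟩ := hj
    dsimp only
    by_cases hc : isUp L j ∧ v = L.colLen (mate L j) / 2 + 1
    · rw [if_pos hc]
      obtain ⟨hup, hveq⟩ := hc
      have hsp := mate_spec_up L hL hup
      have hndown : ¬ isUp L (mate L j) := mate_up_down L hL hup
      have hinv := mate_invol_up L hL hup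
      have hmm : mucol L (mate L j) = L.colLen (mate L j) / 2 := if_neg hndown
      rw [if_pos ⟨hndown, hsp.1, by omega⟩]
      exact hinv
    · have h2 : ¬ (¬ isUp L j ∧ Odd (L.colLen j) ∧ v = mucol L j + 1) := by
        intro hcc
        obtain ⟨hnu, hodd, hveq⟩ := hcc
        have hmj : mucol L j = L.colLen j / 2 := if_neg hnu
        omega
      rw [if_neg hc, if_neg h2]

lemma cols_strict_lemma {i1 i2 j : ℕ} (h : i1 < i2) (h1 : Tf L i1 j ≠ 0) (h2 : Tf L i2 j ≠ 0) :
    Tf L i1 j < Tf L i2 j := by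
  have hs1 := (skew_iff L).mp ((Tf_ne_zero_iff L).mp h1)
  have hs2 := (skew_iff L).mp ((Tf_ne_zero_iff L).mp h2)
  have hm1 : (i1, j) ∈ L := YoungDiagram.mem_iff_lt_colLen.2 hs1.2
  have hm2 : (i2, j) ∈ L := YoungDiagram.mem_iff_lt_colLen.2 hs2.2
  unfold Tf
  rw [if_pos (show (i1, j) ∈ L ∧ mucol L j ≤ i1 from ⟨hm1, hs1.1⟩),
    if_pos (show (i2, j) ∈ L ∧ mucol L j ≤ i2 from ⟨hm2, hs2.1⟩)]
  by_cases hb1 : isUp L j ∧ jr L j ≤ i1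
  · rw [if_pos (show isUp L j ∧ jr L j ≤ i1 from hb1),
      if_pos (show isUp L j ∧ jr L j ≤ i2 from ⟨hb1.1, le_trans hb1.2 (le_of_lt h)⟩)]
    have := hs1.1
    omega
  · rw [if_neg (show ¬ (isUp L j ∧ jr L j ≤ i1) from hb1)]
    have h0 := hs1.1
    split_ifs with hb2 <;> omega

lemma rows_weak_adj (hL : Even L.card) {i j : ℕ}
    (h1 : Tf L i j ≠ 0) (h2 : Tf L i (j + 1) ≠ 0) :
    Tf L i j ≤ Tf L i (j + 1) := by
  have hs1 := (skew_iff L).mp ((Tf_ne_zero_iff L).mp h1)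
  have hs2 := (skew_iff L).mp ((Tf_ne_zero_iff L).mp h2)
  have hm1 : (i, j) ∈ L := YoungDiagram.mem_iff_lt_colLen.2 hs1.2
  have hm2 : (i, j + 1) ∈ L := YoungDiagram.mem_iff_lt_colLen.2 hs2.2
  have hanti : mucol L (j + 1) ≤ mucol L j := mucol_anti L (Nat.le_succ j)
  have key : mucol L (j + 1) + (if isUp L j ∧ jr L j ≤ i then 1 else 0)
      ≤ mucol L j + (if isUp L (j + 1) ∧ jr L (j + 1) ≤ i then 1 else 0) := by
    by_cases hb1 : isUp L j ∧ jr L j ≤ i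
    · rw [if_pos hb1]
      obtain ⟨hup, hjri⟩ := hb1
      by_cases hu2 : isUp L (j + 1)
      · by_cases hb2 : jr L (j + 1) ≤ i
        · rw [if_pos ⟨hu2, hb2⟩]; omega
        · exfalso
          apply hb2
          refine le_trans (le_trans ?_ hjri) (le_refl i)
          unfold jr
          have hmlt : mate L j < mate L (j + 1) := by
            have hsp1 := mate_spec_up L hL hup
            have hsp2 := mate_spec_up L hL hu2
            have hocs : oc L j < oc L (j + 1) := oc_lt_of_odd L hup.1 (Nat.lt_succ_self j)
            by_contra hcc
            push_neg at hcc
            have := oc_mono L hcc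
            omega
          have := L.colLen_anti _ _ (le_of_lt hmlt)
          omega
      · rw [if_neg (fun hh => hu2 hh.1)]
        have hmj : mucol L j = L.colLen j / 2 + 1 := if_pos hup
        have hmj2 : mucol L (j + 1) = L.colLen (j + 1) / 2 := if_neg hu2
        have hhle : L.colLen (j + 1) ≤ L.colLen j := L.colLen_anti _ _ (Nat.le_succ j)
        omega
    · rw [if_neg hb1]
      split_ifs <;> omega
  unfold Tf
  rw [if_pos (show (i, j) ∈ L ∧ mucol L j ≤ i from ⟨hm1, hs1.1⟩),
    if_pos (show (i, j + 1) ∈ L ∧ mucol L (j + 1) ≤ i from ⟨hm2, hs2.1⟩)]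
  have := hs1.1
  have := hs2.1
  omega

lemma rows_weak_gen (hL : Even L.card) : ∀ (d i j : ℕ), Tf L i j ≠ 0 → Tf L i (j + d) ≠ 0 →
    Tf L i j ≤ Tf L i (j + d) := by
  intro d
  induction d with
  | zero => intro i j h1 _; exact le_refl _
  | succ n ih =>
    intro i j h1 h2
    have hs1 := (skew_iff L).mp ((Tf_ne_zero_iff L).mp h1)
    have hs2 := (skew_iff L).mp ((Tf_ne_zero_iff L).mp h2)
    have hmid : Tf L i (j + n) ≠ 0 := by
      rw [Tf_ne_zero_iff, skew_iff]
      constructor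
      · exact le_trans (mucol_anti L (Nat.le_add_right j n)) hs1.1
      · have : (i, j + n) ∈ L := L.up_left_mem (le_refl i) (by omega)
          (YoungDiagram.mem_iff_lt_colLen.2 hs2.2)
        exact YoungDiagram.mem_iff_lt_colLen.mp this
    exact le_trans (ih i j h1 hmid) (rows_weak_adj L hL hmid h2)

/-- predecessor cell for the ballot injection -/
noncomputable def prevCell (p : ℕ × ℕ) : ℕ × ℕ :=
  if isUp L p.2 ∧ p.1 = jr L p.2 then (L.colLen (mate L p.2) - 1, mate L p.2)
  else (p.1 - 1, p.2)

lemma prev_spec (hL : Even L.card) {i j k : ℕ} (hT : Tf L i j = k + 2) :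
    Tf L (prevCell L (i, j)).1 (prevCell L (i, j)).2 = k + 1 ∧ (prevCell L (i, j)).1 < i := by
  have hne : Tf L i j ≠ 0 := by omega
  have hs := (skew_iff L).mp ((Tf_ne_zero_iff L).mp hne)
  have hm : (i, j) ∈ L := YoungDiagram.mem_iff_lt_colLen.2 hs.2
  have hTval : Tf L i j = i - mucol L j + 1 + (if isUp L j ∧ jr L j ≤ i then 1 else 0) := by
    unfold Tf; rw [if_pos (show (i, j) ∈ L ∧ mucol L j ≤ i from ⟨hm, hs.1⟩)]
  rw [hTval] at hT
  have hpc : prevCell L (i, j) = if isUp L j ∧ i = jr L j then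
      (L.colLen (mate L j) - 1, mate L j) else (i - 1, j) := rfl
  by_cases hc : isUp L j ∧ i = jr L j
  · rw [hpc, if_pos hc]
    obtain ⟨hup, hijr⟩ := hc
    have hmsp := mate_spec_up L hL hup
    have hdn := mate_up_down L hL hup
    have hoj := Nat.odd_iff.mp hup.1
    have hom := Nat.odd_iff.mp hmsp.1
    have hml := hh_mate_le L hL hup
    have hmuj : mucol L j = L.colLen j / 2 + 1 := if_pos hup
    have hmum : mucol L (mate L j) = L.colLen (mate L j) / 2 := if_neg hdn
    have hjr : jr L j = mucol L j + L.colLen (mate L j) / 2 := rfl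
    rw [if_pos (show isUp L j ∧ jr L j ≤ i from ⟨hup, by omega⟩)] at hT
    have hmem2 : (L.colLen (mate L j) - 1, mate L j) ∈ L :=
      YoungDiagram.mem_iff_lt_colLen.2 (by omega)
    constructor
    · show Tf L (L.colLen (mate L j) - 1) (mate L j) = k + 1
      unfold Tf
      rw [if_pos (show (L.colLen (mate L j) - 1, mate L j) ∈ L ∧
          mucol L (mate L j) ≤ L.colLen (mate L j) - 1 from ⟨hmem2, by omega⟩)]
      rw [if_neg (fun hh => hdn hh.1)]
      omega
    · show L.colLen (mate L j) - 1 < i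
      omega
  · rw [hpc, if_neg hc]
    have hig : mucol L j < i := by
      rcases Nat.lt_or_ge (mucol L j) i with hlt | hge
      · exact hlt
      · exfalso
        have hieq : i = mucol L j := le_antisymm hge hs.1
        by_cases hb : isUp L j ∧ jr L j ≤ i
        · refine hc ⟨hb.1, ?_⟩
          have : jr L j = mucol L j + L.colLen (mate L j) / 2 := rfl
          omega
        · rw [if_neg hb] at hT
          omega
    have hm2 : (i - 1, j) ∈ L := YoungDiagram.mem_iff_lt_colLen.2 (by omega)
    refine ⟨?_, by omega⟩
    show Tf L (i - 1) j = k + 1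
    unfold Tf
    rw [if_pos (show (i - 1, j) ∈ L ∧ mucol L j ≤ i - 1 from ⟨hm2, by omega⟩)]
    by_cases hb : isUp L j ∧ jr L j ≤ i
    · have hlt : jr L j < i := lt_of_le_of_ne hb.2 (fun hh => hc ⟨hb.1, hh.symm⟩)
      rw [if_pos (show isUp L j ∧ jr L j ≤ i - 1 from ⟨hb.1, by omega⟩)]
      rw [if_pos hb] at hT
      omega
    · rw [if_neg hb] at hT
      rw [if_neg (show ¬ (isUp L j ∧ jr L j ≤ i - 1) from fun hh => hb ⟨hh.1, by omega⟩)]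
      omega

lemma prev_inj (hL : Even L.card) {p q : ℕ × ℕ} {k : ℕ}
    (hp : Tf L p.1 p.2 = k + 2) (hq : Tf L q.1 q.2 = k + 2)
    (he : prevCell L p = prevCell L q) : p = q := by
  obtain ⟨i, j⟩ := p
  obtain ⟨i', j'⟩ := q
  have hnep : Tf L i j ≠ 0 := by simp only at hp; omega
  have hneq : Tf L i' j' ≠ 0 := by simp only at hq; omega
  have hsp := (skew_iff L).mp ((Tf_ne_zero_iff L).mp hnep)
  have hsq := (skew_iff L).mp ((Tf_ne_zero_iff L).mp hneq)
  have hpc : prevCell L (i, j) = if isUp L j ∧ i = jr L j then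
      (L.colLen (mate L j) - 1, mate L j) else (i - 1, j) := rfl
  have hqc : prevCell L (i', j') = if isUp L j' ∧ i' = jr L j' then
      (L.colLen (mate L j') - 1, mate L j') else (i' - 1, j') := rfl
  -- i ≥ 1 in the non-jump case
  have hig : ∀ (a b : ℕ), Tf L a b = k + 2 → ¬ (isUp L b ∧ a = jr L b) → mucol L b < a := by
    intro a b hT hc
    have hne : Tf L a b ≠ 0 := by omega
    have hs := (skew_iff L).mp ((Tf_ne_zero_iff L).mp hne)
    have hm : (a, b) ∈ L := YoungDiagram.mem_iff_lt_colLen.2 hs.2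
    have hTval : Tf L a b = a - mucol L b + 1 + (if isUp L b ∧ jr L b ≤ a then 1 else 0) := by
      unfold Tf; rw [if_pos (show (a, b) ∈ L ∧ mucol L b ≤ a from ⟨hm, hs.1⟩)]
    rw [hTval] at hT
    rcases Nat.lt_or_ge (mucol L b) a with hlt | hge
    · exact hlt
    · exfalso
      have hieq : a = mucol L b := le_antisymm hge hs.1
      by_cases hb : isUp L b ∧ jr L b ≤ a
      · refine hc ⟨hb.1, ?_⟩
        have : jr L b = mucol L b + L.colLen (mate L b) / 2 := rfl
        omega
      · rw [if_neg hb] at hT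
        omega
  by_cases hc1 : isUp L j ∧ i = jr L j <;> by_cases hc2 : isUp L j' ∧ i' = jr L j'
  · rw [hpc, if_pos hc1, hqc, if_pos hc2] at he
    have h2 : mate L j = mate L j' := congrArg Prod.snd he
    have hj : j = j' := by
      have e1 := mate_invol_up L hL hc1.1
      have e2 := mate_invol_up L hL hc2.1
      rw [← e1, ← e2, h2]
    subst hj
    have : i = i' := by rw [hc1.2, hc2.2]
    rw [this]
  · rw [hpc, if_pos hc1, hqc, if_neg hc2] at he
    exfalso
    have h2 : mate L j = j' := congrArg Prod.snd he
    have h1 : L.colLen (mate L j) - 1 = i' - 1 := congrArg Prod.fst he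
    have hgt := hig i' j' hq hc2
    rw [h2] at h1
    have hom := Nat.odd_iff.mp (mate_spec_up L hL hc1.1).1
    omega
  · rw [hpc, if_neg hc1, hqc, if_pos hc2] at he
    exfalso
    have h2 : j = mate L j' := congrArg Prod.snd he
    have h1 : i - 1 = L.colLen (mate L j') - 1 := congrArg Prod.fst he
    have hgt := hig i j hp hc1
    rw [← h2] at h1
    have hom := Nat.odd_iff.mp (mate_spec_up L hL hc2.1).1
    omega
  · rw [hpc, if_neg hc1, hqc, if_neg hc2] at he
    have h2 : j = j' := congrArg Prod.snd he
    have h1 : i - 1 = i' - 1 := congrArg Prod.fst he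
    have hg1 := hig i j hp hc1
    have hg2 := hig i' j' hq hc2
    subst h2
    have : i = i' := by omega
    rw [this]

lemma ballot_le (hL : Even L.card) (i0 j0 k : ℕ) :
    Nat.card {p : ℕ × ℕ // (p.1 < i0 ∨ (p.1 = i0 ∧ j0 ≤ p.2)) ∧ Tf L p.1 p.2 = k + 2} ≤
      Nat.card {p : ℕ × ℕ // (p.1 < i0 ∨ (p.1 = i0 ∧ j0 ≤ p.2)) ∧ Tf L p.1 p.2 = k + 1} := by
  classical
  have hfin : ({p : ℕ × ℕ | (p.1 < i0 ∨ (p.1 = i0 ∧ j0 ≤ p.2)) ∧ Tf L p.1 p.2 = k + 1}).Finite := by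
    apply Set.Finite.subset L.cells.finite_toSet
    intro p hp
    have hne : Tf L p.1 p.2 ≠ 0 := by have := hp.2; omega
    have := ((Tf_ne_zero_iff L).mp hne).1
    simpa using this
  haveI : Finite {p : ℕ × ℕ // (p.1 < i0 ∨ (p.1 = i0 ∧ j0 ≤ p.2)) ∧ Tf L p.1 p.2 = k + 1} :=
    hfin.to_subtype
  refine Nat.card_le_card_of_injective
    (fun x => ⟨prevCell L x.1, ?_, ?_⟩) ?_
  · -- prefix preserved
    have hspec := prev_spec L hL (show Tf L (x.1.1, x.1.2).1 (x.1.1, x.1.2).2 = k + 2 by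
      simpa using x.2.2)
    have hlt : (prevCell L x.1).1 < x.1.1 := by simpa using hspec.2
    rcases x.2.1 with hlt' | ⟨heq, _⟩
    · exact Or.inl (lt_trans hlt hlt')
    · exact Or.inl (by omega)
  · have hspec := prev_spec L hL (show Tf L (x.1.1, x.1.2).1 (x.1.1, x.1.2).2 = k + 2 by
      simpa using x.2.2)
    simpa using hspec.1
  · intro x y hxy
    have he : prevCell L x.1 = prevCell L y.1 := congrArg Subtype.val hxy
    exact Subtype.ext (prev_inj L hL x.2.2 y.2.2 he)

lemma card_eq_sum_rowLens' (d : YoungDiagram) {M : ℕ} (hM : d.colLen 0 ≤ M) :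
    d.card = ∑ k ∈ Finset.range M, d.rowLen k := by
  have := Finset.card_eq_sum_card_fiberwise (f := fun p : ℕ × ℕ => p.1)
    (s := d.cells) (t := Finset.range M) ?_
  · rw [YoungDiagram.card, this]
    refine Finset.sum_congr rfl (fun k _ => ?_)
    rw [d.rowLen_eq_card]
    rfl
  · intro p hp
    simp only [Finset.mem_coe, Finset.mem_range] at hp ⊢
    have hp' : (p.1, 0) ∈ d := d.up_left_mem (le_refl _) (Nat.zero_le _) (by
      rw [YoungDiagram.mem_cells] at hp; exact (show ((p.1, p.2) : ℕ × ℕ) ∈ d by simpa using hp))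
    have h2 := YoungDiagram.mem_iff_lt_colLen.mp hp'
    show p.1 < M
    omega

noncomputable def filling (hL : Even L.card) : LRFilling (mu L) (mu L) L where
  sub := mu_le L
  T := Tf L
  supp := fun _ _ => Tf_ne_zero_iff L
  rows_weak := by
    intro i j1 j2 hle h1 h2
    obtain ⟨d, rfl⟩ := Nat.exists_eq_add_of_le hle
    exact rows_weak_gen L hL d i j1 h1 h2
  cols_strict := fun _ _ _ h h1 h2 => cols_strict_lemma L h h1 h2
  content := content_eq L hL
  ballot := ballot_le L hL

end NLaux

namespace NLfwd

lemma value_sets_finite {α β D : YoungDiagram} (F : LRFilling α β D) (k : ℕ) :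
    ({p : ℕ × ℕ | F.T p.1 p.2 = k + 1}).Finite := by
  apply Set.Finite.subset D.cells.finite_toSet
  intro p hp
  have hne : F.T p.1 p.2 ≠ 0 := by
    have := hp
    simp only [Set.mem_setOf_eq] at this
    omega
  have := ((F.supp p.1 p.2).mp hne).1
  simpa using this

lemma card_add {α β D : YoungDiagram} (F : LRFilling α β D) :
    D.card = α.card + β.card := by
  classical
  have hsub : α.cells ⊆ D.cells := YoungDiagram.cells_subset_iff.mpr F.sub
  set S : Finset (ℕ × ℕ) := D.cells \ α.cells with hS
  have hScard : S.card = D.card - α.card := Finset.card_sdiff_of_subset hsub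
  have hle : α.card ≤ D.card := Finset.card_le_card hsub
  set M := β.colLen 0 with hM
  have hmemS : ∀ p : ℕ × ℕ, p ∈ S ↔ F.T p.1 p.2 ≠ 0 := by
    intro p
    rw [F.supp p.1 p.2]
    simp only [hS, Finset.mem_sdiff, YoungDiagram.mem_cells]
  have hbound : ∀ p ∈ S, F.T p.1 p.2 - 1 < M := by
    intro p hp
    have hne := (hmemS p).mp hp
    set k := F.T p.1 p.2 - 1 with hk
    have hkk : F.T p.1 p.2 = k + 1 := by omega
    have hcont := F.content k
    have hfin := value_sets_finite F k
    haveI : Finite {q : ℕ × ℕ // F.T q.1 q.2 = k + 1} := hfin.to_subtype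
    have hpos : 0 < Nat.card {q : ℕ × ℕ // F.T q.1 q.2 = k + 1} :=
      Nat.card_pos_iff.mpr ⟨⟨⟨p, hkk⟩⟩, inferInstance⟩
    rw [hcont] at hpos
    have : (k, 0) ∈ β := by
      rw [YoungDiagram.mem_iff_lt_rowLen]
      omega
    exact YoungDiagram.mem_iff_lt_colLen.mp this
  have hfib := Finset.card_eq_sum_card_fiberwise (f := fun p : ℕ × ℕ => F.T p.1 p.2 - 1)
    (s := S) (t := Finset.range M) (fun p hp => Finset.mem_range.mpr (hbound p hp))
  have hfibval : ∀ k ∈ Finset.range M,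
      (S.filter (fun p => F.T p.1 p.2 - 1 = k)).card = β.rowLen k := by
    intro k _
    have hsetk : {p : ℕ × ℕ | F.T p.1 p.2 = k + 1}
        = ↑(S.filter (fun p => F.T p.1 p.2 - 1 = k)) := by
      ext p
      simp only [Set.mem_setOf_eq, Finset.coe_filter, Set.mem_setOf_eq, Finset.mem_coe]
      constructor
      · intro hT
        have hne : F.T p.1 p.2 ≠ 0 := by omega
        exact ⟨(hmemS p).mpr hne, by omega⟩
      · intro ⟨hp, hkeq⟩
        have hne := (hmemS p).mp hp
        omega
    have hNat : Nat.card {p : ℕ × ℕ // F.T p.1 p.2 = k + 1}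
        = (S.filter (fun p => F.T p.1 p.2 - 1 = k)).card := by
      rw [show (Nat.card {p : ℕ × ℕ // F.T p.1 p.2 = k + 1})
          = Nat.card ↥{p : ℕ × ℕ | F.T p.1 p.2 = k + 1} from rfl]
      rw [Nat.card_coe_set_eq, hsetk, Set.ncard_coe_finset]
    rw [← F.content k]
    exact hNat.symm
  have hsum : S.card = ∑ k ∈ Finset.range M, β.rowLen k := by
    rw [hfib]
    exact Finset.sum_congr rfl hfibval
  have hbcard := NLaux.card_eq_sum_rowLens' β (le_refl M)
  omega

lemma T_lt {α β D : YoungDiagram} (F : LRFilling α β D) (i j : ℕ) :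
    F.T i j < D.card + 1 := by
  rcases Nat.eq_zero_or_pos (F.T i j) with h | h
  · omega
  · set k := F.T i j - 1 with hk
    have hkk : F.T i j = k + 1 := by omega
    have hcont := F.content k
    have hfin := value_sets_finite F k
    haveI : Finite {q : ℕ × ℕ // F.T q.1 q.2 = k + 1} := hfin.to_subtype
    have hpos : 0 < Nat.card {q : ℕ × ℕ // F.T q.1 q.2 = k + 1} :=
      Nat.card_pos_iff.mpr ⟨⟨⟨(i, j), hkk⟩⟩, inferInstance⟩
    rw [hcont] at hpos
    have hmem : (k, 0) ∈ β := by
      rw [YoungDiagram.mem_iff_lt_rowLen]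
      omega
    have h1 : k < β.colLen 0 := YoungDiagram.mem_iff_lt_colLen.mp hmem
    have h2 : β.colLen 0 ≤ β.card := by
      rw [β.colLen_eq_card]
      exact Finset.card_le_card (Finset.filter_subset _ _)
    have h3 : β.card ≤ D.card := by
      have := card_add F
      omega
    omega

lemma ext_filling {α β D : YoungDiagram} {F G : LRFilling α β D} (h : F.T = G.T) : F = G := by
  cases F
  cases G
  cases h
  rfl

lemma yd_ext {a b : YoungDiagram} (h : a.cells = b.cells) : a = b := by
  cases a
  cases b
  simpa using h

lemma yd_ext_rowLen {a b : YoungDiagram} (h : ∀ k, a.rowLen k = b.rowLen k) : a = b := by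
  apply yd_ext
  ext ⟨i, j⟩
  rw [YoungDiagram.mem_cells, YoungDiagram.mem_cells, YoungDiagram.mem_iff_lt_rowLen,
    YoungDiagram.mem_iff_lt_rowLen, h i]

lemma T_eq_of_restrict {α β α' β' D : YoungDiagram} (F : LRFilling α β D) (G : LRFilling α' β' D)
    (h : ∀ p : ℕ × ℕ, p ∈ D.cells → F.T p.1 p.2 = G.T p.1 p.2) : F.T = G.T := by
  funext i j
  by_cases hm : ((i, j) : ℕ × ℕ) ∈ D.cells
  · exact h (i, j) hm
  · have h1 : F.T i j = 0 := by
      by_contra hc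
      exact hm (by simpa using ((F.supp i j).mp hc).1)
    have h2 : G.T i j = 0 := by
      by_contra hc
      exact hm (by simpa using ((G.supp i j).mp hc).1)
    rw [h1, h2]

abbrev Code (D : YoungDiagram) :=
  (↥(D.cells.powerset) × ↥(D.cells.powerset)) ×
    ((↥D.cells → Fin (D.card + 1)) × (↥D.cells → Fin (D.card + 1)) × (↥D.cells → Fin (D.card + 1)))

noncomputable def encode (D : YoungDiagram)
    (x : Σ α β γ : YoungDiagram, (LRFilling α β D × LRFilling α γ D × LRFilling β γ D)) :
    Code D :=
  ⟨⟨⟨x.1.cells, Finset.mem_powerset.mpr (YoungDiagram.cells_subset_iff.mpr x.2.2.2.1.sub)⟩,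
    ⟨x.2.1.cells, Finset.mem_powerset.mpr (YoungDiagram.cells_subset_iff.mpr x.2.2.2.2.2.sub)⟩⟩,
   ⟨fun c => ⟨x.2.2.2.1.T c.1.1 c.1.2, T_lt _ _ _⟩,
    fun c => ⟨x.2.2.2.2.1.T c.1.1 c.1.2, T_lt _ _ _⟩,
    fun c => ⟨x.2.2.2.2.2.T c.1.1 c.1.2, T_lt _ _ _⟩⟩⟩

lemma finite_sigma (D : YoungDiagram) :
    Finite (Σ α β γ : YoungDiagram, (LRFilling α β D × LRFilling α γ D × LRFilling β γ D)) := by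
  classical
  apply Finite.of_injective (encode D)
  rintro ⟨a, b, c, F1, F2, F3⟩ ⟨a', b', c', F1', F2', F3'⟩ h
  simp only [encode, Prod.mk.injEq, Subtype.mk.injEq] at h
  obtain ⟨⟨ha, hb⟩, hf1, hf2, hf3⟩ := h
  obtain rfl : a = a' := yd_ext ha
  obtain rfl : b = b' := yd_ext hb
  have hT2 : F2.T = F2'.T := T_eq_of_restrict F2 F2' (fun p hp =>
    congrArg Fin.val (congrFun hf2 ⟨p, hp⟩))
  obtain rfl : c = c' := by
    apply yd_ext_rowLen
    intro k
    rw [← F2.content k, ← F2'.content k, hT2]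
  have e1 : F1 = F1' := ext_filling (T_eq_of_restrict F1 F1' (fun p hp =>
    congrArg Fin.val (congrFun hf1 ⟨p, hp⟩)))
  have e2 : F2 = F2' := ext_filling hT2
  have e3 : F3 = F3' := ext_filling (T_eq_of_restrict F3 F3' (fun p hp =>
    congrArg Fin.val (congrFun hf3 ⟨p, hp⟩)))
  rw [e1, e2, e3]

end NLfwd

end

/-- `N_{lam,lam,lam} > 0` if and only if `|lam|` is even. -/
theorem NL_diag_pos_iff (lam : YoungDiagram) : 0 < NL lam lam lam ↔ Even lam.card := by
  constructor
  · intro hpos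
    have hne := (Nat.card_pos_iff.mp hpos).1
    obtain ⟨⟨α, β, γ, F1, F2, F3⟩⟩ := hne
    have e1 := NLfwd.card_add F1
    have e2 := NLfwd.card_add F2
    have e3 := NLfwd.card_add F3
    exact ⟨β.card, by omega⟩
  · intro hL
    rw [NL, Nat.card_pos_iff]
    refine ⟨⟨⟨NLaux.mu lam, NLaux.mu lam, NLaux.mu lam,
      NLaux.filling lam hL, NLaux.filling lam hL, NLaux.filling lam hL⟩⟩, NLfwd.finite_sigma lam⟩
end

section
/- The set NL_n = {(μ,ν,λ) in Par_n³ : N_{μ,ν,λ} > 0} is closed under componentwise addition of triples, i.e., it is a semigroup. In particular, if N_{μ,ν,λ} > 0 then N_{kμ,kν,kλ} > 0 for every positive integer k. -/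
open YoungDiagram

namespace NLaux

open Finset


lemma yd_ext_rowLen {μ ν : YoungDiagram} (h : ∀ i, μ.rowLen i = ν.rowLen i) : μ = ν := by
  ext ⟨i, j⟩
  simp only [YoungDiagram.mem_cells, mem_iff_lt_rowLen, h]

lemma yd_le_iff_rowLen {μ ν : YoungDiagram} : μ ≤ ν ↔ ∀ i, μ.rowLen i ≤ ν.rowLen i := by
  constructor
  · intro h i
    by_contra hc
    push_neg at hc
    have : (i, ν.rowLen i) ∈ μ := mem_iff_lt_rowLen.2 hc
    have h2 := h this
    rw [mem_iff_lt_rowLen] at h2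
    omega
  · intro h p hp
    obtain ⟨i, j⟩ := p
    rw [mem_iff_lt_rowLen] at hp ⊢
    exact hp.trans_le (h i)

lemma rowLen_pos_iff {μ : YoungDiagram} {i : ℕ} : 0 < μ.rowLen i ↔ i < μ.colLen 0 := by
  rw [← mem_iff_lt_rowLen, mem_iff_lt_colLen]

/-- The row-wise sum of two Young diagrams. -/
def addYD (μ ν : YoungDiagram) : YoungDiagram where
  cells := (range (μ.colLen 0 + ν.colLen 0) ×ˢ range (μ.rowLen 0 + ν.rowLen 0)).filter
    (fun p => p.2 < μ.rowLen p.1 + ν.rowLen p.1)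
  isLowerSet := by
    rintro ⟨i, j⟩ ⟨i', j'⟩ ⟨hi, hj⟩ h
    simp only [Finset.coe_filter, Set.mem_setOf_eq, Finset.mem_product, Finset.mem_range] at h ⊢
    have h1 := μ.rowLen_anti i' i hi
    have h2 := ν.rowLen_anti i' i hi
    refine ⟨⟨?_, ?_⟩, by omega⟩
    · have : 0 < μ.rowLen i' + ν.rowLen i' := by omega
      rcases Nat.lt_or_ge 0 (μ.rowLen i') with hh | hh
      · have := rowLen_pos_iff.1 hh; omega
      · have : 0 < ν.rowLen i' := by omega
        have := rowLen_pos_iff.1 this; omega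
    · have := μ.rowLen_anti 0 i' (Nat.zero_le _)
      have := ν.rowLen_anti 0 i' (Nat.zero_le _)
      omega

lemma mem_addYD {μ ν : YoungDiagram} {i j : ℕ} :
    (i, j) ∈ addYD μ ν ↔ j < μ.rowLen i + ν.rowLen i := by
  show (i, j) ∈ YoungDiagram.cells _ ↔ _
  simp only [addYD, Finset.mem_filter, Finset.mem_product, Finset.mem_range]
  constructor
  · tauto
  · intro h
    refine ⟨⟨?_, ?_⟩, h⟩
    · rcases Nat.lt_or_ge 0 (μ.rowLen i) with hh | hh
      · have := rowLen_pos_iff.1 hh; omega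
      · have : 0 < ν.rowLen i := by omega
        have := rowLen_pos_iff.1 this; omega
    · have := μ.rowLen_anti 0 i (Nat.zero_le _)
      have := ν.rowLen_anti 0 i (Nat.zero_le _)
      omega

lemma rowLen_eq_of_forall {μ : YoungDiagram} {i m : ℕ} (h : ∀ j, (i, j) ∈ μ ↔ j < m) :
    μ.rowLen i = m := by
  have h1 : ¬ (m < μ.rowLen i) := fun hc => by
    have := (h m).1 (mem_iff_lt_rowLen.2 hc); omega
  have h2 : ¬ (μ.rowLen i < m) := fun hc => by
    have := mem_iff_lt_rowLen.1 ((h (μ.rowLen i)).2 hc); omega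
  omega

lemma rowLen_addYD (μ ν : YoungDiagram) (i : ℕ) :
    (addYD μ ν).rowLen i = μ.rowLen i + ν.rowLen i :=
  rowLen_eq_of_forall fun _ => mem_addYD


lemma natCard_eq_filter_card {R C : ℕ} (P : ℕ × ℕ → Prop) [DecidablePred P]
    (hP : ∀ p, P p → p.1 < R ∧ p.2 < C) :
    Nat.card {p : ℕ × ℕ // P p} = ((range R ×ˢ range C).filter P).card := by
  have hset : {p : ℕ × ℕ | P p} = ↑((range R ×ˢ range C).filter P) := by
    ext p
    simp only [Set.mem_setOf_eq, coe_filter, Set.mem_setOf_eq, mem_product, mem_range]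
    exact ⟨fun h => ⟨hP p h, h⟩, fun h => h.2⟩
  have : Nat.card {p : ℕ × ℕ // P p} = Nat.card {p : ℕ × ℕ | P p} := rfl
  rw [this, Nat.card_coe_set_eq, hset, Set.ncard_coe_finset]

lemma card_filter_prod {R C : ℕ} (P : ℕ × ℕ → Prop) [DecidablePred P] :
    ((range R ×ˢ range C).filter P).card
      = ∑ r ∈ range R, ((range C).filter (fun c => P (r, c))).card := by
  rw [Finset.card_eq_sum_card_fiberwise
    (f := Prod.fst) (t := range R)
    (fun p hp => by simp only [Finset.mem_coe, mem_filter, mem_product, mem_range] at hp; simpa using hp.1.1)]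
  refine Finset.sum_congr rfl fun r hr => ?_
  refine Finset.card_bij' (fun p _ => p.2) (fun c _ => (r, c)) ?_ ?_ ?_ ?_
  · rintro ⟨x, y⟩ hp
    simp only [mem_filter, mem_product, mem_range] at hp ⊢
    obtain ⟨⟨⟨_, h2⟩, h3⟩, h4⟩ := hp
    subst h4
    exact ⟨h2, h3⟩
  · intro c hc
    simp only [mem_filter, mem_product, mem_range] at hc ⊢
    exact ⟨⟨⟨by simpa using hr, hc.1⟩, hc.2⟩, trivial⟩
  · rintro ⟨x, y⟩ hp
    simp only [mem_filter] at hp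
    obtain ⟨-, h4⟩ := hp
    subst h4
    rfl
  · intro c hc
    rfl

lemma card_filter_prod' {R C : ℕ} (P : ℕ × ℕ → Prop) (Q : ℕ → ℕ → Prop)
    [DecidablePred P] [∀ r, DecidablePred (Q r)] (hPQ : ∀ r c, P (r, c) ↔ Q r c) :
    ((range R ×ˢ range C).filter P).card
      = ∑ r ∈ range R, ((range C).filter (Q r)).card := by
  rw [card_filter_prod]
  refine Finset.sum_congr rfl fun r _ => ?_
  congr 1
  ext c
  simp only [mem_filter, hPQ]



lemma colLen_le_of_le {μ ν : YoungDiagram} (h : μ ≤ ν) (j : ℕ) : μ.colLen j ≤ ν.colLen j := by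
  by_contra hc
  push_neg at hc
  have h1 : (ν.colLen j, j) ∈ μ := mem_iff_lt_colLen.2 hc
  have h2 := h h1
  rw [mem_iff_lt_colLen] at h2
  omega

lemma sum_range_ext {f : ℕ → ℕ} {K K' : ℕ} (h : K ≤ K') (h0 : ∀ v, K ≤ v → f v = 0) :
    ∑ v ∈ range K', f v = ∑ v ∈ range K, f v := by
  rw [← Finset.sum_subset (Finset.range_subset_range.2 h)]
  intro x hx hx'
  exact h0 x (by simpa using hx')

/-- Linear-inequality ("Gelfand–Tsetlin / hive") data equivalent to an LR filling.
`m i v` = number of entries equal to `v+1` in row `i`. -/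
structure LRCounts (α β μ : YoungDiagram) (m : ℕ → ℕ → ℕ) : Prop where
  sub : α ≤ μ
  big : ∀ i v, β.colLen 0 ≤ v → m i v = 0
  shape : ∀ i, α.rowLen i + ∑ v ∈ range (β.colLen 0), m i v = μ.rowLen i
  col : ∀ i k, α.rowLen (i+1) + ∑ v ∈ range (k+1), m (i+1) v
      ≤ α.rowLen i + ∑ v ∈ range k, m i v
  ballot : ∀ i k, ∑ r ∈ range (i+1), m r (k+1) ≤ ∑ r ∈ range i, m r k
  content : ∀ k, ∑ i ∈ range (μ.colLen 0), m i k = β.rowLen k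

namespace LRCounts

variable {α β μ : YoungDiagram} {m : ℕ → ℕ → ℕ}

lemma row_vanish (h : LRCounts α β μ m) {i : ℕ} (hi : μ.colLen 0 ≤ i) (v : ℕ) : m i v = 0 := by
  rcases Nat.lt_or_ge v (β.colLen 0) with hv | hv
  · have hs := h.shape i
    have hb : μ.rowLen i = 0 := by
      by_contra hc
      have := rowLen_pos_iff.1 (Nat.pos_of_ne_zero hc)
      omega
    have : ∑ w ∈ range (β.colLen 0), m i w = 0 := by omega
    rw [Finset.sum_eq_zero_iff] at this
    exact this v (by simpa using hv)
  · exact h.big i v hv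

lemma content_ext (h : LRCounts α β μ m) {R : ℕ} (hR : μ.colLen 0 ≤ R) (k : ℕ) :
    ∑ i ∈ range R, m i k = β.rowLen k := by
  rw [sum_range_ext hR (fun i hi => h.row_vanish hi k), h.content k]

lemma shape_ext (h : LRCounts α β μ m) {K : ℕ} (hK : β.colLen 0 ≤ K) (i : ℕ) :
    α.rowLen i + ∑ v ∈ range K, m i v = μ.rowLen i := by
  rw [sum_range_ext hK (fun v hv => h.big i v hv), h.shape i]

lemma add {α' β' μ' α'' β'' μ'' : YoungDiagram} {m' : ℕ → ℕ → ℕ}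
    (h : LRCounts α β μ m) (h' : LRCounts α' β' μ' m')
    (hα : ∀ i, α''.rowLen i = α.rowLen i + α'.rowLen i)
    (hβ : ∀ i, β''.rowLen i = β.rowLen i + β'.rowLen i)
    (hμ : ∀ i, μ''.rowLen i = μ.rowLen i + μ'.rowLen i) :
    LRCounts α'' β'' μ'' (fun i v => m i v + m' i v) := by
  have hβle : β ≤ β'' := yd_le_iff_rowLen.2 fun i => by rw [hβ]; omega
  have hβle' : β' ≤ β'' := yd_le_iff_rowLen.2 fun i => by rw [hβ]; omega
  have hμle : μ ≤ μ'' := yd_le_iff_rowLen.2 fun i => by rw [hμ]; omega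
  have hμle' : μ' ≤ μ'' := yd_le_iff_rowLen.2 fun i => by rw [hμ]; omega
  have hK : β.colLen 0 ≤ β''.colLen 0 := colLen_le_of_le hβle 0
  have hK' : β'.colLen 0 ≤ β''.colLen 0 := colLen_le_of_le hβle' 0
  have hR : μ.colLen 0 ≤ μ''.colLen 0 := colLen_le_of_le hμle 0
  have hR' : μ'.colLen 0 ≤ μ''.colLen 0 := colLen_le_of_le hμle' 0
  constructor
  · refine yd_le_iff_rowLen.2 fun i => ?_
    have := yd_le_iff_rowLen.1 h.sub i
    have := yd_le_iff_rowLen.1 h'.sub i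
    rw [hα, hμ]; omega
  · intro i v hv
    rw [h.big i v (hK.trans hv), h'.big i v (hK'.trans hv)]
  · intro i
    rw [Finset.sum_add_distrib, hα, hμ,
      sum_range_ext hK (fun v hv => h.big i v hv),
      sum_range_ext hK' (fun v hv => h'.big i v hv)]
    have := h.shape i
    have := h'.shape i
    omega
  · intro i k
    simp only [Finset.sum_add_distrib, hα]
    have := h.col i k
    have := h'.col i k
    omega
  · intro i k
    simp only [Finset.sum_add_distrib]
    have := h.ballot i k
    have := h'.ballot i k
    omega
  · intro k
    simp only [Finset.sum_add_distrib]
    rw [h.content_ext hR k, h'.content_ext hR' k, hβ]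

end LRCounts

section OfCounts

/-- Cumulative counts: number of entries of value `≤ k` in row `i`. -/
def Nc (m : ℕ → ℕ → ℕ) (i k : ℕ) : ℕ := ∑ v ∈ range k, m i v

lemma Nc_mono (m : ℕ → ℕ → ℕ) (i : ℕ) : Monotone (Nc m i) := fun _ _ hk =>
  Finset.sum_le_sum_of_subset (range_subset_range.2 hk)

variable {α β μ : YoungDiagram} {m : ℕ → ℕ → ℕ}

lemma Nc_le_top (h : LRCounts α β μ m) (i k : ℕ) : Nc m i k ≤ Nc m i (β.colLen 0) := by
  rcases le_total k (β.colLen 0) with hk | hk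
  · exact Nc_mono m i hk
  · exact le_of_eq (sum_range_ext hk (h.big i))

lemma Nc_shape (h : LRCounts α β μ m) (i : ℕ) :
    α.rowLen i + Nc m i (β.colLen 0) = μ.rowLen i := h.shape i

lemma Tof_ex (h : LRCounts α β μ m) {i j : ℕ} (hij : j < μ.rowLen i) :
    ∃ k, j < α.rowLen i + Nc m i (k + 1) := by
  refine ⟨β.colLen 0, ?_⟩
  have h1 := Nc_shape h i
  have h2 := Nc_mono m i (by omega : β.colLen 0 ≤ β.colLen 0 + 1)
  omega

/-- The filling associated to count data. -/
noncomputable def Tof (h : LRCounts α β μ m) (i j : ℕ) : ℕ :=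
  if hij : α.rowLen i ≤ j ∧ j < μ.rowLen i then Nat.find (Tof_ex h hij.2) + 1 else 0

lemma Tof_ne_iff (h : LRCounts α β μ m) (i j : ℕ) :
    Tof h i j ≠ 0 ↔ (α.rowLen i ≤ j ∧ j < μ.rowLen i) := by
  rw [Tof]; split <;> simp_all

lemma Tof_le_iff (h : LRCounts α β μ m) {i j : ℕ} (hij : α.rowLen i ≤ j ∧ j < μ.rowLen i)
    (k : ℕ) : Tof h i j ≤ k + 1 ↔ j < α.rowLen i + Nc m i (k + 1) := by
  rw [Tof, dif_pos hij, Nat.add_le_add_iff_right, Nat.find_le_iff]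
  constructor
  · rintro ⟨w, hw, hw2⟩
    exact lt_of_lt_of_le hw2 (by have := Nc_mono m i (Nat.add_le_add_right hw 1); omega)
  · intro hk
    exact ⟨k, le_refl k, hk⟩

lemma Tof_pos (h : LRCounts α β μ m) {i j : ℕ} (hij : α.rowLen i ≤ j ∧ j < μ.rowLen i) :
    1 ≤ Tof h i j := by
  have := (Tof_ne_iff h i j).2 hij; omega

lemma Tof_eq_iff (h : LRCounts α β μ m) (i j k : ℕ) :
    Tof h i j = k + 1 ↔
      (α.rowLen i + Nc m i k ≤ j ∧ j < α.rowLen i + Nc m i (k + 1)) := by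
  constructor
  · intro hv
    have hne : Tof h i j ≠ 0 := by omega
    have hij := (Tof_ne_iff h i j).1 hne
    have h2 : j < α.rowLen i + Nc m i (k + 1) := (Tof_le_iff h hij k).1 (le_of_eq hv)
    refine ⟨?_, h2⟩
    rcases Nat.eq_zero_or_pos k with rfl | hk
    · simpa [Nc] using hij.1
    · by_contra hc
      push_neg at hc
      have : Tof h i j ≤ (k - 1) + 1 := (Tof_le_iff h hij (k - 1)).2 (by
        have : k - 1 + 1 = k := by omega
        rw [this]; exact hc)
      omega
  · rintro ⟨h1, h2⟩
    have hij : α.rowLen i ≤ j ∧ j < μ.rowLen i := by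
      constructor
      · have : Nc m i k ≥ 0 := Nat.zero_le _
        omega
      · have := Nc_le_top h i (k + 1)
        have := Nc_shape h i
        omega
    have hle : Tof h i j ≤ k + 1 := (Tof_le_iff h hij k).2 h2
    have hgt : ¬ Tof h i j ≤ k := by
      rcases Nat.eq_zero_or_pos k with rfl | hk
      · have := Tof_pos h hij; omega
      · intro hc
        have : Tof h i j ≤ (k - 1) + 1 := by omega
        have := (Tof_le_iff h hij (k - 1)).1 this
        have hkk : k - 1 + 1 = k := by omega
        rw [hkk] at this
        omega
    omega

/-- Row `i` cells of value exactly `k+1` form the interval `[aᵢ + Nᵢ(k), aᵢ + Nᵢ(k+1))`. -/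
lemma Tof_row_filter (h : LRCounts α β μ m) (i k : ℕ) :
    ((range (μ.rowLen 0)).filter (fun j => Tof h i j = k + 1))
      = Finset.Ico (α.rowLen i + Nc m i k) (α.rowLen i + Nc m i (k + 1)) := by
  ext j
  simp only [mem_filter, mem_range, Finset.mem_Ico, Tof_eq_iff h i j k]
  constructor
  · tauto
  · intro hj
    refine ⟨?_, hj⟩
    have h2 := Nc_le_top h i (k + 1)
    have h3 := Nc_shape h i
    have h4 := μ.rowLen_anti 0 i (Nat.zero_le i)
    omega

lemma Tof_row_card (h : LRCounts α β μ m) (i k : ℕ) :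
    ((range (μ.rowLen 0)).filter (fun j => Tof h i j = k + 1)).card = m i k := by
  rw [Tof_row_filter h i k, Nat.card_Ico]
  have : Nc m i (k + 1) = Nc m i k + m i k := Finset.sum_range_succ _ _
  omega

lemma Tof_bounds (h : LRCounts α β μ m) {i j v : ℕ} (hv : Tof h i j = v + 1) :
    i < μ.colLen 0 ∧ j < μ.rowLen 0 := by
  have hij := (Tof_ne_iff h i j).1 (by omega)
  have h4 := μ.rowLen_anti 0 i (Nat.zero_le i)
  have h5 : 0 < μ.rowLen i := by omega
  exact ⟨rowLen_pos_iff.1 h5, by omega⟩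

/-- `Nat.card` of the value-`v+1` region cut at row `i`, column `j`. -/
lemma Tof_region_card (h : LRCounts α β μ m) (i j v : ℕ) :
    Nat.card {p : ℕ × ℕ // (p.1 < i ∨ (p.1 = i ∧ j ≤ p.2)) ∧ Tof h p.1 p.2 = v + 1}
      = ∑ r ∈ range (i + 1),
          ((range (μ.rowLen 0)).filter
            (fun c => (r < i ∨ (r = i ∧ j ≤ c)) ∧ Tof h r c = v + 1)).card := by
  set R := max (μ.colLen 0) (i + 1) with hR
  rw [natCard_eq_filter_card _ (fun p hp => ⟨lt_of_lt_of_le (Tof_bounds h hp.2).1 (le_max_left _ _),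
    (Tof_bounds h hp.2).2⟩),
    card_filter_prod' _ (fun r c => (r < i ∨ (r = i ∧ j ≤ c)) ∧ Tof h r c = v + 1)
      (fun r c => Iff.rfl)]
  rw [sum_range_ext (K := i + 1) (le_max_right _ _) (fun r hr => by
    rw [Finset.card_eq_zero, Finset.filter_eq_empty_iff]
    intro c _
    rintro ⟨h1 | ⟨rfl, _⟩, _⟩ <;> omega)]

lemma Tof_region_le (h : LRCounts α β μ m) (i j v : ℕ) :
    Nat.card {p : ℕ × ℕ // (p.1 < i ∨ (p.1 = i ∧ j ≤ p.2)) ∧ Tof h p.1 p.2 = v + 1}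
      ≤ ∑ r ∈ range (i + 1), m r v := by
  rw [Tof_region_card h i j v]
  refine Finset.sum_le_sum fun r _ => ?_
  calc ((range (μ.rowLen 0)).filter
          (fun c => (r < i ∨ (r = i ∧ j ≤ c)) ∧ Tof h r c = v + 1)).card
      ≤ ((range (μ.rowLen 0)).filter (fun c => Tof h r c = v + 1)).card := by
        apply Finset.card_le_card
        intro c hc
        simp only [mem_filter] at hc ⊢
        exact ⟨hc.1, hc.2.2⟩
    _ = m r v := Tof_row_card h r v

lemma Tof_region_ge (h : LRCounts α β μ m) (i j v : ℕ) :
    ∑ r ∈ range i, m r v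
      ≤ Nat.card {p : ℕ × ℕ // (p.1 < i ∨ (p.1 = i ∧ j ≤ p.2)) ∧ Tof h p.1 p.2 = v + 1} := by
  rw [Tof_region_card h i j v]
  calc ∑ r ∈ range i, m r v
      = ∑ r ∈ range i, ((range (μ.rowLen 0)).filter
          (fun c => (r < i ∨ (r = i ∧ j ≤ c)) ∧ Tof h r c = v + 1)).card := by
        refine Finset.sum_congr rfl fun r hr => ?_
        rw [mem_range] at hr
        rw [← Tof_row_card h r v]
        congr 1
        ext c
        simp only [mem_filter, mem_range]
        constructor
        · rintro ⟨h1, h2⟩; exact ⟨h1, Or.inl hr, h2⟩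
        · rintro ⟨h1, _, h2⟩; exact ⟨h1, h2⟩
    _ ≤ _ := Finset.sum_le_sum_of_subset (range_subset_range.2 (Nat.le_succ i))


lemma colN (h : LRCounts α β μ m) (i k : ℕ) :
    α.rowLen (i+1) + Nc m (i+1) (k+1) ≤ α.rowLen i + Nc m i k := h.col i k

lemma Tof_col_succ (h : LRCounts α β μ m) {i j : ℕ}
    (h1 : Tof h i j ≠ 0) (h2 : Tof h (i+1) j ≠ 0) : Tof h i j < Tof h (i+1) j := by
  have hij1 := (Tof_ne_iff h i j).1 h1
  have hij2 := (Tof_ne_iff h (i+1) j).1 h2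
  obtain ⟨v, hv⟩ : ∃ v, Tof h (i+1) j = v + 1 :=
    ⟨Tof h (i+1) j - 1, by have := Tof_pos h hij2; omega⟩
  have he := (Tof_eq_iff h (i+1) j v).1 hv
  have hcol := colN h i v
  rcases Nat.eq_zero_or_pos v with rfl | hvpos
  · exfalso
    have : Nc m i 0 = 0 := by simp [Nc]
    omega
  · have : Tof h i j ≤ (v-1) + 1 := (Tof_le_iff h hij1 (v-1)).2 (by
      have hvv : v - 1 + 1 = v := by omega
      rw [hvv]; omega)
    omega

lemma Tof_col_strict (h : LRCounts α β μ m) :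
    ∀ d i j, Tof h i j ≠ 0 → Tof h (i + d + 1) j ≠ 0 → Tof h i j < Tof h (i + d + 1) j := by
  intro d
  induction d with
  | zero => exact fun i j h1 h2 => Tof_col_succ h h1 h2
  | succ d ih =>
    intro i j h1 h2
    show Tof h i j < Tof h (i + d + 1 + 1) j
    replace h2 : Tof h (i + d + 1 + 1) j ≠ 0 := h2
    have hmid : Tof h (i + d + 1) j ≠ 0 := by
      rw [Tof_ne_iff]
      have hij1 := (Tof_ne_iff h i j).1 h1
      have hij2 := (Tof_ne_iff h (i + d + 1 + 1) j).1 h2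
      have ha := α.rowLen_anti i (i + d + 1) (by omega)
      have hb := μ.rowLen_anti (i + d + 1) (i + d + 1 + 1) (by omega)
      omega
    have g1 := ih i j h1 hmid
    have g2 := Tof_col_succ h hmid h2
    omega

/-- A filling built from count data. -/
noncomputable def ofCounts (h : LRCounts α β μ m) : LRFilling α β μ where
  sub := h.sub
  T := Tof h
  supp := fun i j => by
    rw [Tof_ne_iff h i j, mem_iff_lt_rowLen, mem_iff_lt_rowLen]
    omega
  rows_weak := fun i j₁ j₂ hj h1 h2 => by
    have hij2 := (Tof_ne_iff h i j₂).1 h2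
    have hij1 := (Tof_ne_iff h i j₁).1 h1
    obtain ⟨v, hv⟩ : ∃ v, Tof h i j₂ = v + 1 :=
      ⟨Tof h i j₂ - 1, by have := Tof_pos h hij2; omega⟩
    have he := (Tof_eq_iff h i j₂ v).1 hv
    have := (Tof_le_iff h hij1 v).2 (by omega)
    omega
  cols_strict := fun i₁ i₂ j hlt h1 h2 => by
    obtain ⟨d, rfl⟩ : ∃ d, i₂ = i₁ + d + 1 := ⟨i₂ - i₁ - 1, by omega⟩
    exact Tof_col_strict h d i₁ j h1 h2
  content := fun k => by
    rw [natCard_eq_filter_card (R := μ.colLen 0) (C := μ.rowLen 0) _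
      (fun p hp => Tof_bounds h hp),
      card_filter_prod' _ (fun r c => Tof h r c = k + 1) (fun r c => Iff.rfl)]
    rw [Finset.sum_congr rfl fun r _ => Tof_row_card h r k]
    exact h.content k
  ballot := fun i j k => by
    calc Nat.card {p : ℕ × ℕ // (p.1 < i ∨ (p.1 = i ∧ j ≤ p.2)) ∧ Tof h p.1 p.2 = k + 2}
        ≤ ∑ r ∈ range (i+1), m r (k+1) := Tof_region_le h i j (k+1)
      _ ≤ ∑ r ∈ range i, m r k := h.ballot i k
      _ ≤ _ := Tof_region_ge h i j k

end OfCounts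

section ToCounts

lemma seg {S : Finset ℕ} {a : ℕ} (h1 : ∀ j ∈ S, a ≤ j)
    (h2 : ∀ j ∈ S, ∀ j', a ≤ j' → j' ≤ j → j' ∈ S) :
    S = Finset.Ico a (a + S.card) := by
  have key : ∀ j, j ∈ S ↔ a ≤ j ∧ j < a + S.card := by
    intro j
    constructor
    · intro hj
      refine ⟨h1 j hj, ?_⟩
      have hsub : Finset.Icc a j ⊆ S := fun x hx => by
        rw [Finset.mem_Icc] at hx
        exact h2 j hj x hx.1 hx.2
      have := Finset.card_le_card hsub
      rw [Nat.card_Icc] at this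
      have := h1 j hj
      omega
    · rintro ⟨hja, hjc⟩
      by_contra hj
      have hsub : S ⊆ Finset.Ico a j := fun x hx => by
        rw [Finset.mem_Ico]
        refine ⟨h1 x hx, ?_⟩
        by_contra hc
        exact hj (h2 x hx j hja (by omega))
      have := Finset.card_le_card hsub
      rw [Nat.card_Ico] at this
      omega
  ext j
  rw [key, Finset.mem_Ico]

/-- Generic region-count over rows, for any tableau-like function with bounded support. -/
lemma region_card (T : ℕ → ℕ → ℕ) {R C : ℕ}
    (hb : ∀ i j, T i j ≠ 0 → i < R ∧ j < C) (i j v : ℕ) :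
    Nat.card {p : ℕ × ℕ // (p.1 < i ∨ (p.1 = i ∧ j ≤ p.2)) ∧ T p.1 p.2 = v + 1}
      = ∑ r ∈ range (i + 1),
          ((range C).filter (fun c => (r < i ∨ (r = i ∧ j ≤ c)) ∧ T r c = v + 1)).card := by
  rw [natCard_eq_filter_card (R := max R (i + 1)) (C := C) _
      (fun p hp => ⟨lt_of_lt_of_le (hb p.1 p.2 (by omega)).1 (le_max_left _ _),
        (hb p.1 p.2 (by omega)).2⟩),
    card_filter_prod' _ (fun r c => (r < i ∨ (r = i ∧ j ≤ c)) ∧ T r c = v + 1)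
      (fun r c => Iff.rfl)]
  rw [sum_range_ext (K := i + 1) (le_max_right _ _) (fun r hr => by
    rw [Finset.card_eq_zero, Finset.filter_eq_empty_iff]
    intro c _
    rintro ⟨h1 | ⟨rfl, _⟩, _⟩ <;> omega)]

variable {α β μ : YoungDiagram}

/-- The count data of an LR filling: `mOf F i v` = number of entries `v+1` in row `i`. -/
noncomputable def mOf (F : LRFilling α β μ) (i v : ℕ) : ℕ :=
  ((range (μ.rowLen 0)).filter (fun j => F.T i j = v + 1)).card

lemma T_bounds (F : LRFilling α β μ) {i j : ℕ} (h : F.T i j ≠ 0) :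
    α.rowLen i ≤ j ∧ j < μ.rowLen i ∧ i < μ.colLen 0 ∧ j < μ.rowLen 0 := by
  obtain ⟨h1, h2⟩ := (F.supp i j).1 h
  rw [mem_iff_lt_rowLen] at h1
  rw [mem_iff_lt_rowLen] at h2
  push_neg at h2
  have h3 : 0 < μ.rowLen i := by omega
  have h4 := μ.rowLen_anti 0 i (Nat.zero_le i)
  exact ⟨h2, h1, rowLen_pos_iff.1 h3, by omega⟩

lemma T_mem (F : LRFilling α β μ) {i j : ℕ} (h1 : α.rowLen i ≤ j) (h2 : j < μ.rowLen i) :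
    F.T i j ≠ 0 := by
  rw [F.supp i j, mem_iff_lt_rowLen, mem_iff_lt_rowLen]
  omega

lemma T_le_colLen (F : LRFilling α β μ) {i j : ℕ} (h : F.T i j ≠ 0) :
    F.T i j ≤ β.colLen 0 := by
  obtain ⟨v, hv⟩ : ∃ v, F.T i j = v + 1 := ⟨F.T i j - 1, by omega⟩
  have hc := F.content v
  have hb2 : ∀ p : ℕ × ℕ, F.T p.1 p.2 = v + 1 → p.1 < μ.colLen 0 ∧ p.2 < μ.rowLen 0 := by
    intro p hp
    have h0 : F.T p.1 p.2 ≠ 0 := by omega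
    exact ⟨(T_bounds F h0).2.2.1, (T_bounds F h0).2.2.2⟩
  rw [natCard_eq_filter_card (R := μ.colLen 0) (C := μ.rowLen 0)
      (fun p => F.T p.1 p.2 = v + 1) hb2] at hc
  have hmem : (i, j) ∈ (range (μ.colLen 0) ×ˢ range (μ.rowLen 0)).filter
      (fun p => F.T p.1 p.2 = v + 1) := by
    simp only [mem_filter, mem_product, mem_range]
    exact ⟨⟨(T_bounds F h).2.2.1, (T_bounds F h).2.2.2⟩, hv⟩
  have hpos : 0 < β.rowLen v := by
    rw [← hc]
    exact Finset.card_pos.2 ⟨_, hmem⟩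
  have := rowLen_pos_iff.1 hpos
  omega

/-- Entries `≤ k` in row `i` (as a finset of columns). -/
noncomputable def Sk (F : LRFilling α β μ) (i k : ℕ) : Finset ℕ :=
  (range (μ.rowLen 0)).filter (fun j => F.T i j ≠ 0 ∧ F.T i j ≤ k)

lemma Sk_card (F : LRFilling α β μ) (i k : ℕ) :
    (Sk F i k).card = ∑ v ∈ range k, mOf F i v := by
  induction k with
  | zero =>
    rw [Finset.range_zero, Finset.sum_empty, Finset.card_eq_zero, Sk,
      Finset.filter_eq_empty_iff]
    intro j _
    omega
  | succ k ih =>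
    have hsplit : Sk F i (k + 1)
        = Sk F i k ∪ ((range (μ.rowLen 0)).filter (fun j => F.T i j = k + 1)) := by
      rw [Sk, Sk, ← Finset.filter_or]
      apply Finset.filter_congr
      intro j _
      omega
    rw [hsplit, Finset.card_union_of_disjoint, ih, Finset.sum_range_succ, mOf]
    rw [Finset.disjoint_left]
    intro x hx1 hx2
    simp only [Sk, mem_filter] at hx1 hx2
    omega
    
lemma Sk_eq_Ico (F : LRFilling α β μ) (i k : ℕ) :
    Sk F i k = Finset.Ico (α.rowLen i) (α.rowLen i + ∑ v ∈ range k, mOf F i v) := by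
  rw [← Sk_card F i k]
  apply seg
  · intro j hj
    rw [Sk, mem_filter] at hj
    exact (T_bounds F hj.2.1).1
  · intro j hj j' hj1 hj2
    rw [Sk, mem_filter] at hj ⊢
    have hjr := hj.1
    have hne := hj.2.1
    have hle := hj.2.2
    rw [mem_range] at hjr
    have hb := T_bounds F hne
    have hne' : F.T i j' ≠ 0 := T_mem F hj1 (by omega)
    exact ⟨by rw [mem_range]; omega, hne',
      le_trans (F.rows_weak i j' j hj2 hne' hne) hle⟩

lemma sub_rowLen (F : LRFilling α β μ) (i : ℕ) : α.rowLen i ≤ μ.rowLen i :=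
  yd_le_iff_rowLen.1 F.sub i

lemma Sk_full (F : LRFilling α β μ) (i : ℕ) :
    α.rowLen i + ∑ v ∈ range (β.colLen 0), mOf F i v = μ.rowLen i := by
  have hfull : Sk F i (β.colLen 0) = Finset.Ico (α.rowLen i) (μ.rowLen i) := by
    rw [Sk]
    ext j
    simp only [mem_filter, mem_range, Finset.mem_Ico]
    constructor
    · rintro ⟨h1, h2, h3⟩
      exact ⟨(T_bounds F h2).1, (T_bounds F h2).2.1⟩
    · rintro ⟨h1, h2⟩
      have hne := T_mem F h1 h2
      have := μ.rowLen_anti 0 i (Nat.zero_le i)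
      exact ⟨by omega, hne, T_le_colLen F hne⟩
  have := congrArg Finset.card (Sk_eq_Ico F i (β.colLen 0))
  rw [hfull] at this
  rw [Nat.card_Ico, Nat.card_Ico] at this
  have h2 := sub_rowLen F i
  -- this : μ.rowLen i - a = (a + Σ) - a
  omega

lemma NF_le (F : LRFilling α β μ) (i k : ℕ) :
    α.rowLen i + ∑ v ∈ range k, mOf F i v ≤ μ.rowLen i := by
  rcases le_total k (β.colLen 0) with hk | hk
  · have hs : ∑ v ∈ range k, mOf F i v ≤ ∑ v ∈ range (β.colLen 0), mOf F i v :=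
      Finset.sum_le_sum_of_subset (range_subset_range.2 hk)
    have := Sk_full F i
    omega
  · have : ∑ v ∈ range k, mOf F i v = ∑ v ∈ range (β.colLen 0), mOf F i v := by
      apply sum_range_ext hk
      intro v hv
      rw [mOf, Finset.card_eq_zero, Finset.filter_eq_empty_iff]
      intro j _ hj
      have := T_le_colLen F (i := i) (j := j) (by omega)
      omega
    have := Sk_full F i
    omega

lemma P1 (F : LRFilling α β μ) (i j k : ℕ) :
    (F.T i j ≠ 0 ∧ F.T i j ≤ k)
      ↔ (α.rowLen i ≤ j ∧ j < α.rowLen i + ∑ v ∈ range k, mOf F i v) := by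
  rcases Nat.lt_or_ge j (μ.rowLen 0) with hj | hj
  · have hmem : F.T i j ≠ 0 ∧ F.T i j ≤ k ↔ j ∈ Sk F i k := by
      rw [Sk, mem_filter, mem_range]
      tauto
    rw [hmem, Sk_eq_Ico F i k, Finset.mem_Ico]
  · constructor
    · intro hc
      have := (T_bounds F hc.1).2.2.2
      omega
    · intro hc
      have h1 := NF_le F i k
      have h2 := μ.rowLen_anti 0 i (Nat.zero_le i)
      omega

lemma mOf_big (F : LRFilling α β μ) (i v : ℕ) (hv : β.colLen 0 ≤ v) : mOf F i v = 0 := by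
  rw [mOf, Finset.card_eq_zero, Finset.filter_eq_empty_iff]
  intro j _ hj
  have := T_le_colLen F (i := i) (j := j) (by omega)
  omega

lemma mOf_col (F : LRFilling α β μ) (i k : ℕ) :
    α.rowLen (i+1) + ∑ v ∈ range (k+1), mOf F (i+1) v
      ≤ α.rowLen i + ∑ v ∈ range k, mOf F i v := by
  set N1 := ∑ v ∈ range (k+1), mOf F (i+1) v with hN1
  rcases Nat.eq_zero_or_pos N1 with h0 | hpos
  · have := α.rowLen_anti i (i+1) (by omega)
    omega
  · set j := α.rowLen (i+1) + N1 - 1 with hj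
    have hP : F.T (i+1) j ≠ 0 ∧ F.T (i+1) j ≤ k + 1 :=
      (P1 F (i+1) j (k+1)).2 ⟨by omega, by omega⟩
    rcases Nat.lt_or_ge j (α.rowLen i) with hja | hja
    · have := α.rowLen_anti i (i+1) (by omega)
      omega
    · have hmem : F.T i j ≠ 0 := by
        rw [F.supp i j, mem_iff_lt_rowLen, mem_iff_lt_rowLen]
        have hb := T_bounds F hP.1
        have := μ.rowLen_anti i (i+1) (by omega)
        omega
      have hstrict := F.cols_strict i (i+1) j (by omega) hmem hP.1
      have := (P1 F i j k).1 ⟨hmem, by omega⟩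
      omega

lemma mOf_content (F : LRFilling α β μ) (k : ℕ) :
    ∑ i ∈ range (μ.colLen 0), mOf F i k = β.rowLen k := by
  have hc := F.content k
  have hb2 : ∀ p : ℕ × ℕ, F.T p.1 p.2 = k + 1 → p.1 < μ.colLen 0 ∧ p.2 < μ.rowLen 0 := by
    intro p hp
    have h0 : F.T p.1 p.2 ≠ 0 := by omega
    exact ⟨(T_bounds F h0).2.2.1, (T_bounds F h0).2.2.2⟩
  rw [natCard_eq_filter_card (R := μ.colLen 0) (C := μ.rowLen 0)
      (fun p => F.T p.1 p.2 = k + 1) hb2,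
    card_filter_prod' _ (fun r c => F.T r c = k + 1) (fun r c => Iff.rfl)] at hc
  exact hc

lemma mOf_ballot (F : LRFilling α β μ) (i k : ℕ) :
    ∑ r ∈ range (i+1), mOf F r (k+1) ≤ ∑ r ∈ range i, mOf F r k := by
  set j0 := α.rowLen i + ∑ v ∈ range (k+1), mOf F i v with hj0
  have hb := F.ballot i j0 k
  have hbound : ∀ r c, F.T r c ≠ 0 → r < μ.colLen 0 ∧ c < μ.rowLen 0 :=
    fun r c h => ⟨(T_bounds F h).2.2.1, (T_bounds F h).2.2.2⟩
  rw [region_card F.T hbound i j0 (k+1), region_card F.T hbound i j0 k] at hb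
  -- compute LHS of hb
  have hL : ∑ r ∈ range (i + 1),
      ((range (μ.rowLen 0)).filter (fun c => (r < i ∨ (r = i ∧ j0 ≤ c)) ∧ F.T r c = k + 2)).card
      = ∑ r ∈ range (i+1), mOf F r (k+1) := by
    refine Finset.sum_congr rfl fun r hr => ?_
    rw [mem_range] at hr
    rw [mOf]
    congr 1
    ext c
    simp only [mem_filter, mem_range]
    constructor
    · rintro ⟨h1, _, h2⟩; exact ⟨h1, h2⟩
    · rintro ⟨h1, h2⟩
      refine ⟨h1, ?_, h2⟩
      rcases Nat.lt_or_ge r i with hri | hri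
      · exact Or.inl hri
      · have hri' : r = i := by omega
        subst hri'
        refine Or.inr ⟨rfl, ?_⟩
        by_contra hc
        push_neg at hc
        have := (P1 F r c (k+1)).2 ⟨(T_bounds F (by omega)).1, by omega⟩
        omega
  have hR : ∑ r ∈ range (i + 1),
      ((range (μ.rowLen 0)).filter (fun c => (r < i ∨ (r = i ∧ j0 ≤ c)) ∧ F.T r c = k + 1)).card
      = ∑ r ∈ range i, mOf F r k := by
    rw [Finset.sum_range_succ]
    have hlast : ((range (μ.rowLen 0)).filter
        (fun c => (i < i ∨ (i = i ∧ j0 ≤ c)) ∧ F.T i c = k + 1)).card = 0 := by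
      rw [Finset.card_eq_zero, Finset.filter_eq_empty_iff]
      rintro c _ ⟨h1 | ⟨-, h2⟩, h3⟩
      · omega
      · have := (P1 F i c (k+1)).1 ⟨by omega, by omega⟩
        omega
    rw [hlast, Nat.add_zero]
    refine Finset.sum_congr rfl fun r hr => ?_
    rw [mem_range] at hr
    rw [mOf]
    congr 1
    ext c
    simp only [mem_filter, mem_range]
    constructor
    · rintro ⟨h1, _, h2⟩; exact ⟨h1, h2⟩
    · rintro ⟨h1, h2⟩; exact ⟨h1, Or.inl hr, h2⟩
  rw [hL, hR] at hb
  exact hb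

/-- The count data of an LR filling satisfies the linear conditions. -/
lemma toCounts (F : LRFilling α β μ) : LRCounts α β μ (mOf F) where
  sub := F.sub
  big := mOf_big F
  shape := Sk_full F
  col := mOf_col F
  ballot := mOf_ballot F
  content := mOf_content F

end ToCounts
section Finiteness

variable {α β μ : YoungDiagram}

lemma mem_alpha_iff (F : LRFilling α β μ) (i j : ℕ) :
    (i, j) ∈ α ↔ ((i, j) ∈ μ ∧ F.T i j = 0) := by
  have hs := F.supp i j
  simp only [mem_iff_lt_rowLen] at hs ⊢
  have := sub_rowLen F i
  omega

lemma LRFilling_ext {F G : LRFilling α β μ} (h : F.T = G.T) : F = G := by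
  cases F
  cases G
  simp only at h
  subst h
  rfl

lemma colLen_le_card (F : LRFilling α β μ) : β.colLen 0 ≤ μ.cells.card := by
  have hch : ∀ v : Fin (β.colLen 0), ∃ p : ℕ × ℕ, p ∈ μ.cells ∧ F.T p.1 p.2 = v.1 + 1 := by
    intro v
    have hpos : 0 < β.rowLen v.1 := rowLen_pos_iff.2 v.2
    have hc := F.content v.1
    have hb2 : ∀ p : ℕ × ℕ, F.T p.1 p.2 = v.1 + 1 → p.1 < μ.colLen 0 ∧ p.2 < μ.rowLen 0 := by
      intro p hp
      have h0 : F.T p.1 p.2 ≠ 0 := by omega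
      exact ⟨(T_bounds F h0).2.2.1, (T_bounds F h0).2.2.2⟩
    rw [natCard_eq_filter_card (R := μ.colLen 0) (C := μ.rowLen 0)
        (fun p => F.T p.1 p.2 = v.1 + 1) hb2] at hc
    have hcard : 0 < ((range (μ.colLen 0) ×ˢ range (μ.rowLen 0)).filter
        (fun p => F.T p.1 p.2 = v.1 + 1)).card := by omega
    obtain ⟨p, hp⟩ := Finset.card_pos.1 hcard
    rw [mem_filter] at hp
    have hv : F.T p.1 p.2 = v.1 + 1 := hp.2
    have h0 : F.T p.1 p.2 ≠ 0 := by omega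
    refine ⟨p, ?_, hv⟩
    exact (YoungDiagram.mem_cells p).2 ((F.supp p.1 p.2).1 h0).1
  choose g hg1 hg2 using hch
  have hinj : Function.Injective (fun v : Fin (β.colLen 0) => (⟨g v, hg1 v⟩ : ↥μ.cells)) := by
    intro v w hvw
    have he : g v = g w := congrArg Subtype.val hvw
    have h1 := hg2 v
    have h2 := hg2 w
    rw [he] at h1
    exact Fin.ext (by omega)
  have := Fintype.card_le_of_injective _ hinj
  simpa using this

lemma T_lt (F : LRFilling α β μ) (i j : ℕ) : F.T i j < μ.cells.card + 1 := by
  rcases eq_or_ne (F.T i j) 0 with h | h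
  · omega
  · have h1 := T_le_colLen F h
    have h2 := colLen_le_card F
    omega

lemma T_restrict_ext {α₁ β₁ α₂ β₂ μ : YoungDiagram}
    (F : LRFilling α₁ β₁ μ) (G : LRFilling α₂ β₂ μ)
    (h : ∀ p : ↥μ.cells, F.T p.1.1 p.1.2 = G.T p.1.1 p.1.2) : F.T = G.T := by
  funext i j
  by_cases hm : (i, j) ∈ μ
  · exact h ⟨(i, j), (YoungDiagram.mem_cells _).2 hm⟩
  · have h1 : F.T i j = 0 := by
      by_contra hc
      exact hm ((F.supp i j).1 hc).1
    have h2 : G.T i j = 0 := by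
      by_contra hc
      exact hm ((G.supp i j).1 hc).1
    rw [h1, h2]

lemma beta_eq {α₁ β₁ α₂ β₂ μ : YoungDiagram}
    (F : LRFilling α₁ β₁ μ) (G : LRFilling α₂ β₂ μ) (hT : F.T = G.T) : β₁ = β₂ := by
  refine yd_ext_rowLen fun k => ?_
  rw [← F.content k, ← G.content k]
  have : {p : ℕ × ℕ // F.T p.1 p.2 = k + 1} = {p : ℕ × ℕ // G.T p.1 p.2 = k + 1} := by
    rw [hT]
  rw [this]

lemma alpha_eq {α₁ β₁ α₂ β₂ μ : YoungDiagram}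
    (F : LRFilling α₁ β₁ μ) (G : LRFilling α₂ β₂ μ) (hT : F.T = G.T) : α₁ = α₂ := by
  ext ⟨i, j⟩
  simp only [YoungDiagram.mem_cells]
  rw [mem_alpha_iff F, mem_alpha_iff G, hT]

lemma NLfinite (μ ν lam : YoungDiagram) :
    Finite (Σ α β γ : YoungDiagram,
      (LRFilling α β μ × LRFilling α γ ν × LRFilling β γ lam)) := by
  have hinj : Function.Injective
      (fun x : Σ α β γ : YoungDiagram,
          (LRFilling α β μ × LRFilling α γ ν × LRFilling β γ lam) =>
        ((fun p : ↥μ.cells =>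
            (⟨x.2.2.2.1.T p.1.1 p.1.2, T_lt x.2.2.2.1 p.1.1 p.1.2⟩ : Fin (μ.cells.card + 1))),
         (fun p : ↥ν.cells =>
            (⟨x.2.2.2.2.1.T p.1.1 p.1.2, T_lt x.2.2.2.2.1 p.1.1 p.1.2⟩ : Fin (ν.cells.card + 1))),
         (fun p : ↥lam.cells =>
            (⟨x.2.2.2.2.2.T p.1.1 p.1.2, T_lt x.2.2.2.2.2 p.1.1 p.1.2⟩ :
              Fin (lam.cells.card + 1))))) := by
    rintro ⟨α₁, β₁, γ₁, F1, F2, F3⟩ ⟨α₂, β₂, γ₂, G1, G2, G3⟩ h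
    simp only [Prod.mk.injEq] at h
    obtain ⟨e1, e2, e3⟩ := h
    have hT1 : F1.T = G1.T :=
      T_restrict_ext F1 G1 fun p => congrArg Fin.val (congrFun e1 p)
    have hT2 : F2.T = G2.T :=
      T_restrict_ext F2 G2 fun p => congrArg Fin.val (congrFun e2 p)
    have hT3 : F3.T = G3.T :=
      T_restrict_ext F3 G3 fun p => congrArg Fin.val (congrFun e3 p)
    obtain rfl : α₁ = α₂ := alpha_eq F1 G1 hT1
    obtain rfl : β₁ = β₂ := beta_eq F1 G1 hT1
    obtain rfl : γ₁ = γ₂ := beta_eq F2 G2 hT2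
    rw [LRFilling_ext hT1, LRFilling_ext hT2, LRFilling_ext hT3]
  exact Finite.of_injective _ hinj

end Finiteness

lemma NL_add {μ ν lam μ' ν' lam' σ τ ρ : YoungDiagram}
    (hσ : ∀ i, σ.rowLen i = μ.rowLen i + μ'.rowLen i)
    (hτ : ∀ i, τ.rowLen i = ν.rowLen i + ν'.rowLen i)
    (hρ : ∀ i, ρ.rowLen i = lam.rowLen i + lam'.rowLen i)
    (h1 : 0 < NL μ ν lam) (h2 : 0 < NL μ' ν' lam') : 0 < NL σ τ ρ := by
  have hne1 : Nonempty (Σ α β γ : YoungDiagram,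
      (LRFilling α β μ × LRFilling α γ ν × LRFilling β γ lam)) :=
    (Nat.card_pos_iff.mp h1).1
  have hne2 : Nonempty (Σ α β γ : YoungDiagram,
      (LRFilling α β μ' × LRFilling α γ ν' × LRFilling β γ lam')) :=
    (Nat.card_pos_iff.mp h2).1
  obtain ⟨⟨α, β, γ, F1, F2, F3⟩⟩ := hne1
  obtain ⟨⟨α', β', γ', G1, G2, G3⟩⟩ := hne2
  have c1 : LRCounts (addYD α α') (addYD β β') σ (fun i v => mOf F1 i v + mOf G1 i v) :=
    (toCounts F1).add (toCounts G1) (rowLen_addYD α α') (rowLen_addYD β β') hσ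
  have c2 : LRCounts (addYD α α') (addYD γ γ') τ (fun i v => mOf F2 i v + mOf G2 i v) :=
    (toCounts F2).add (toCounts G2) (rowLen_addYD α α') (rowLen_addYD γ γ') hτ
  have c3 : LRCounts (addYD β β') (addYD γ γ') ρ (fun i v => mOf F3 i v + mOf G3 i v) :=
    (toCounts F3).add (toCounts G3) (rowLen_addYD β β') (rowLen_addYD γ γ') hρ
  have hne : Nonempty (Σ α β γ : YoungDiagram,
      (LRFilling α β σ × LRFilling α γ τ × LRFilling β γ ρ)) :=
    ⟨⟨addYD α α', addYD β β', addYD γ γ', ofCounts c1, ofCounts c2, ofCounts c3⟩⟩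
  exact Nat.card_pos_iff.mpr ⟨hne, NLfinite σ τ ρ⟩

/-- Row-wise scaling of a Young diagram. -/
def smulYD : ℕ → YoungDiagram → YoungDiagram
  | 0, _ => ⊥
  | k + 1, μ => addYD μ (smulYD k μ)

lemma rowLen_bot (i : ℕ) : (⊥ : YoungDiagram).rowLen i = 0 :=
  rowLen_eq_of_forall fun j => by
    simp [YoungDiagram.notMem_bot]

lemma rowLen_smulYD (k : ℕ) (μ : YoungDiagram) (i : ℕ) :
    (smulYD k μ).rowLen i = k * μ.rowLen i := by
  induction k with
  | zero => simp [smulYD, rowLen_bot]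
  | succ k ih =>
    show (addYD μ (smulYD k μ)).rowLen i = (k + 1) * μ.rowLen i
    rw [rowLen_addYD, ih]
    ring


end NLaux

open NLaux in
/-- `NL_n = {(μ,ν,lam) ∈ Par_n³ : N_{μ,ν,lam} > 0}` is closed under
componentwise (row-wise) addition of triples, i.e. it is a semigroup; in particular
`N_{μ,ν,lam} > 0` implies `N_{kμ,kν,klam} > 0` for every `k ≥ 1`.  (`Par_n` = partitions
with at most `n` parts; the sum/scaling partitions are specified by their row lengths.) -/
theorem NL_semigroup :
    (∀ (n : ℕ) (μ ν lam μ' ν' lam' σ τ ρ : YoungDiagram),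
      μ.colLen 0 ≤ n → ν.colLen 0 ≤ n → lam.colLen 0 ≤ n →
      μ'.colLen 0 ≤ n → ν'.colLen 0 ≤ n → lam'.colLen 0 ≤ n →
      (∀ i, σ.rowLen i = μ.rowLen i + μ'.rowLen i) →
      (∀ i, τ.rowLen i = ν.rowLen i + ν'.rowLen i) →
      (∀ i, ρ.rowLen i = lam.rowLen i + lam'.rowLen i) →
      0 < NL μ ν lam → 0 < NL μ' ν' lam' → 0 < NL σ τ ρ) ∧
    (∀ (n k : ℕ), 0 < k → ∀ (μ ν lam σ τ ρ : YoungDiagram),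
      μ.colLen 0 ≤ n → ν.colLen 0 ≤ n → lam.colLen 0 ≤ n →
      (∀ i, σ.rowLen i = k * μ.rowLen i) →
      (∀ i, τ.rowLen i = k * ν.rowLen i) →
      (∀ i, ρ.rowLen i = k * lam.rowLen i) →
      0 < NL μ ν lam → 0 < NL σ τ ρ) := by
  constructor
  · intro n μ ν lam μ' ν' lam' σ τ ρ _ _ _ _ _ _ hσ hτ hρ h1 h2
    exact NL_add hσ hτ hρ h1 h2
  · intro n k hk μ ν lam σ τ ρ _ _ _ hσ hτ hρ h1
    have key : ∀ j : ℕ, 0 < NL (smulYD (j + 1) μ) (smulYD (j + 1) ν) (smulYD (j + 1) lam) := by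
      intro j
      induction j with
      | zero =>
        have e1 : smulYD 1 μ = μ := yd_ext_rowLen fun i => by rw [rowLen_smulYD]; ring
        have e2 : smulYD 1 ν = ν := yd_ext_rowLen fun i => by rw [rowLen_smulYD]; ring
        have e3 : smulYD 1 lam = lam := yd_ext_rowLen fun i => by rw [rowLen_smulYD]; ring
        rw [e1, e2, e3]
        exact h1
      | succ j ih =>
        refine NL_add (μ := μ) (ν := ν) (lam := lam)
          (μ' := smulYD (j + 1) μ) (ν' := smulYD (j + 1) ν) (lam' := smulYD (j + 1) lam)
          (fun i => ?_) (fun i => ?_) (fun i => ?_) h1 ih <;>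
        · rw [rowLen_smulYD, rowLen_smulYD]
          ring
    obtain ⟨j, rfl⟩ : ∃ j, k = j + 1 := ⟨k - 1, by omega⟩
    have e1 : σ = smulYD (j + 1) μ := yd_ext_rowLen fun i => by rw [hσ i, rowLen_smulYD]
    have e2 : τ = smulYD (j + 1) ν := yd_ext_rowLen fun i => by rw [hτ i, rowLen_smulYD]
    have e3 : ρ = smulYD (j + 1) lam := yd_ext_rowLen fun i => by rw [hρ i, rowLen_smulYD]
    rw [e1, e2, e3]
    exact key j
end

section
/- The function k ↦ N_{k(1,1), k(1,1), k(1,1)} equals ⌈(k+1)/2⌉ for all positive integers k; in particular it is not a polynomial in k. -/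
open YoungDiagram

/-- The two-row rectangle `(k, k)` = `k·(1,1)`. -/
def twoRowRect (k : ℕ) : YoungDiagram :=
  YoungDiagram.ofRowLens [k, k] (by simp [List.sortedGE_iff_pairwise])

/-! ### Auxiliary lemmas -/

lemma mem_twoRect {k i j : ℕ} : (i, j) ∈ twoRowRect k ↔ i < 2 ∧ j < k := by
  rw [twoRowRect, YoungDiagram.mem_ofRowLens]
  constructor
  · rintro ⟨h, hj⟩
    simp only [List.length_cons, List.length_nil] at h
    refine ⟨by omega, ?_⟩
    interval_cases i <;> simpa using hj
  · rintro ⟨hi, hj⟩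
    refine ⟨by simpa using hi, ?_⟩
    interval_cases i <;> simpa using hj

lemma rowLen_eq_of {μ : YoungDiagram} {i a : ℕ} (h : ∀ j, (i, j) ∈ μ ↔ j < a) :
    μ.rowLen i = a := by
  by_contra hne
  rcases Nat.lt_or_ge (μ.rowLen i) a with hlt | hge
  · have := (h (μ.rowLen i)).mpr hlt
    rw [YoungDiagram.mem_iff_lt_rowLen] at this; omega
  · have ha : a < μ.rowLen i := by omega
    have := (h a).mp (YoungDiagram.mem_iff_lt_rowLen.mpr ha)
    omega

lemma diagram_ext {μ ν : YoungDiagram} (h : ∀ i, μ.rowLen i = ν.rowLen i) : μ = ν := by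
  ext ⟨i, j⟩
  simp only [YoungDiagram.mem_cells]
  rw [YoungDiagram.mem_iff_lt_rowLen, YoungDiagram.mem_iff_lt_rowLen, h i]

lemma natCard_eq_finset (P : ℕ × ℕ → Prop) (S : Finset (ℕ × ℕ)) (h : ∀ p, P p ↔ p ∈ S) :
    Nat.card {p : ℕ × ℕ // P p} = S.card := by
  rw [Nat.card_congr (Equiv.subtypeEquivRight (fun p => (h p).trans (Iff.rfl)) :
    {p : ℕ × ℕ // P p} ≃ {p : ℕ × ℕ // p ∈ S}), Nat.card_eq_finsetCard]

def twoShape (a b : ℕ) (h : b ≤ a) : YoungDiagram :=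
  YoungDiagram.ofRowLens [a, b] (by simp [List.sortedGE_iff_pairwise, h])

lemma mem_twoShape {a b i j : ℕ} {h : b ≤ a} :
    (i, j) ∈ twoShape a b h ↔ (i = 0 ∧ j < a) ∨ (i = 1 ∧ j < b) := by
  rw [twoShape, YoungDiagram.mem_ofRowLens]
  constructor
  · rintro ⟨hl, hj⟩
    simp only [List.length_cons, List.length_nil] at hl
    interval_cases i
    · exact Or.inl ⟨rfl, by simpa using hj⟩
    · exact Or.inr ⟨rfl, by simpa using hj⟩
  · rintro (⟨rfl, hj⟩ | ⟨rfl, hj⟩) <;> exact ⟨by simp, by simpa using hj⟩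

lemma rowLen_twoShape0 {a b : ℕ} (h : b ≤ a) : (twoShape a b h).rowLen 0 = a := by
  apply rowLen_eq_of; intro j; rw [mem_twoShape]; omega

lemma rowLen_twoShape1 {a b : ℕ} (h : b ≤ a) : (twoShape a b h).rowLen 1 = b := by
  apply rowLen_eq_of; intro j; rw [mem_twoShape]; omega

lemma rowLen_twoShape_ge {a b i : ℕ} (h : b ≤ a) (hi : 2 ≤ i) :
    (twoShape a b h).rowLen i = 0 := by
  apply rowLen_eq_of; intro j; rw [mem_twoShape]; omega

def canonT (k a1 a2 : ℕ) : ℕ → ℕ → ℕ := fun i j =>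
  if i = 0 then (if a1 ≤ j ∧ j < k then 1 else 0)
  else if i = 1 then (if a1 ≤ j ∧ j < k then 2 else if a2 ≤ j ∧ j < a1 then 1 else 0)
  else 0

lemma canonT_eq_one {k a1 a2 : ℕ} (h2 : a2 ≤ a1) (hk : a1 ≤ k) {i j : ℕ} :
    canonT k a1 a2 i j = 1 ↔ (i = 0 ∧ a1 ≤ j ∧ j < k) ∨ (i = 1 ∧ a2 ≤ j ∧ j < a1) := by
  unfold canonT; split_ifs <;> first | omega | (rw [false_iff]; omega)

lemma canonT_eq_two {k a1 a2 : ℕ} {i j : ℕ} :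
    canonT k a1 a2 i j = 2 ↔ (i = 1 ∧ a1 ≤ j ∧ j < k) := by
  unfold canonT; split_ifs <;> first | omega | (rw [false_iff]; omega)

lemma canonT_ne_zero {k a1 a2 : ℕ} (h2 : a2 ≤ a1) (hk : a1 ≤ k) {i j : ℕ} :
    canonT k a1 a2 i j ≠ 0 ↔ (i = 0 ∧ a1 ≤ j ∧ j < k) ∨ (i = 1 ∧ a2 ≤ j ∧ j < k) := by
  unfold canonT; split_ifs <;> first | omega | (rw [false_iff]; omega)

lemma canonT_big {k a1 a2 v : ℕ} (hv : 3 ≤ v) {i j : ℕ} : canonT k a1 a2 i j ≠ v := by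
  unfold canonT; split_ifs <;> omega

namespace LRFilling

variable {k : ℕ} {α β : YoungDiagram} (F : LRFilling α β (twoRowRect k))

lemma finite_cond (P : ℕ × ℕ → Prop) {v : ℕ} (hv : v ≠ 0) :
    Finite {p : ℕ × ℕ // P p ∧ F.T p.1 p.2 = v} := by
  apply Finite.of_injective
    (β := {q : ℕ × ℕ // q ∈ (twoRowRect k).cells})
    (f := fun p => ⟨p.1, by
      have h := (F.supp p.1.1 p.1.2).mp (by rw [p.2.2]; exact hv)
      simpa [YoungDiagram.mem_cells] using h.1⟩)
  intro p q h
  exact Subtype.ext (by simpa [Subtype.ext_iff] using h)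

lemma card_pos_cond (P : ℕ × ℕ → Prop) {v : ℕ} (hv : v ≠ 0) (p0 : ℕ × ℕ)
    (h : P p0 ∧ F.T p0.1 p0.2 = v) :
    1 ≤ Nat.card {p : ℕ × ℕ // P p ∧ F.T p.1 p.2 = v} := by
  have h1 := F.finite_cond P hv
  have h2 : Nonempty {p : ℕ × ℕ // P p ∧ F.T p.1 p.2 = v} := ⟨⟨p0, h⟩⟩
  exact Nat.one_le_iff_ne_zero.mpr (Nat.card_ne_zero.mpr ⟨h2, h1⟩)

lemma card_zero_cond (P : ℕ × ℕ → Prop) (v : ℕ)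
    (h : ∀ p : ℕ × ℕ, ¬(P p ∧ F.T p.1 p.2 = v)) :
    Nat.card {p : ℕ × ℕ // P p ∧ F.T p.1 p.2 = v} = 0 := by
  have : IsEmpty {p : ℕ × ℕ // P p ∧ F.T p.1 p.2 = v} := ⟨fun x => h x.1 x.2⟩
  exact Nat.card_of_isEmpty

lemma card_ge_cond (P : ℕ × ℕ → Prop) {v : ℕ} (hv : v ≠ 0) (S : Finset (ℕ × ℕ))
    (h : ∀ p ∈ S, P p ∧ F.T p.1 p.2 = v) :
    S.card ≤ Nat.card {p : ℕ × ℕ // P p ∧ F.T p.1 p.2 = v} := by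
  have h1 := F.finite_cond P hv
  rw [← Nat.card_eq_finsetCard]
  exact Nat.card_le_card_of_injective
    (fun q : {x : ℕ × ℕ // x ∈ S} => (⟨q.1, h q.1 q.2⟩ : {p : ℕ × ℕ // P p ∧ F.T p.1 p.2 = v}))
    (fun a b hab => Subtype.ext (by have := congrArg Subtype.val hab; exact this))

end LRFilling
namespace LRFilling

variable {k : ℕ} {α β : YoungDiagram} (F : LRFilling α β (twoRowRect k))

lemma supp' (i j : ℕ) : F.T i j ≠ 0 ↔ (i < 2 ∧ j < k ∧ α.rowLen i ≤ j) := by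
  rw [F.supp, mem_twoRect, YoungDiagram.mem_iff_lt_rowLen]
  omega

lemma a_le (F : LRFilling α β (twoRowRect k)) : α.rowLen 1 ≤ α.rowLen 0 ∧ α.rowLen 0 ≤ k ∧ ∀ i, 2 ≤ i → α.rowLen i = 0 := by
  have hsub : ∀ c : ℕ × ℕ, c ∈ α → c ∈ twoRowRect k := fun c hc => YoungDiagram.cells_subset_iff.mpr F.sub hc

  refine ⟨α.rowLen_anti 0 1 (by omega), ?_, ?_⟩
  · by_contra h
    have : (0, k) ∈ α := YoungDiagram.mem_iff_lt_rowLen.mpr (by omega)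
    have := (mem_twoRect).mp (hsub _ this)
    omega
  · intro i hi
    by_contra h
    have : (i, 0) ∈ α := YoungDiagram.mem_iff_lt_rowLen.mpr (by omega)
    have := (mem_twoRect).mp (hsub _ this)
    omega

lemma row0_eq_one (j : ℕ) (hj : α.rowLen 0 ≤ j) (hjk : j < k) : F.T 0 j = 1 := by
  have hne : F.T 0 j ≠ 0 := (F.supp' 0 j).mpr ⟨by omega, hjk, hj⟩
  by_contra h1
  have hv2 : 2 ≤ F.T 0 j := by omega
  have hb := F.ballot 0 j (F.T 0 j - 2)
  rw [show F.T 0 j - 2 + 2 = F.T 0 j by omega, show F.T 0 j - 2 + 1 = F.T 0 j - 1 by omega] at hb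
  have hz : Nat.card {p : ℕ × ℕ //
      (p.1 < 0 ∨ (p.1 = 0 ∧ j ≤ p.2)) ∧ F.T p.1 p.2 = F.T 0 j - 1} = 0 := by
    apply F.card_zero_cond
    rintro ⟨i', j'⟩ ⟨hcond, hT⟩
    try simp only at hcond hT
    have hi' : i' = 0 ∧ j ≤ j' := by omega
    obtain ⟨rfl, hjj⟩ := hi'
    have hne' : F.T 0 j' ≠ 0 := by omega
    have := F.rows_weak 0 j j' hjj hne hne'
    omega
  have hp : 1 ≤ Nat.card {p : ℕ × ℕ //
      (p.1 < 0 ∨ (p.1 = 0 ∧ j ≤ p.2)) ∧ F.T p.1 p.2 = F.T 0 j} :=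
    F.card_pos_cond _ hne (0, j) ⟨Or.inr ⟨rfl, le_refl j⟩, rfl⟩
  rw [hz] at hb
  omega

lemma row1_le_two (j : ℕ) (hne : F.T 1 j ≠ 0) : F.T 1 j ≤ 2 := by
  by_contra h1
  have hv3 : 3 ≤ F.T 1 j := by omega
  have hb := F.ballot 1 j (F.T 1 j - 2)
  rw [show F.T 1 j - 2 + 2 = F.T 1 j by omega, show F.T 1 j - 2 + 1 = F.T 1 j - 1 by omega] at hb
  have hz : Nat.card {p : ℕ × ℕ //
      (p.1 < 1 ∨ (p.1 = 1 ∧ j ≤ p.2)) ∧ F.T p.1 p.2 = F.T 1 j - 1} = 0 := by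
    apply F.card_zero_cond
    rintro ⟨i', j'⟩ ⟨hcond, hT⟩
    try simp only at hcond hT
    have : i' = 0 ∨ (i' = 1 ∧ j ≤ j') := by omega
    rcases this with rfl | ⟨rfl, hjj⟩
    · have hne' : F.T 0 j' ≠ 0 := by omega
      have h0 := (F.supp' 0 j').mp hne'
      have := F.row0_eq_one j' h0.2.2 h0.2.1
      omega
    · have hne' : F.T 1 j' ≠ 0 := by omega
      have := F.rows_weak 1 j j' hjj hne hne'
      omega
  have hp : 1 ≤ Nat.card {p : ℕ × ℕ //
      (p.1 < 1 ∨ (p.1 = 1 ∧ j ≤ p.2)) ∧ F.T p.1 p.2 = F.T 1 j} :=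
    F.card_pos_cond _ hne (1, j) ⟨Or.inr ⟨rfl, le_refl j⟩, rfl⟩
  rw [hz] at hb
  omega

lemma row1_late (j : ℕ) (hj : α.rowLen 0 ≤ j) (hjk : j < k) : F.T 1 j = 2 := by
  have h0 : F.T 0 j = 1 := F.row0_eq_one j hj hjk
  have hne : F.T 1 j ≠ 0 := (F.supp' 1 j).mpr ⟨by omega, hjk, le_trans (F.a_le.1) hj⟩
  have := F.cols_strict 0 1 j (by omega) (by omega) hne
  have := F.row1_le_two j hne
  omega

lemma row1_early (j : ℕ) (hj2 : α.rowLen 1 ≤ j) (hj : j < α.rowLen 0) : F.T 1 j = 1 := by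
  have hjk : j < k := lt_of_lt_of_le hj F.a_le.2.1
  have hne : F.T 1 j ≠ 0 := (F.supp' 1 j).mpr ⟨by omega, hjk, hj2⟩
  have hle2 := F.row1_le_two j hne
  by_contra h1
  have h2 : F.T 1 j = 2 := by omega
  -- ballot at (1, j, 0) gives a contradiction
  have hb := F.ballot 1 j 0
  have hcard1 : Nat.card {p : ℕ × ℕ //
      (p.1 < 1 ∨ (p.1 = 1 ∧ j ≤ p.2)) ∧ F.T p.1 p.2 = 0 + 1} =
      ({0} ×ˢ Finset.Ico (α.rowLen 0) k : Finset (ℕ × ℕ)).card := by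
    apply natCard_eq_finset
    rintro ⟨i', j'⟩
    simp only [Finset.mem_product, Finset.mem_singleton, Finset.mem_Ico]
    constructor
    · rintro ⟨hcond, hT⟩
      try simp only at hcond hT
      have : i' = 0 ∨ (i' = 1 ∧ j ≤ j') := by omega
      rcases this with rfl | ⟨rfl, hjj⟩
      · have hne' : F.T 0 j' ≠ 0 := by omega
        have h0 := (F.supp' 0 j').mp hne'
        exact ⟨rfl, h0.2.2, h0.2.1⟩
      · exfalso
        have hne' : F.T 1 j' ≠ 0 := by omega
        have := F.rows_weak 1 j j' hjj hne hne'
        omega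
    · rintro ⟨rfl, hj1, hj2'⟩
      exact ⟨Or.inl (by omega), F.row0_eq_one j' hj1 hj2'⟩
  have hcard2 : (({1} ×ˢ Finset.Ico j k : Finset (ℕ × ℕ))).card ≤
      Nat.card {p : ℕ × ℕ //
      (p.1 < 1 ∨ (p.1 = 1 ∧ j ≤ p.2)) ∧ F.T p.1 p.2 = 0 + 2} := by
    apply F.card_ge_cond _ (by omega)
    rintro ⟨i', j'⟩ hp
    simp only [Finset.mem_product, Finset.mem_singleton, Finset.mem_Ico] at hp
    obtain ⟨rfl, hjj, hjk'⟩ := hp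
    have hne' : F.T 1 j' ≠ 0 := (F.supp' 1 j').mpr ⟨by omega, hjk', by omega⟩
    have hw := F.rows_weak 1 j j' hjj hne hne'
    have := F.row1_le_two j' hne'
    exact ⟨Or.inr ⟨rfl, hjj⟩, show F.T 1 j' = 0 + 2 by omega⟩
  rw [hcard1] at hb
  have hc1 : ({0} ×ˢ Finset.Ico (α.rowLen 0) k : Finset (ℕ × ℕ)).card = k - α.rowLen 0 := by
    simp [Finset.card_product]
  have hc2 : (({1} ×ˢ Finset.Ico j k : Finset (ℕ × ℕ))).card = k - j := by
    simp [Finset.card_product]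
  have hak := F.a_le.2.1
  omega

lemma T_canon (i j : ℕ) : F.T i j = canonT k (α.rowLen 0) (α.rowLen 1) i j := by
  obtain ⟨h21, hk, _⟩ := F.a_le
  have hzero : ∀ i' j', ¬(i' < 2 ∧ j' < k ∧ α.rowLen i' ≤ j') → F.T i' j' = 0 := by
    intro i' j' h
    by_contra hne
    exact h ((F.supp' i' j').mp hne)
  match i with
  | 0 =>
    by_cases hc : α.rowLen 0 ≤ j ∧ j < k
    · simpa [canonT, hc] using F.row0_eq_one j hc.1 hc.2
    · simpa [canonT, hc] using hzero 0 j (by omega)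
  | 1 =>
    by_cases hc : α.rowLen 0 ≤ j ∧ j < k
    · simpa [canonT, hc] using F.row1_late j hc.1 hc.2
    · by_cases hc2 : α.rowLen 1 ≤ j ∧ j < α.rowLen 0
      · simpa [canonT, hc, hc2] using F.row1_early j hc2.1 hc2.2
      · simpa [canonT, hc, hc2] using hzero 1 j (by omega)
  | (n + 2) =>
    simpa [canonT, show ¬(n + 2 = 0) by omega, show ¬(n + 2 = 1) by omega]
      using hzero (n + 2) j (by omega)

end LRFilling
lemma card_pair_union (A B : Finset ℕ) :
    ((({0} : Finset ℕ) ×ˢ A) ∪ (({1} : Finset ℕ) ×ˢ B)).card = A.card + B.card := by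
  rw [Finset.card_union_of_disjoint]
  · simp [Finset.card_product]
  · simp only [Finset.disjoint_left, Finset.mem_product, Finset.mem_singleton]
    rintro ⟨x, y⟩ ⟨h1, _⟩ ⟨h2, _⟩
    simp_all

namespace LRFilling

variable {k : ℕ} {α β : YoungDiagram} (F : LRFilling α β (twoRowRect k))

lemma beta_rows (F : LRFilling α β (twoRowRect k)) :
    β.rowLen 0 = k - α.rowLen 1 ∧ β.rowLen 1 = k - α.rowLen 0 ∧
      ∀ i, 2 ≤ i → β.rowLen i = 0 := by
  obtain ⟨h21, hk, _⟩ := F.a_le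
  have hT := F.T_canon
  refine ⟨?_, ?_, ?_⟩
  · rw [← F.content 0, natCard_eq_finset _
      ((({0} : Finset ℕ) ×ˢ Finset.Ico (α.rowLen 0) k) ∪
       (({1} : Finset ℕ) ×ˢ Finset.Ico (α.rowLen 1) (α.rowLen 0)))]
    · rw [card_pair_union]
      simp only [Nat.card_Ico]
      omega
    · rintro ⟨i, j⟩
      show F.T i j = 1 ↔ _
      rw [hT i j, canonT_eq_one h21 hk]
      simp only [Finset.mem_union, Finset.mem_product, Finset.mem_singleton,
        Finset.mem_Ico] <;> omega
  · rw [← F.content 1, natCard_eq_finset _ (({1} : Finset ℕ) ×ˢ Finset.Ico (α.rowLen 0) k)]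
    · simp only [Finset.card_product, Finset.card_singleton, Nat.card_Ico]
      omega
    · rintro ⟨i, j⟩
      show F.T i j = 2 ↔ _
      rw [hT i j, canonT_eq_two]
      simp only [Finset.mem_product, Finset.mem_singleton, Finset.mem_Ico] <;> omega
  · intro v hv
    rw [← F.content v]
    have : IsEmpty {p : ℕ × ℕ // F.T p.1 p.2 = v + 1} :=
      ⟨fun x => canonT_big (by omega) ((hT x.1.1 x.1.2) ▸ x.2)⟩
    exact Nat.card_of_isEmpty

lemma alpha_eq : α = twoShape (α.rowLen 0) (α.rowLen 1) F.a_le.1 := by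
  apply diagram_ext
  intro i
  match i with
  | 0 => rw [rowLen_twoShape0]
  | 1 => rw [rowLen_twoShape1]
  | (n + 2) => rw [rowLen_twoShape_ge _ (by omega), F.a_le.2.2 (n+2) (by omega)]

lemma beta_eq : β = twoShape (k - α.rowLen 1) (k - α.rowLen 0)
    (by have := F.a_le; omega) := by
  apply diagram_ext
  intro i
  match i with
  | 0 => rw [rowLen_twoShape0, F.beta_rows.1]
  | 1 => rw [rowLen_twoShape1, F.beta_rows.2.1]
  | (n + 2) => rw [rowLen_twoShape_ge _ (by omega), F.beta_rows.2.2 (n+2) (by omega)]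

end LRFilling

/-- The canonical LR filling of `(k,k)/(a, k-a)` with content `(a, k-a)`. -/
def canonF (k a : ℕ) (h1 : k ≤ 2 * a) (h2 : a ≤ k) :
    LRFilling (twoShape a (k - a) (by omega)) (twoShape a (k - a) (by omega))
      (twoRowRect k) where
  sub := by
    rw [← YoungDiagram.cells_subset_iff]
    intro c hc
    rw [YoungDiagram.mem_cells] at hc ⊢
    obtain ⟨i, j⟩ := c
    rw [mem_twoShape] at hc
    rw [mem_twoRect]
    omega
  T := canonT k a (k - a)
  supp := by
    intro i j
    rw [canonT_ne_zero (by omega) h2, mem_twoRect, mem_twoShape]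
    omega
  rows_weak := by
    intro i j1 j2 h hn1 hn2
    unfold canonT at *
    split_ifs at * <;> omega
  cols_strict := by
    intro i1 i2 j h hn1 hn2
    unfold canonT at *
    split_ifs at * <;> omega
  content := by
    intro v
    match v with
    | 0 =>
      rw [natCard_eq_finset _
        ((({0} : Finset ℕ) ×ˢ Finset.Ico a k) ∪
         (({1} : Finset ℕ) ×ˢ Finset.Ico (k - a) a))]
      · rw [card_pair_union, rowLen_twoShape0]
        simp only [Nat.card_Ico]
        omega
      · rintro ⟨i, j⟩
        show canonT k a (k - a) i j = 1 ↔ _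
        rw [canonT_eq_one (by omega) h2]
        simp only [Finset.mem_union, Finset.mem_product, Finset.mem_singleton,
          Finset.mem_Ico] <;> omega
    | 1 =>
      rw [natCard_eq_finset _ (({1} : Finset ℕ) ×ˢ Finset.Ico a k)]
      · rw [rowLen_twoShape1]
        simp only [Finset.card_product, Finset.card_singleton, Nat.card_Ico]
        omega
      · rintro ⟨i, j⟩
        show canonT k a (k - a) i j = 2 ↔ _
        rw [canonT_eq_two]
        simp only [Finset.mem_product, Finset.mem_singleton, Finset.mem_Ico] <;> omega
    | (v + 2) =>
      rw [rowLen_twoShape_ge _ (by omega)]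
      have : IsEmpty {p : ℕ × ℕ // canonT k a (k - a) p.1 p.2 = v + 2 + 1} :=
        ⟨fun x => canonT_big (by omega) x.2⟩
      exact Nat.card_of_isEmpty
  ballot := by
    intro i j v
    match v with
    | (v + 1) =>
      have : IsEmpty {p : ℕ × ℕ //
          (p.1 < i ∨ (p.1 = i ∧ j ≤ p.2)) ∧ canonT k a (k - a) p.1 p.2 = v + 1 + 2} :=
        ⟨fun x => canonT_big (by omega) x.2.2⟩
      rw [Nat.card_of_isEmpty (α := {p : ℕ × ℕ //
          (p.1 < i ∨ (p.1 = i ∧ j ≤ p.2)) ∧ canonT k a (k - a) p.1 p.2 = v + 1 + 2})]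
      exact Nat.zero_le _
    | 0 =>
      match i with
      | 0 =>
        have : IsEmpty {p : ℕ × ℕ //
            (p.1 < 0 ∨ (p.1 = 0 ∧ j ≤ p.2)) ∧ canonT k a (k - a) p.1 p.2 = 0 + 2} :=
          ⟨fun x => by
            obtain ⟨⟨i', j'⟩, hcond, hT⟩ := x
            have hT2 : canonT k a (k - a) i' j' = 2 := hT
            rw [canonT_eq_two] at hT2
            omega⟩
        rw [Nat.card_of_isEmpty (α := {p : ℕ × ℕ //
            (p.1 < 0 ∨ (p.1 = 0 ∧ j ≤ p.2)) ∧ canonT k a (k - a) p.1 p.2 = 0 + 2})]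
        exact Nat.zero_le _
      | 1 =>
        rw [natCard_eq_finset _ (({1} : Finset ℕ) ×ˢ Finset.Ico (max j a) k) (by
          rintro ⟨i', j'⟩
          show ((i' < 1 ∨ (i' = 1 ∧ j ≤ j')) ∧ canonT k a (k - a) i' j' = 0 + 2) ↔ _
          rw [show (0 + 2 : ℕ) = 2 from rfl, canonT_eq_two]
          simp only [Finset.mem_product, Finset.mem_singleton, Finset.mem_Ico, le_max_iff,
            max_le_iff, sup_le_iff, le_sup_iff]
          omega)]
        rw [natCard_eq_finset _
          ((({0} : Finset ℕ) ×ˢ Finset.Ico a k) ∪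
           (({1} : Finset ℕ) ×ˢ Finset.Ico (max j (k - a)) a)) (by
          rintro ⟨i', j'⟩
          show ((i' < 1 ∨ (i' = 1 ∧ j ≤ j')) ∧ canonT k a (k - a) i' j' = 0 + 1) ↔ _
          rw [show (0 + 1 : ℕ) = 1 from rfl, canonT_eq_one (by omega) h2]
          simp only [Finset.mem_union, Finset.mem_product, Finset.mem_singleton, Finset.mem_Ico,
            le_max_iff, max_le_iff, sup_le_iff, le_sup_iff]
          omega)]
        rw [card_pair_union]
        simp only [Finset.card_product, Finset.card_singleton, Nat.card_Ico]
        omega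
      | (n + 2) =>
        rw [natCard_eq_finset _ (({1} : Finset ℕ) ×ˢ Finset.Ico a k) (by
          rintro ⟨i', j'⟩
          show ((i' < n + 2 ∨ (i' = n + 2 ∧ j ≤ j')) ∧ canonT k a (k - a) i' j' = 0 + 2) ↔ _
          rw [show (0 + 2 : ℕ) = 2 from rfl, canonT_eq_two]
          simp only [Finset.mem_product, Finset.mem_singleton, Finset.mem_Ico]
          omega)]
        rw [natCard_eq_finset _
          ((({0} : Finset ℕ) ×ˢ Finset.Ico a k) ∪
           (({1} : Finset ℕ) ×ˢ Finset.Ico (k - a) a)) (by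
          rintro ⟨i', j'⟩
          show ((i' < n + 2 ∨ (i' = n + 2 ∧ j ≤ j')) ∧ canonT k a (k - a) i' j' = 0 + 1) ↔ _
          rw [show (0 + 1 : ℕ) = 1 from rfl, canonT_eq_one (by omega) h2]
          simp only [Finset.mem_union, Finset.mem_product, Finset.mem_singleton, Finset.mem_Ico]
          omega)]
        rw [card_pair_union]
        simp only [Finset.card_product, Finset.card_singleton, Nat.card_Ico]
        omega
lemma LRFilling.ext' {μ ν lam : YoungDiagram} {F G : LRFilling μ ν lam}
    (h : F.T = G.T) : F = G := by
  cases F; cases G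
  simp only at h
  subst h
  rfl

/-- The canonical triple associated to `a`. -/
def bijFun (k : ℕ) (a : {x : ℕ // x ∈ Finset.Icc ((k + 1) / 2) k}) :
    (Σ α β γ : YoungDiagram,
      (LRFilling α β (twoRowRect k) × LRFilling α γ (twoRowRect k) ×
       LRFilling β γ (twoRowRect k))) :=
  have h1 : k ≤ 2 * a.1 := by have := a.2; rw [Finset.mem_Icc] at this; omega
  have h2 : a.1 ≤ k := by have := a.2; rw [Finset.mem_Icc] at this; omega
  ⟨twoShape a.1 (k - a.1) (by omega), twoShape a.1 (k - a.1) (by omega),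
   twoShape a.1 (k - a.1) (by omega),
   canonF k a.1 h1 h2, canonF k a.1 h1 h2, canonF k a.1 h1 h2⟩

lemma bijFun_injective (k : ℕ) : Function.Injective (bijFun k) := by
  intro a b h
  have := congrArg (fun x => x.1.rowLen 0) h
  simp only [bijFun, rowLen_twoShape0] at this
  exact Subtype.ext this

lemma triple_eq_aux {k : ℕ} (a : ℕ) (h1 : k ≤ 2 * a) (h2 : a ≤ k)
    (α β γ : YoungDiagram)
    (F1 : LRFilling α β (twoRowRect k)) (F2 : LRFilling α γ (twoRowRect k))
    (F3 : LRFilling β γ (twoRowRect k))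
    (hα : α = twoShape a (k - a) (by omega)) (hβ : β = twoShape a (k - a) (by omega))
    (hγ : γ = twoShape a (k - a) (by omega)) :
    (⟨α, β, γ, (F1, F2, F3)⟩ : Σ α β γ : YoungDiagram,
      (LRFilling α β (twoRowRect k) × LRFilling α γ (twoRowRect k) ×
       LRFilling β γ (twoRowRect k))) =
    ⟨twoShape a (k - a) (by omega), twoShape a (k - a) (by omega),
     twoShape a (k - a) (by omega), (canonF k a h1 h2, canonF k a h1 h2, canonF k a h1 h2)⟩ := by
  subst hα; subst hβ; subst hγ
  have hT : ∀ (G : LRFilling (twoShape a (k - a) (by omega : k - a ≤ a))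
      (twoShape a (k - a) (by omega : k - a ≤ a)) (twoRowRect k)), G = canonF k a h1 h2 := by
    intro G
    apply LRFilling.ext'
    funext i j
    rw [G.T_canon i j, rowLen_twoShape0, rowLen_twoShape1]
    rfl
  rw [hT F1, hT F2, hT F3]

lemma bijFun_surjective (k : ℕ) : Function.Surjective (bijFun k) := by
  rintro ⟨α, β, γ, F1, F2, F3⟩
  obtain ⟨hA1, hA2, hA3⟩ := F1.a_le
  obtain ⟨hB1, hB2, hB3⟩ := F1.beta_rows
  obtain ⟨hC1, hC2, hC3⟩ := F2.beta_rows
  obtain ⟨hD1, hD2, hD3⟩ := F3.beta_rows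
  -- γ.rowLen 0 = k - α.rowLen 1 and also = k - β.rowLen 1 = α.rowLen 0
  have key : α.rowLen 0 + α.rowLen 1 = k := by
    rw [hB2] at hD1
    rw [hC1] at hD1
    omega
  have h1 : k ≤ 2 * α.rowLen 0 := by omega
  have h2 : α.rowLen 0 ≤ k := hA2
  refine ⟨⟨α.rowLen 0, by rw [Finset.mem_Icc]; omega⟩, ?_⟩
  have hα : α = twoShape (α.rowLen 0) (k - α.rowLen 0) (by omega) := by
    apply diagram_ext
    intro i
    match i with
    | 0 => rw [rowLen_twoShape0]
    | 1 => rw [rowLen_twoShape1]; omega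
    | (n + 2) => rw [rowLen_twoShape_ge _ (by omega), hA3 _ (by omega)]
  have hβ : β = twoShape (α.rowLen 0) (k - α.rowLen 0) (by omega) := by
    apply diagram_ext
    intro i
    match i with
    | 0 => rw [rowLen_twoShape0]; omega
    | 1 => rw [rowLen_twoShape1]; omega
    | (n + 2) => rw [rowLen_twoShape_ge _ (by omega), hB3 _ (by omega)]
  have hγ : γ = twoShape (α.rowLen 0) (k - α.rowLen 0) (by omega) := by
    apply diagram_ext
    intro i
    match i with
    | 0 => rw [rowLen_twoShape0]; omega
    | 1 => rw [rowLen_twoShape1]; omega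
    | (n + 2) => rw [rowLen_twoShape_ge _ (by omega), hC3 _ (by omega)]
  exact (triple_eq_aux (α.rowLen 0) h1 h2 α β γ F1 F2 F3 hα hβ hγ).symm

lemma NL_eq (k : ℕ) :
    NL (twoRowRect k) (twoRowRect k) (twoRowRect k) = (k + 2) / 2 := by
  rw [NL, ← Nat.card_eq_of_bijective (bijFun k) ⟨bijFun_injective k, bijFun_surjective k⟩,
    Nat.card_eq_finsetCard, Nat.card_Icc]
  omega

lemma ceil_half (k : ℕ) : ⌈((k : ℚ) + 1) / 2⌉₊ = (k + 2) / 2 := by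
  have hn : (k + 2) / 2 ≠ 0 := by omega
  rw [Nat.ceil_eq_iff hn]
  have h1 : k + 1 ≤ 2 * ((k + 2) / 2) := by omega
  have h2 : 2 * ((k + 2) / 2) ≤ k + 2 := by omega
  have h3 : 1 ≤ (k + 2) / 2 := by omega
  have hq1 : ((k : ℚ) + 1) ≤ 2 * (((k + 2) / 2 : ℕ) : ℚ) := by exact_mod_cast h1
  have hq2 : 2 * (((k + 2) / 2 : ℕ) : ℚ) ≤ (k : ℚ) + 2 := by exact_mod_cast h2
  constructor
  · rw [Nat.cast_sub h3]
    push_cast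
    linarith
  · linarith


/-- `N_{k(1,1),k(1,1),k(1,1)} = ⌈(k+1)/2⌉` for all `k ≥ 1`; in particular
this function of `k` is not a polynomial in `k`. -/
theorem NL_twoRowRect :
    (∀ k : ℕ, 1 ≤ k →
      NL (twoRowRect k) (twoRowRect k) (twoRowRect k) = ⌈((k : ℚ) + 1) / 2⌉₊) ∧
    ¬ ∃ p : Polynomial ℚ, ∀ k : ℕ, 1 ≤ k →
      (NL (twoRowRect k) (twoRowRect k) (twoRowRect k) : ℚ) = p.eval (k : ℚ) := by
  constructor
  · intro k _
    rw [NL_eq, ceil_half]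
  · rintro ⟨p, hp⟩
    have heven : ∀ m : ℕ, 1 ≤ m → p.eval ((2 * m : ℕ) : ℚ) = (m : ℚ) + 1 := by
      intro m hm
      rw [← hp (2 * m) (by omega), NL_eq]
      have : (2 * m + 2) / 2 = m + 1 := by omega
      rw [this]
      push_cast
      ring
    have hodd : ∀ m : ℕ, 1 ≤ m → p.eval ((2 * m + 1 : ℕ) : ℚ) = (m : ℚ) + 1 := by
      intro m hm
      rw [← hp (2 * m + 1) (by omega), NL_eq]
      have : (2 * m + 1 + 2) / 2 = m + 1 := by omega
      rw [this]
      push_cast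
      ring
    set q1 : Polynomial ℚ :=
      p.comp (Polynomial.C 2 * Polynomial.X) - (Polynomial.X + Polynomial.C 1) with hq1
    set q2 : Polynomial ℚ :=
      p.comp (Polynomial.C 2 * Polynomial.X + Polynomial.C 1) -
        (Polynomial.X + Polynomial.C 1) with hq2
    have hq1z : q1 = 0 := by
      apply Polynomial.eq_zero_of_infinite_isRoot
      apply Set.infinite_of_injective_forall_mem
        (f := fun n : ℕ => ((n + 1 : ℕ) : ℚ))
      · intro a b hab
        have : (a : ℚ) + 1 = (b : ℚ) + 1 := by push_cast at hab; exact_mod_cast hab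
        exact_mod_cast (by linarith : (a : ℚ) = b)
      · intro n
        simp only [Set.mem_setOf_eq, Polynomial.IsRoot, hq1, Polynomial.eval_sub,
          Polynomial.eval_comp, Polynomial.eval_mul, Polynomial.eval_C, Polynomial.eval_X,
          Polynomial.eval_add, Polynomial.eval_one]
        have := heven (n + 1) (by omega)
        push_cast at this ⊢
        linear_combination this
    have hq2z : q2 = 0 := by
      apply Polynomial.eq_zero_of_infinite_isRoot
      apply Set.infinite_of_injective_forall_mem
        (f := fun n : ℕ => ((n + 1 : ℕ) : ℚ))
      · intro a b hab
        have : (a : ℚ) + 1 = (b : ℚ) + 1 := by push_cast at hab; exact_mod_cast hab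
        exact_mod_cast (by linarith : (a : ℚ) = b)
      · intro n
        simp only [Set.mem_setOf_eq, Polynomial.IsRoot, hq2, Polynomial.eval_sub,
          Polynomial.eval_comp, Polynomial.eval_mul, Polynomial.eval_C, Polynomial.eval_X,
          Polynomial.eval_add, Polynomial.eval_one]
        have := hodd (n + 1) (by omega)
        push_cast at this ⊢
        linear_combination this
    have e1 : p.eval (3 : ℚ) = 5 / 2 := by
      have := congrArg (Polynomial.eval ((3 : ℚ) / 2)) hq1z
      simp only [hq1, Polynomial.eval_sub, Polynomial.eval_comp, Polynomial.eval_mul,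
        Polynomial.eval_C, Polynomial.eval_X, Polynomial.eval_add, Polynomial.eval_one,
        Polynomial.eval_zero] at this
      rw [show (2 : ℚ) * (3 / 2) = 3 by norm_num] at this
      linarith
    have e2 : p.eval (3 : ℚ) = 2 := by
      have := congrArg (Polynomial.eval (1 : ℚ)) hq2z
      simp only [hq2, Polynomial.eval_sub, Polynomial.eval_comp, Polynomial.eval_mul,
        Polynomial.eval_C, Polynomial.eval_X, Polynomial.eval_add, Polynomial.eval_one,
        Polynomial.eval_zero] at this
      rw [show (2 : ℚ) * 1 + 1 = 3 by norm_num] at this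
      linarith
    rw [e1] at e2
    norm_num at e2
end
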